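/- arXiv:math/9911091 — 6 statements merged into one kernel-verified Lean document; each statement's English description precedes it below -/
import Mathlib

section
/- Let G be a finite group with subgroups G₊ and G₋ such that every g ∈ G can be written uniquely as g = g₊g₋ with g₊ ∈ G₊ and g₋ ∈ G₋. Then the operations ⟨g⟩⟨h⟩ = ⟨gh₋⟩ if ḡ₊ = h₊ and 0 otherwise; Δ⟨g⟩ = Σ over pairs (h,k) with h₊k = g and k̄₋ = h₋ of ⟨h⟩⊗⟨k⟩; unit 1 = Σ_{g₊∈G₊}⟨g₊⟩; counit ε⟨g⟩ = 1 if g₊ = e and 0 otherwise; antipode S⟨g⟩ = ⟨g⁻¹⟩, make the complex vector space H(G;G₊,G₋) with basis {⟨g⟩ : g ∈ G} into a Hopf algebra over ℂ, and the basis {⟨g⟩ : g ∈ G} is a positive basis of this Hopf algebra. -/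
open scoped TensorProduct ComplexOrder

structure IsPositiveBasis {H : Type*} [Ring H] [HopfAlgebra ℂ H] {ι : Type*}
    (B : Module.Basis ι ℂ H) : Prop where
  one_nonneg : ∀ i, 0 ≤ B.repr 1 i
  counit_nonneg : ∀ i, 0 ≤ Coalgebra.counit (R := ℂ) (B i)
  mul_nonneg : ∀ i j k, 0 ≤ B.repr (B i * B j) k
  comul_nonneg : ∀ i j k,
    0 ≤ (B.tensorProduct B).repr (Coalgebra.comul (R := ℂ) (B i)) (j, k)
  antipode_nonneg : ∀ i j, 0 ≤ B.repr (HopfAlgebra.antipode (R := ℂ) (B i)) j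

def IsExactFactorization {G : Type*} [Group G] (Gp Gn : Subgroup G) : Prop :=
  ∀ g : G, ∃! p : Gp × Gn, (p.1 : G) * (p.2 : G) = g

section
variable {G : Type*} [Group G] {Gp Gn : Subgroup G}
noncomputable def fplus (hF : IsExactFactorization Gp Gn) (g : G) : G :=
  ((hF g).choose.1 : G)
noncomputable def fminus (hF : IsExactFactorization Gp Gn) (g : G) : G :=
  ((hF g).choose.2 : G)
noncomputable def fbarPlus (hF : IsExactFactorization Gp Gn) (g : G) : G :=
  (fplus hF g⁻¹)⁻¹
noncomputable def fbarMinus (hF : IsExactFactorization Gp Gn) (g : G) : G :=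
  (fminus hF g⁻¹)⁻¹
end

/-- A Hopf algebra over `ℂ`, bundled. -/
structure HopfAlgebraOver : Type 1 where
  carrier : Type
  [ring : Ring carrier]
  [hopf : HopfAlgebra ℂ carrier]

attribute [instance] HopfAlgebraOver.ring HopfAlgebraOver.hopf

/-- A finite group together with an exact factorization into two subgroups, bundled. -/
structure FactorizedGroup : Type 1 where
  G : Type
  [grp : Group G]
  [fin : Fintype G]
  Gp : Subgroup G
  Gn : Subgroup G
  fact : IsExactFactorization Gp Gn

attribute [instance] FactorizedGroup.grp FactorizedGroup.fin

namespace ExactFact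

variable {G : Type*} [Group G] {Gp Gn : Subgroup G} (hF : IsExactFactorization Gp Gn)

theorem fplus_mem (g : G) : fplus hF g ∈ Gp := ((hF g).choose.1).2
theorem fminus_mem (g : G) : fminus hF g ∈ Gn := ((hF g).choose.2).2
theorem fplus_mul_fminus (g : G) : fplus hF g * fminus hF g = g := (hF g).choose_spec.1

theorem fp_fm_eq {a b : G} (ha : a ∈ Gp) (hb : b ∈ Gn) :
    fplus hF (a * b) = a ∧ fminus hF (a * b) = b := by
  have h := (hF (a * b)).choose_spec.2 (⟨a, ha⟩, ⟨b, hb⟩) rfl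
  exact ⟨by rw [fplus, ← h], by rw [fminus, ← h]⟩

theorem fbp_fbm_eq {a b : G} (hb : b ∈ Gn) (ha : a ∈ Gp) :
    fbarPlus hF (b * a) = a ∧ fbarMinus hF (b * a) = b := by
  have h := fp_fm_eq hF (inv_mem ha) (inv_mem hb)
  rw [fbarPlus, fbarMinus, mul_inv_rev, h.1, h.2, inv_inv, inv_inv]
  exact ⟨rfl, rfl⟩

theorem fbarPlus_mem (g : G) : fbarPlus hF g ∈ Gp := inv_mem (fplus_mem hF g⁻¹)
theorem fbarMinus_mem (g : G) : fbarMinus hF g ∈ Gn := inv_mem (fminus_mem hF g⁻¹)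

theorem fbarMinus_mul_fbarPlus (g : G) : fbarMinus hF g * fbarPlus hF g = g := by
  rw [fbarMinus, fbarPlus, ← mul_inv_rev, fplus_mul_fminus, inv_inv]

theorem fplus_inv (g : G) : fplus hF g⁻¹ = (fbarPlus hF g)⁻¹ := by rw [fbarPlus, inv_inv]
theorem fminus_inv (g : G) : fminus hF g⁻¹ = (fbarMinus hF g)⁻¹ := by rw [fbarMinus, inv_inv]

theorem fplus_of_memP {a : G} (ha : a ∈ Gp) : fplus hF a = a := by
  simpa using (fp_fm_eq hF ha Gn.one_mem).1
theorem fminus_of_memP {a : G} (ha : a ∈ Gp) : fminus hF a = 1 := by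
  simpa using (fp_fm_eq hF ha Gn.one_mem).2
theorem fplus_of_memN {n : G} (hn : n ∈ Gn) : fplus hF n = 1 := by
  simpa using (fp_fm_eq hF Gp.one_mem hn).1
theorem fminus_of_memN {n : G} (hn : n ∈ Gn) : fminus hF n = n := by
  simpa using (fp_fm_eq hF Gp.one_mem hn).2
theorem fbarPlus_of_memP {a : G} (ha : a ∈ Gp) : fbarPlus hF a = a := by
  simpa using (fbp_fbm_eq hF Gn.one_mem ha).1
theorem fbarMinus_of_memP {a : G} (ha : a ∈ Gp) : fbarMinus hF a = 1 := by
  simpa using (fbp_fbm_eq hF Gn.one_mem ha).2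
theorem fbarPlus_of_memN {n : G} (hn : n ∈ Gn) : fbarPlus hF n = 1 := by
  simpa using (fbp_fbm_eq hF hn Gp.one_mem).1
theorem fbarMinus_of_memN {n : G} (hn : n ∈ Gn) : fbarMinus hF n = n := by
  simpa using (fbp_fbm_eq hF hn Gp.one_mem).2

include hF in
theorem inter_eq_one {x : G} (hp : x ∈ Gp) (hn : x ∈ Gn) : x = 1 := by
  have h1 := fplus_of_memP hF hp
  have h2 := fplus_of_memN hF hn
  rw [h2] at h1; exact h1.symm

theorem fplus_mul_memP {a : G} (ha : a ∈ Gp) (g : G) :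
    fplus hF (a * g) = a * fplus hF g ∧ fminus hF (a * g) = fminus hF g := by
  have := fp_fm_eq hF (Gp.mul_mem ha (fplus_mem hF g)) (fminus_mem hF g)
  rw [mul_assoc, fplus_mul_fminus] at this; exact this

theorem fminus_mul_memN {n : G} (hn : n ∈ Gn) (g : G) :
    fplus hF (g * n) = fplus hF g ∧ fminus hF (g * n) = fminus hF g * n := by
  have := fp_fm_eq hF (fplus_mem hF g) (Gn.mul_mem (fminus_mem hF g) hn)
  rw [← mul_assoc, fplus_mul_fminus] at this; exact this

theorem fbar_mul_memP {a : G} (ha : a ∈ Gp) (g : G) :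
    fbarPlus hF (g * a) = fbarPlus hF g * a ∧ fbarMinus hF (g * a) = fbarMinus hF g := by
  have := fbp_fbm_eq hF (fbarMinus_mem hF g) (Gp.mul_mem (fbarPlus_mem hF g) ha)
  rw [← mul_assoc, fbarMinus_mul_fbarPlus] at this; exact this

theorem fbar_mul_memN {n : G} (hn : n ∈ Gn) (g : G) :
    fbarPlus hF (n * g) = fbarPlus hF g ∧ fbarMinus hF (n * g) = n * fbarMinus hF g := by
  have := fbp_fbm_eq hF (Gn.mul_mem hn (fbarMinus_mem hF g)) (fbarPlus_mem hF g)
  rw [mul_assoc, fbarMinus_mul_fbarPlus] at this; exact this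

theorem fplus_eq_one_iff {g : G} : fplus hF g = 1 ↔ g ∈ Gn := by
  constructor
  · intro h
    have := fplus_mul_fminus hF g
    rw [h, one_mul] at this
    rw [← this]; exact fminus_mem hF g
  · exact fplus_of_memN hF

theorem fbarPlus_eq_one_iff {g : G} : fbarPlus hF g = 1 ↔ g ∈ Gn := by
  constructor
  · intro h
    have := fbarMinus_mul_fbarPlus hF g
    rw [h, mul_one] at this
    rw [← this]; exact fbarMinus_mem hF g
  · exact fbarPlus_of_memN hF

theorem bm_eq (g : G) : fbarMinus hF g = g * (fbarPlus hF g)⁻¹ := by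
  exact eq_mul_inv_iff_mul_eq.mpr (fbarMinus_mul_fbarPlus hF g)

/-- The key multiplicativity lemma. -/
theorem key1 {g k : G} (h : fbarPlus hF g = fplus hF k) :
    fbarPlus hF (g * fminus hF k) = fbarPlus hF k ∧
    fbarMinus hF (g * fminus hF k) = fbarMinus hF g * fbarMinus hF k := by
  have hg : g * fminus hF k = (fbarMinus hF g * fbarMinus hF k) * fbarPlus hF k := by
    calc g * fminus hF k = fbarMinus hF g * (fbarPlus hF g * fminus hF k) := by
          rw [← mul_assoc, fbarMinus_mul_fbarPlus]
    _ = fbarMinus hF g * k := by rw [h, fplus_mul_fminus]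
    _ = fbarMinus hF g * (fbarMinus hF k * fbarPlus hF k) := by
          rw [fbarMinus_mul_fbarPlus]
    _ = _ := by rw [mul_assoc]
  rw [hg]
  exact fbp_fbm_eq hF (Gn.mul_mem (fbarMinus_mem hF g) (fbarMinus_mem hF k)) (fbarPlus_mem hF k)

end ExactFact


namespace HConstr

open ExactFact
open scoped Classical

variable (F : FactorizedGroup)

def HC : Type := F.G → ℂ

noncomputable instance : AddCommGroup (HC F) := inferInstanceAs (AddCommGroup (F.G → ℂ))
noncomputable instance : Module ℂ (HC F) := inferInstanceAs (Module ℂ (F.G → ℂ))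

noncomputable def bas : Module.Basis F.G ℂ (HC F) := Pi.basisFun ℂ F.G

noncomputable def mulL : HC F →ₗ[ℂ] HC F →ₗ[ℂ] HC F :=
  (bas F).constr ℂ fun u => (bas F).constr ℂ fun v =>
    if fbarPlus F.fact u = fplus F.fact v then bas F (u * fminus F.fact v) else 0

theorem mulL_bas (u v : F.G) :
    mulL F (bas F u) (bas F v) =
      if fbarPlus F.fact u = fplus F.fact v then bas F (u * fminus F.fact v) else 0 := by
  rw [mulL, Module.Basis.constr_basis, Module.Basis.constr_basis]

noncomputable def oneH : HC F := ∑ a : F.Gp, bas F (a : F.G)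

theorem mulL_oneH_left (g : F.G) : mulL F (oneH F) (bas F g) = bas F g := by
  rw [oneH, map_sum, LinearMap.sum_apply]
  rw [Finset.sum_congr rfl (fun a _ => by
    rw [mulL_bas, fbarPlus_of_memP F.fact a.2])]
  have key : ∀ a : F.Gp, (if (a : F.G) = fplus F.fact g then bas F ((a : F.G) * fminus F.fact g) else 0)
      = if a = (⟨fplus F.fact g, fplus_mem F.fact g⟩ : F.Gp) then bas F ((a : F.G) * fminus F.fact g) else 0 := by
    intro a
    congr 1
    simp [Subtype.ext_iff]
  rw [Finset.sum_congr rfl (fun a _ => key a), Finset.sum_ite_eq']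
  simp [fplus_mul_fminus]

theorem mulL_oneH_right (g : F.G) : mulL F (bas F g) (oneH F) = bas F g := by
  rw [oneH, map_sum]
  rw [Finset.sum_congr rfl (fun a _ => by
    rw [mulL_bas, fplus_of_memP F.fact a.2, fminus_of_memP F.fact a.2])]
  have key : ∀ a : F.Gp, (if fbarPlus F.fact g = (a : F.G) then bas F (g * 1) else 0)
      = if a = (⟨fbarPlus F.fact g, fbarPlus_mem F.fact g⟩ : F.Gp) then bas F (g * 1) else 0 := by
    intro a
    congr 1
    simp [Subtype.ext_iff, eq_comm]
  rw [Finset.sum_congr rfl (fun a _ => key a), Finset.sum_ite_eq']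
  simp

theorem mulL_assoc_bas (u v w : F.G) :
    mulL F (mulL F (bas F u) (bas F v)) (bas F w) =
      mulL F (bas F u) (mulL F (bas F v) (bas F w)) := by
  rw [mulL_bas F v w, mulL_bas F u v]
  by_cases h1 : fbarPlus F.fact u = fplus F.fact v
  · rw [if_pos h1]
    by_cases h2 : fbarPlus F.fact v = fplus F.fact w
    · rw [if_pos h2, mulL_bas, mulL_bas]
      have e1 := (key1 F.fact h1).1
      have e2 := (fminus_mul_memN F.fact (fminus_mem F.fact w) v).1
      have e3 := (fminus_mul_memN F.fact (fminus_mem F.fact w) v).2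
      rw [if_pos (e1.trans h2), if_pos (h1.trans e2.symm), e3, mul_assoc]
    · rw [if_neg h2, map_zero, mulL_bas]
      rw [if_neg (fun hc => h2 (((key1 F.fact h1).1).symm.trans hc))]
  · rw [if_neg h1, map_zero, LinearMap.zero_apply]
    by_cases h2 : fbarPlus F.fact v = fplus F.fact w
    · rw [if_pos h2, mulL_bas]
      have e2 := (fminus_mul_memN F.fact (fminus_mem F.fact w) v).1
      rw [if_neg (fun hc => h1 (hc.trans e2))]
    · rw [if_neg h2, map_zero]

theorem mulL_assoc (x y z : HC F) :
    mulL F (mulL F x y) z = mulL F x (mulL F y z) := by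
  have key : (mulL F).compr₂ (mulL F) =
      ((LinearMap.llcomp ℂ (HC F) (HC F) (HC F)).comp (mulL F)).compl₂ (mulL F) := by
    apply LinearMap.ext_basis (bas F) (bas F)
    intro u v
    apply (bas F).ext
    intro w
    simpa using mulL_assoc_bas F u v w
  have := DFunLike.congr_fun (DFunLike.congr_fun (DFunLike.congr_fun key x) y) z
  simpa using this

noncomputable instance : Ring (HC F) :=
  { (inferInstance : AddCommGroup (HC F)) with
    mul := fun x y => mulL F x y
    one := oneH F
    left_distrib := fun a b c => map_add (mulL F a) b c
    right_distrib := fun a b c => by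
      show mulL F (a + b) c = mulL F a c + mulL F b c
      rw [map_add]; rfl
    zero_mul := fun a => by show mulL F 0 a = 0; rw [map_zero]; rfl
    mul_zero := fun a => map_zero (mulL F a)
    mul_assoc := mulL_assoc F
    one_mul := fun x => by
      show mulL F (oneH F) x = x
      have : mulL F (oneH F) = LinearMap.id :=
        (bas F).ext fun g => by simpa using mulL_oneH_left F g
      rw [this]; rfl
    mul_one := fun x => by
      show mulL F x (oneH F) = x
      have : (mulL F).flip (oneH F) = LinearMap.id :=
        (bas F).ext fun g => by simpa using mulL_oneH_right F g
      exact (DFunLike.congr_fun this x : _) }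

theorem mul_def (x y : HC F) : x * y = mulL F x y := rfl
theorem one_def : (1 : HC F) = oneH F := rfl

noncomputable instance : Algebra ℂ (HC F) :=
  Algebra.ofModule
    (fun r x y => by
      show mulL F (r • x) y = r • mulL F x y
      rw [map_smul]; rfl)
    (fun r x y => map_smul (mulL F x) r y)

end HConstr


namespace HConstr

open ExactFact TensorProduct
open scoped Classical

variable (F : FactorizedGroup)

noncomputable def comulL : HC F →ₗ[ℂ] HC F ⊗[ℂ] HC F :=
  (bas F).constr ℂ fun g =>
    ∑ a : F.Gp, bas F ((a : F.G) * fbarMinus F.fact ((a : F.G)⁻¹ * g)) ⊗ₜ[ℂ] bas F ((a : F.G)⁻¹ * g)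

theorem comulL_bas (g : F.G) :
    comulL F (bas F g) =
      ∑ a : F.Gp, bas F ((a : F.G) * fbarMinus F.fact ((a : F.G)⁻¹ * g)) ⊗ₜ[ℂ]
        bas F ((a : F.G)⁻¹ * g) := by
  rw [comulL, Module.Basis.constr_basis]

noncomputable def counitL : HC F →ₗ[ℂ] ℂ :=
  (bas F).constr ℂ fun g => if fplus F.fact g = 1 then 1 else 0

theorem counitL_bas (g : F.G) :
    counitL F (bas F g) = if fplus F.fact g = 1 then 1 else 0 := by
  rw [counitL, Module.Basis.constr_basis]

/-- key group identity: `a * bm (a⁻¹ g) = g * (bp (a⁻¹ g))⁻¹`. -/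
theorem abm {G : Type*} [Group G] {Gp Gn : Subgroup G} (hF : IsExactFactorization Gp Gn)
    (a g : G) : a * fbarMinus hF (a⁻¹ * g) = g * (fbarPlus hF (a⁻¹ * g))⁻¹ := by
  rw [bm_eq hF (a⁻¹ * g), ← mul_assoc, mul_inv_cancel_left]

theorem fplus_abm (a : F.Gp) (g : F.G) :
    fplus F.fact ((a : F.G) * fbarMinus F.fact ((a : F.G)⁻¹ * g)) = (a : F.G) := by
  exact (fp_fm_eq F.fact a.2 (fbarMinus_mem F.fact _)).1

theorem fminus_abm (a : F.Gp) (g : F.G) :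
    fminus F.fact ((a : F.G) * fbarMinus F.fact ((a : F.G)⁻¹ * g)) =
      fbarMinus F.fact ((a : F.G)⁻¹ * g) := by
  exact (fp_fm_eq F.fact a.2 (fbarMinus_mem F.fact _)).2

theorem fbarPlus_abm (a : F.Gp) (g : F.G) :
    fbarPlus F.fact ((a : F.G) * fbarMinus F.fact ((a : F.G)⁻¹ * g)) =
      fbarPlus F.fact g * (fbarPlus F.fact ((a : F.G)⁻¹ * g))⁻¹ := by
  rw [abm F.fact]
  exact (fbar_mul_memP F.fact (inv_mem (fbarPlus_mem F.fact _)) g).1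

theorem fbarMinus_abm (a : F.Gp) (g : F.G) :
    fbarMinus F.fact ((a : F.G) * fbarMinus F.fact ((a : F.G)⁻¹ * g)) =
      fbarMinus F.fact g := by
  rw [abm F.fact]
  exact (fbar_mul_memP F.fact (inv_mem (fbarPlus_mem F.fact _)) g).2

noncomputable instance : Coalgebra ℂ (HC F) where
  comul := comulL F
  counit := counitL F
  coassoc := by
    apply (bas F).ext
    intro g
    simp only [LinearMap.comp_apply, comulL_bas, map_sum, LinearMap.rTensor_tmul,
      LinearMap.lTensor_tmul, comulL_bas, sum_tmul, tmul_sum, assoc_tmul]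
    rw [Finset.sum_comm]
    refine Finset.sum_congr rfl fun b _ => ?_
    refine Fintype.sum_equiv (Equiv.mulLeft b⁻¹) _ _ ?_
    intro a
    simp only [Equiv.coe_mulLeft]
    have h3 : ((b⁻¹ * a : F.Gp) : F.G)⁻¹ * ((b : F.G)⁻¹ * g) = (a : F.G)⁻¹ * g := by
      push_cast; group
    have h2 : ((b⁻¹ * a : F.Gp) : F.G) * fbarMinus F.fact (((b⁻¹ * a : F.Gp) : F.G)⁻¹ * ((b : F.G)⁻¹ * g))
        = (b : F.G)⁻¹ * ((a : F.G) * fbarMinus F.fact ((a : F.G)⁻¹ * g)) := by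
      rw [h3]; push_cast; group
    have h1 : (b : F.G) * fbarMinus F.fact ((b : F.G)⁻¹ * ((a : F.G) * fbarMinus F.fact ((a : F.G)⁻¹ * g)))
        = (b : F.G) * fbarMinus F.fact ((b : F.G)⁻¹ * g) := by
      congr 1
      rw [abm F.fact (a : F.G) g, ← mul_assoc]
      exact (fbar_mul_memP F.fact (inv_mem (fbarPlus_mem F.fact _)) _).2
    rw [h1, h2, h3]; exact assoc_tmul _ _ _
  rTensor_counit_comp_comul := by
    apply (bas F).ext
    intro g
    simp only [LinearMap.comp_apply, comulL_bas, map_sum, LinearMap.rTensor_tmul,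
      counitL_bas, mk_apply]
    refine (Finset.sum_eq_single (1 : F.Gp) (fun b _ hb => ?_) (by simp)).trans ?_
    · rw [fplus_abm, if_neg (fun hc => hb (OneMemClass.coe_eq_one.mp hc)), zero_tmul]
    · rw [fplus_abm]
      simp
  lTensor_counit_comp_comul := by
    apply (bas F).ext
    intro g
    simp only [LinearMap.comp_apply, comulL_bas, map_sum, LinearMap.lTensor_tmul,
      counitL_bas, LinearMap.flip_apply, mk_apply]
    have hcond : ∀ a : F.Gp, (fplus F.fact ((a : F.G)⁻¹ * g) = 1) ↔
        a = (⟨fplus F.fact g, fplus_mem F.fact g⟩ : F.Gp) := by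
      intro a
      rw [(fplus_mul_memP F.fact (inv_mem a.2) g).1, inv_mul_eq_one, Subtype.ext_iff]
    refine (Finset.sum_eq_single (⟨fplus F.fact g, fplus_mem F.fact g⟩ : F.Gp)
      (fun b _ hb => ?_) (by simp)).trans ?_
    · rw [if_neg (fun hc => hb ((hcond b).mp hc)), tmul_zero]
    · rw [if_pos ((hcond _).mpr rfl)]
      have hg : (fplus F.fact g)⁻¹ * g = fminus F.fact g :=
        inv_mul_eq_iff_eq_mul.mpr (fplus_mul_fminus F.fact g).symm
      rw [hg, fbarMinus_of_memN F.fact (fminus_mem F.fact g), fplus_mul_fminus]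

end HConstr


namespace HConstr

open ExactFact TensorProduct
open scoped Classical

variable (F : FactorizedGroup)

theorem counit_one' : counitL F (1 : HC F) = 1 := by
  rw [one_def, oneH, map_sum]
  rw [Finset.sum_congr rfl (fun a _ => by rw [counitL_bas, fplus_of_memP F.fact a.2])]
  have key : ∀ a : F.Gp, (if (a : F.G) = 1 then (1:ℂ) else 0)
      = if a = (1 : F.Gp) then (1:ℂ) else 0 := by
    intro a; congr 1; simp [OneMemClass.coe_eq_one]
  rw [Finset.sum_congr rfl (fun a _ => key a), Finset.sum_ite_eq']
  simp

theorem counit_mul_bas (u v : F.G) :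
    counitL F (mulL F (bas F u) (bas F v)) = counitL F (bas F u) * counitL F (bas F v) := by
  rw [mulL_bas, counitL_bas, counitL_bas]
  by_cases h1 : fbarPlus F.fact u = fplus F.fact v
  · rw [if_pos h1, counitL_bas, (fminus_mul_memN F.fact (fminus_mem F.fact v) u).1]
    by_cases hu : fplus F.fact u = 1
    · have hbu : fbarPlus F.fact u = 1 := fbarPlus_of_memN F.fact ((fplus_eq_one_iff F.fact).mp hu)
      have hv : fplus F.fact v = 1 := (hbu.symm.trans h1).symm
      simp [hu, hv]
    · simp [hu]
  · rw [if_neg h1, map_zero]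
    by_cases hu : fplus F.fact u = 1
    · have hbu : fbarPlus F.fact u = 1 := fbarPlus_of_memN F.fact ((fplus_eq_one_iff F.fact).mp hu)
      have hv : fplus F.fact v ≠ 1 := fun hv => h1 (hbu.trans hv.symm)
      simp [hv]
    · simp [hu]

theorem counit_mul' (x y : HC F) :
    counitL F (mulL F x y) = counitL F x * counitL F y := by
  have key : (mulL F).compr₂ (counitL F) =
      (LinearMap.mul ℂ ℂ).compl₁₂ (counitL F) (counitL F) :=
    LinearMap.ext_basis (bas F) (bas F) (fun u v => by simpa using counit_mul_bas F u v)
  simpa using DFunLike.congr_fun (DFunLike.congr_fun key x) y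

theorem comul_one' : comulL F (1 : HC F) = 1 := by
  rw [one_def, oneH, map_sum, Algebra.TensorProduct.one_def, one_def, oneH, sum_tmul]
  simp only [comulL_bas, tmul_sum]
  rw [Finset.sum_comm]
  refine Finset.sum_congr rfl fun b _ => ?_
  refine Fintype.sum_equiv (Equiv.mulLeft b⁻¹) _ _ fun a => ?_
  rw [fbarMinus_of_memP F.fact (mul_mem (inv_mem b.2) a.2), mul_one]
  simp

noncomputable def b0 (u : F.G) (a : F.Gp) : F.Gp :=
  ⟨fbarPlus F.fact u * (fbarPlus F.fact ((a : F.G)⁻¹ * u))⁻¹,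
    mul_mem (fbarPlus_mem F.fact u) (inv_mem (fbarPlus_mem F.fact _))⟩

theorem b0_coe (u : F.G) (a : F.Gp) :
    ((b0 F u a : F.Gp) : F.G) = fbarPlus F.fact u * (fbarPlus F.fact ((a : F.G)⁻¹ * u))⁻¹ := rfl

theorem comul_mul_bas (u v : F.G) :
    comulL F (mulL F (bas F u) (bas F v)) = comulL F (bas F u) * comulL F (bas F v) := by
  rw [mulL_bas, comulL_bas, comulL_bas, Finset.sum_mul_sum]
  rw [Finset.sum_congr rfl (fun a _ => Finset.sum_congr rfl (fun b _ =>
    Algebra.TensorProduct.tmul_mul_tmul _ _ _ _))]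
  by_cases hc : fbarPlus F.fact u = fplus F.fact v
  · rw [if_pos hc, comulL_bas]
    refine Finset.sum_congr rfl fun a _ => ?_
    have hfb0 : fplus F.fact (((b0 F u a : F.Gp) : F.G)⁻¹ * v) =
        fbarPlus F.fact ((a : F.G)⁻¹ * u) := by
      rw [(fplus_mul_memP F.fact (inv_mem (b0 F u a).2) v).1, b0_coe, ← hc]
      group
    have hmb0 : fminus F.fact (((b0 F u a : F.Gp) : F.G)⁻¹ * v) = fminus F.fact v :=
      (fplus_mul_memP F.fact (inv_mem (b0 F u a).2) v).2
    refine ((Finset.sum_eq_single (b0 F u a) (fun b _ hb => ?_) (by simp)).trans ?_).symm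
    · rw [mul_def, mulL_bas, fbarPlus_abm, fplus_abm,
        if_neg (fun hcond => hb (Subtype.ext (hcond.symm.trans (b0_coe F u a).symm))), zero_tmul]
    · rw [mul_def, mulL_bas, fbarPlus_abm, fplus_abm, if_pos (b0_coe F u a).symm,
        mul_def, mulL_bas, if_pos hfb0.symm, fminus_abm]
      have e2 : (a : F.G)⁻¹ * (u * fminus F.fact v) = ((a : F.G)⁻¹ * u) * fminus F.fact v :=
        (mul_assoc _ _ _).symm
      have e1 : fbarMinus F.fact (((a : F.G)⁻¹ * u) * fminus F.fact v) =
          fbarMinus F.fact ((a : F.G)⁻¹ * u) *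
            fbarMinus F.fact (((b0 F u a : F.Gp) : F.G)⁻¹ * v) := by
        have h := (key1 F.fact hfb0.symm).2
        rw [hmb0] at h
        exact h
      rw [e2, hmb0, e1, ← mul_assoc]
  · rw [if_neg hc, map_zero]
    symm
    refine Finset.sum_eq_zero fun a _ => Finset.sum_eq_zero fun b _ => ?_
    by_cases hc1 : fbarPlus F.fact ((a : F.G) * fbarMinus F.fact ((a : F.G)⁻¹ * u)) =
        fplus F.fact ((b : F.G) * fbarMinus F.fact ((b : F.G)⁻¹ * v))
    · have hc1' := hc1
      rw [fbarPlus_abm, fplus_abm] at hc1'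
      have hc2 : fbarPlus F.fact ((a : F.G)⁻¹ * u) ≠ fplus F.fact ((b : F.G)⁻¹ * v) := by
        intro h
        apply hc
        rw [(fplus_mul_memP F.fact (inv_mem b.2) v).1, ← hc1', mul_inv_rev, inv_inv,
          mul_assoc] at h
        exact inv_mul_eq_one.mp (left_eq_mul.mp h)
      rw [mul_def, mul_def, mulL_bas, mulL_bas, if_neg hc2, tmul_zero]
    · rw [mul_def, mul_def, mulL_bas, mulL_bas, if_neg hc1, zero_tmul]

theorem comul_mul' (x y : HC F) :
    comulL F (mulL F x y) = comulL F x * comulL F y := by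
  have key : (mulL F).compr₂ (comulL F) =
      (LinearMap.mul ℂ (HC F ⊗[ℂ] HC F)).compl₁₂ (comulL F) (comulL F) :=
    LinearMap.ext_basis (bas F) (bas F) (fun u v => by simpa using comul_mul_bas F u v)
  simpa using DFunLike.congr_fun (DFunLike.congr_fun key x) y

noncomputable instance : Bialgebra ℂ (HC F) :=
  Bialgebra.mk' ℂ (HC F) (counit_one' F) (fun {a b} => counit_mul' F a b)
    (comul_one' F) (fun {a b} => comul_mul' F a b)

end HConstr


namespace HConstr

open ExactFact TensorProduct
open scoped Classical

variable (F : FactorizedGroup)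

noncomputable def antipodeL : HC F →ₗ[ℂ] HC F :=
  (bas F).constr ℂ fun g => bas F g⁻¹

theorem antipodeL_bas (g : F.G) : antipodeL F (bas F g) = bas F g⁻¹ := by
  rw [antipodeL, Module.Basis.constr_basis]

theorem fplus_inv' (g : F.G) : fplus F.fact g⁻¹ = (fbarPlus F.fact g)⁻¹ :=
  fplus_inv F.fact g

theorem rTensor_law : LinearMap.mul' ℂ (HC F) ∘ₗ (antipodeL F).rTensor (HC F) ∘ₗ comulL F =
    Algebra.linearMap ℂ (HC F) ∘ₗ counitL F := by
  apply (bas F).ext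
  intro g
  simp only [LinearMap.comp_apply, comulL_bas, map_sum, LinearMap.rTensor_tmul,
    antipodeL_bas, LinearMap.mul'_apply, counitL_bas, Algebra.linearMap_apply]
  have hterm : ∀ a : F.Gp,
      bas F ((a : F.G) * fbarMinus F.fact ((a : F.G)⁻¹ * g))⁻¹ * bas F ((a : F.G)⁻¹ * g) =
      if fplus F.fact g = 1 then bas F (fbarPlus F.fact ((a : F.G)⁻¹ * g)) else 0 := by
    intro a
    rw [mul_def, mulL_bas]
    have hcond : fbarPlus F.fact ((a : F.G) * fbarMinus F.fact ((a : F.G)⁻¹ * g))⁻¹ =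
        (a : F.G)⁻¹ := by
      unfold fbarPlus
      rw [inv_inv, fplus_abm]
    have hpag : fplus F.fact ((a : F.G)⁻¹ * g) = (a : F.G)⁻¹ * fplus F.fact g :=
      (fplus_mul_memP F.fact (inv_mem a.2) g).1
    rw [hcond, hpag]
    by_cases hg : fplus F.fact g = 1
    · rw [if_pos hg, if_pos (by rw [hg, mul_one])]
      have hmag : fminus F.fact ((a : F.G)⁻¹ * g) = g := by
        have h := fplus_mul_fminus F.fact ((a : F.G)⁻¹ * g)
        rw [hpag, hg, mul_one] at h
        exact mul_left_cancel h
      rw [hmag, bm_eq F.fact ((a : F.G)⁻¹ * g)]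
      congr 1
      group
    · rw [if_neg hg, if_neg (fun hcc => hg (by
        have h2 : (a : F.G)⁻¹ * 1 = (a : F.G)⁻¹ * fplus F.fact g := by
          rw [mul_one]; exact hcc
        exact (mul_left_cancel h2).symm))]
  rw [Finset.sum_congr rfl fun a _ => hterm a]
  by_cases hg : fplus F.fact g = 1
  · simp only [if_pos hg, map_one]
    rw [one_def, oneH]
    have hinj : Function.Injective
        (fun a : F.Gp => (⟨fbarPlus F.fact ((a : F.G)⁻¹ * g), fbarPlus_mem F.fact _⟩ : F.Gp)) := by
      intro a b hab
      have hq : fbarPlus F.fact ((a : F.G)⁻¹ * g) = fbarPlus F.fact ((b : F.G)⁻¹ * g) :=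
        congrArg Subtype.val hab
      have ha' := bm_eq F.fact ((a : F.G)⁻¹ * g)
      have hb' := bm_eq F.fact ((b : F.G)⁻¹ * g)
      have hmem : (a : F.G)⁻¹ * (b : F.G) ∈ F.Gn := by
        have : fbarMinus F.fact ((a : F.G)⁻¹ * g) *
            (fbarMinus F.fact ((b : F.G)⁻¹ * g))⁻¹ = (a : F.G)⁻¹ * (b : F.G) := by
          rw [ha', hb', hq]
          group
        rw [← this]
        exact mul_mem (fbarMinus_mem F.fact _) (inv_mem (fbarMinus_mem F.fact _))
      have : (a : F.G)⁻¹ * (b : F.G) = 1 :=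
        inter_eq_one F.fact (mul_mem (inv_mem a.2) b.2) hmem
      exact Subtype.ext (inv_mul_eq_one.mp this)
    exact Fintype.sum_bijective _ ((Finite.injective_iff_bijective).mp hinj) _ _ (fun a => rfl)
  · simp only [if_neg hg, map_zero, Finset.sum_const_zero]

theorem lTensor_law : LinearMap.mul' ℂ (HC F) ∘ₗ (antipodeL F).lTensor (HC F) ∘ₗ comulL F =
    Algebra.linearMap ℂ (HC F) ∘ₗ counitL F := by
  apply (bas F).ext
  intro g
  simp only [LinearMap.comp_apply, comulL_bas, map_sum, LinearMap.lTensor_tmul,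
    antipodeL_bas, LinearMap.mul'_apply, counitL_bas, Algebra.linearMap_apply]
  have hbp : (fplus F.fact g = 1) ↔ (fbarPlus F.fact g = 1) := by
    rw [fplus_eq_one_iff, fbarPlus_eq_one_iff]
  have hterm : ∀ a : F.Gp,
      bas F ((a : F.G) * fbarMinus F.fact ((a : F.G)⁻¹ * g)) * bas F ((a : F.G)⁻¹ * g)⁻¹ =
      if fplus F.fact g = 1 then bas F (a : F.G) else 0 := by
    intro a
    rw [mul_def, mulL_bas, fbarPlus_abm]
    have hp : fplus F.fact ((a : F.G)⁻¹ * g)⁻¹ = (fbarPlus F.fact ((a : F.G)⁻¹ * g))⁻¹ :=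
      fplus_inv F.fact _
    have hm : fminus F.fact ((a : F.G)⁻¹ * g)⁻¹ = (fbarMinus F.fact ((a : F.G)⁻¹ * g))⁻¹ :=
      fminus_inv F.fact _
    rw [hp, hm]
    by_cases hg : fplus F.fact g = 1
    · have hbg : fbarPlus F.fact g = 1 := hbp.mp hg
      rw [if_pos hg, if_pos (by rw [hbg, one_mul])]
      congr 1
      group
    · have hbg : fbarPlus F.fact g ≠ 1 := fun h => hg (hbp.mpr h)
      rw [if_neg hg, if_neg (fun hcc => hbg (by
        have h2 : fbarPlus F.fact g * (fbarPlus F.fact ((a : F.G)⁻¹ * g))⁻¹ =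
            1 * (fbarPlus F.fact ((a : F.G)⁻¹ * g))⁻¹ := by
          rw [one_mul]; exact hcc
        exact mul_right_cancel h2))]
  rw [Finset.sum_congr rfl fun a _ => hterm a]
  by_cases hg : fplus F.fact g = 1
  · simp only [if_pos hg, map_one]
    rw [one_def, oneH]
  · simp only [if_neg hg, map_zero, Finset.sum_const_zero]

noncomputable instance : HopfAlgebra ℂ (HC F) :=
  { (inferInstance : Bialgebra ℂ (HC F)) with
    antipode := antipodeL F
    mul_antipode_rTensor_comul := rTensor_law F
    mul_antipode_lTensor_comul := lTensor_law F }

end HConstr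


namespace HConstr

open ExactFact TensorProduct
open scoped Classical

variable (F : FactorizedGroup)

theorem bas_repr (w k : F.G) : (bas F).repr (bas F w) k = if w = k then 1 else 0 := by
  rw [Module.Basis.repr_self]
  exact Finsupp.single_apply

theorem prop_mul_pos (g h : F.G) (hc : fbarPlus F.fact g = fplus F.fact h) :
    bas F g * bas F h = bas F (g * fminus F.fact h) := by
  rw [mul_def, mulL_bas, if_pos hc]

theorem prop_mul_neg (g h : F.G) (hc : fbarPlus F.fact g ≠ fplus F.fact h) :
    bas F g * bas F h = 0 := by
  rw [mul_def, mulL_bas, if_neg hc]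

theorem prop_one_repr_mem (g : F.G) (hg : g ∈ F.Gp) : (bas F).repr 1 g = 1 := by
  rw [one_def, oneH, map_sum, Finsupp.coe_finset_sum, Finset.sum_apply]
  simp only [bas_repr]
  refine (Finset.sum_eq_single (⟨g, hg⟩ : F.Gp) (fun b _ hb => ?_) (by simp)).trans ?_
  · exact if_neg (fun hc => hb (Subtype.ext hc))
  · exact if_pos rfl

theorem prop_one_repr_notmem (g : F.G) (hg : g ∉ F.Gp) : (bas F).repr 1 g = 0 := by
  rw [one_def, oneH, map_sum, Finsupp.coe_finset_sum, Finset.sum_apply]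
  simp only [bas_repr]
  exact Finset.sum_eq_zero fun a _ => if_neg (fun (hc : (a : F.G) = g) => hg (hc ▸ a.2))

theorem prop_counit_pos (g : F.G) (h : fplus F.fact g = 1) : counitL F (bas F g) = 1 := by
  rw [counitL_bas, if_pos h]

theorem prop_counit_neg (g : F.G) (h : fplus F.fact g ≠ 1) : counitL F (bas F g) = 0 := by
  rw [counitL_bas, if_neg h]

set_option synthInstance.maxHeartbeats 1000000 in
theorem comul_repr (g h k : F.G) :
    ((bas F).tensorProduct (bas F)).repr (comulL F (bas F g)) (h, k) =
      ∑ a : F.Gp,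
        ((bas F).repr (bas F ((a : F.G)⁻¹ * g)) k) •
          ((bas F).repr (bas F ((a : F.G) * fbarMinus F.fact ((a : F.G)⁻¹ * g))) h) := by
  rw [comulL_bas, map_sum, Finsupp.coe_finset_sum, Finset.sum_apply]
  exact Finset.sum_congr rfl fun a _ => Module.Basis.tensorProduct_repr_tmul_apply _ _ _ _ _ _

theorem prop_comul_pos (g h k : F.G)
    (h1 : fplus F.fact h * k = g) (h2 : fbarMinus F.fact k = fminus F.fact h) :
    ((bas F).tensorProduct (bas F)).repr (comulL F (bas F g)) (h, k) = 1 := by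
  rw [comul_repr]
  have hk : (fplus F.fact h)⁻¹ * g = k := by rw [← h1, inv_mul_cancel_left]
  refine (Finset.sum_eq_single (⟨fplus F.fact h, fplus_mem F.fact h⟩ : F.Gp)
    (fun b _ hb => ?_) (by simp)).trans ?_
  · by_cases hx : (b : F.G) * fbarMinus F.fact ((b : F.G)⁻¹ * g) = h
    · exfalso
      apply hb
      apply Subtype.ext
      show (b : F.G) = fplus F.fact h
      rw [← hx, fplus_abm]
    · rw [bas_repr F _ h, if_neg hx, smul_zero]
  · show ((bas F).repr (bas F ((fplus F.fact h)⁻¹ * g)) k) •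
      ((bas F).repr (bas F ((fplus F.fact h) * fbarMinus F.fact ((fplus F.fact h)⁻¹ * g))) h) = 1
    rw [hk, h2, bas_repr, bas_repr, if_pos rfl, if_pos (fplus_mul_fminus F.fact h), smul_eq_mul,
      one_mul]

theorem prop_comul_neg (g h k : F.G)
    (hn : ¬(fplus F.fact h * k = g ∧ fbarMinus F.fact k = fminus F.fact h)) :
    ((bas F).tensorProduct (bas F)).repr (comulL F (bas F g)) (h, k) = 0 := by
  rw [comul_repr]
  refine Finset.sum_eq_zero fun a _ => ?_
  by_cases hx : (a : F.G) * fbarMinus F.fact ((a : F.G)⁻¹ * g) = h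
  · by_cases hy : (a : F.G)⁻¹ * g = k
    · exfalso
      apply hn
      have hph : fplus F.fact h = (a : F.G) := by rw [← hx, fplus_abm]
      constructor
      · rw [hph, ← hy, mul_inv_cancel_left]
      · rw [← hy, ← fminus_abm F a g, hx]
    · rw [bas_repr F _ k, if_neg hy, zero_smul]
  · rw [bas_repr F _ h, if_neg hx, smul_zero]

theorem prop_antipode (g : F.G) :
    HopfAlgebra.antipode (R := ℂ) (bas F g) = bas F g⁻¹ :=
  antipodeL_bas F g

theorem ite01_nonneg (c : Prop) [Decidable c] : (0 : ℂ) ≤ if c then 1 else 0 := by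
  split
  · exact zero_le_one
  · exact le_refl 0

theorem isPositive : IsPositiveBasis (bas F) := by
  constructor
  · intro i
    by_cases hi : i ∈ F.Gp
    · rw [prop_one_repr_mem F i hi]; exact zero_le_one
    · rw [prop_one_repr_notmem F i hi]
  · intro i
    show (0 : ℂ) ≤ counitL F (bas F i)
    rw [counitL_bas]
    exact ite01_nonneg _
  · intro i j k
    by_cases hc : fbarPlus F.fact i = fplus F.fact j
    · rw [prop_mul_pos F i j hc, bas_repr]
      exact ite01_nonneg _
    · rw [prop_mul_neg F i j hc, map_zero]
      exact le_refl 0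
  · intro i j k
    show (0 : ℂ) ≤ ((bas F).tensorProduct (bas F)).repr (comulL F (bas F i)) (j, k)
    by_cases hc : fplus F.fact j * k = i ∧ fbarMinus F.fact k = fminus F.fact j
    · rw [prop_comul_pos F i j k hc.1 hc.2]; exact zero_le_one
    · rw [prop_comul_neg F i j k hc]
  · intro i j
    rw [prop_antipode F i, bas_repr]
    exact ite01_nonneg _

end HConstr



set_option maxHeartbeats 2000000 in
theorem stmt0 (G : Type) [Group G] [Fintype G] (Gp Gn : Subgroup G)
    (hF : IsExactFactorization Gp Gn) :
    ∃ (A : HopfAlgebraOver) (B : Module.Basis G ℂ A.carrier),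
      IsPositiveBasis B ∧
      (∀ g h : G, fbarPlus hF g = fplus hF h → B g * B h = B (g * fminus hF h)) ∧
      (∀ g h : G, fbarPlus hF g ≠ fplus hF h → B g * B h = 0) ∧
      (∀ g h k : G, fplus hF h * k = g ∧ fbarMinus hF k = fminus hF h →
        (B.tensorProduct B).repr (Coalgebra.comul (R := ℂ) (B g)) (h, k) = 1) ∧
      (∀ g h k : G, ¬(fplus hF h * k = g ∧ fbarMinus hF k = fminus hF h) →
        (B.tensorProduct B).repr (Coalgebra.comul (R := ℂ) (B g)) (h, k) = 0) ∧
      (∀ g : G, g ∈ Gp → B.repr 1 g = 1) ∧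
      (∀ g : G, g ∉ Gp → B.repr 1 g = 0) ∧
      (∀ g : G, fplus hF g = 1 → Coalgebra.counit (R := ℂ) (B g) = 1) ∧
      (∀ g : G, fplus hF g ≠ 1 → Coalgebra.counit (R := ℂ) (B g) = 0) ∧
      (∀ g : G, HopfAlgebra.antipode (R := ℂ) (B g) = B g⁻¹) := by
  refine ⟨⟨HConstr.HC ⟨G, Gp, Gn, hF⟩⟩, HConstr.bas ⟨G, Gp, Gn, hF⟩,
    ?_, ?_, ?_, ?_, ?_, ?_, ?_, ?_, ?_, ?_⟩
  · exact HConstr.isPositive ⟨G, Gp, Gn, hF⟩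
  · exact fun g h hc => HConstr.prop_mul_pos ⟨G, Gp, Gn, hF⟩ g h hc
  · exact fun g h hc => HConstr.prop_mul_neg ⟨G, Gp, Gn, hF⟩ g h hc
  · exact fun g h k hc => HConstr.prop_comul_pos ⟨G, Gp, Gn, hF⟩ g h k hc.1 hc.2
  · exact fun g h k hc => HConstr.prop_comul_neg ⟨G, Gp, Gn, hF⟩ g h k hc
  · exact fun g hg => HConstr.prop_one_repr_mem ⟨G, Gp, Gn, hF⟩ g hg
  · exact fun g hg => HConstr.prop_one_repr_notmem ⟨G, Gp, Gn, hF⟩ g hg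
  · exact fun g hg => HConstr.prop_counit_pos ⟨G, Gp, Gn, hF⟩ g hg
  · exact fun g hg => HConstr.prop_counit_neg ⟨G, Gp, Gn, hF⟩ g hg
  · exact fun g => HConstr.prop_antipode ⟨G, Gp, Gn, hF⟩ g
end

section
/- Let H be a finite-dimensional Hopf algebra over ℂ with a positive basis B, and suppose 1 = d₁ + ⋯ + d_k where d₁, …, d_k are distinct elements of B. Then d_i d_j = δ_{ij} d_i for all i, j, and the linear span ℂd₁ + ⋯ + ℂd_k is a commutative Hopf subalgebra of H (it is closed under multiplication, comultiplication, and the antipode, and contains the unit). -/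
open scoped TensorProduct ComplexOrder

theorem stmt4 {H : Type} [Ring H] [HopfAlgebra ℂ H] {ι : Type} [Fintype ι]
    (B : Module.Basis ι ℂ H) (hpos : IsPositiveBasis B)
    (k : ℕ) (d : Fin k → ι) (hd : Function.Injective d)
    (h1 : (1 : H) = ∑ i : Fin k, B (d i)) :
    -- dᵢdⱼ = δᵢⱼ dᵢ
    (∀ i j : Fin k, B (d i) * B (d j) = if i = j then B (d i) else 0) ∧
    -- ℂd₁ + ⋯ + d_k is a commutative Hopf subalgebra
    (let W : Submodule ℂ H := Submodule.span ℂ (Set.range fun i : Fin k => B (d i))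
     (1 : H) ∈ W ∧
     (∀ x ∈ W, ∀ y ∈ W, x * y ∈ W) ∧
     (∀ x ∈ W, ∀ y ∈ W, x * y = y * x) ∧
     (∀ x ∈ W, Coalgebra.comul (R := ℂ) x ∈
        LinearMap.range (TensorProduct.map W.subtype W.subtype)) ∧
     (∀ x ∈ W, HopfAlgebra.antipode (R := ℂ) x ∈ W)) := by
  classical
  have hsum_left : ∀ j : Fin k, ∑ i : Fin k, B (d i) * B (d j) = B (d j) := by
    intro j; rw [← Finset.sum_mul, ← h1, one_mul]
  have hsum_right : ∀ i : Fin k, ∑ j : Fin k, B (d i) * B (d j) = B (d i) := by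
    intro i; rw [← Finset.mul_sum, ← h1, mul_one]
  -- left coordinate vanishing
  have hcoordL : ∀ (j : Fin k) (m : ι), m ≠ d j →
      ∀ i : Fin k, B.repr (B (d i) * B (d j)) m = 0 := by
    intro j m hm
    have hsum : ∑ i : Fin k, B.repr (B (d i) * B (d j)) m = 0 := by
      have h0 : B.repr (∑ i : Fin k, B (d i) * B (d j)) m
          = ∑ i : Fin k, B.repr (B (d i) * B (d j)) m := by
        simp
      rw [hsum_left j] at h0
      rw [← h0]
      simp [Finsupp.single_apply, Ne.symm hm]
    intro i
    exact (Finset.sum_eq_zero_iff_of_nonneg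
      (fun i _ => hpos.mul_nonneg _ _ _)).mp hsum i (Finset.mem_univ i)
  have hcoordR : ∀ (i : Fin k) (m : ι), m ≠ d i →
      ∀ j : Fin k, B.repr (B (d i) * B (d j)) m = 0 := by
    intro i m hm
    have hsum : ∑ j : Fin k, B.repr (B (d i) * B (d j)) m = 0 := by
      have h0 : B.repr (∑ j : Fin k, B (d i) * B (d j)) m
          = ∑ j : Fin k, B.repr (B (d i) * B (d j)) m := by
        simp
      rw [hsum_right i] at h0
      rw [← h0]
      simp [Finsupp.single_apply, Ne.symm hm]
    intro j
    exact (Finset.sum_eq_zero_iff_of_nonneg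
      (fun j _ => hpos.mul_nonneg _ _ _)).mp hsum j (Finset.mem_univ j)
  have hne : ∀ i j : Fin k, i ≠ j → B (d i) * B (d j) = 0 := by
    intro i j hij
    apply B.ext_elem
    intro m
    rw [map_zero, Finsupp.zero_apply]
    by_cases hm : m = d j
    · subst hm
      exact hcoordR i (d j) (fun h => hij (hd h).symm) j
    · exact hcoordL j m hm i
  have hdiag : ∀ i : Fin k, B (d i) * B (d i) = B (d i) := by
    intro i
    have := hsum_right i
    rwa [Finset.sum_eq_single i (fun j _ hj => hne i j (Ne.symm hj))
      (fun h => absurd (Finset.mem_univ i) h)] at this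
  have hmul : ∀ i j : Fin k, B (d i) * B (d j) = if i = j then B (d i) else 0 := by
    intro i j
    by_cases h : i = j
    · subst h; simp [hdiag i]
    · simp [h, hne i j h]
  refine ⟨hmul, ?_, ?_, ?_, ?_, ?_⟩
  -- 1 ∈ W
  · rw [h1]
    exact Submodule.sum_mem _ fun i _ => Submodule.subset_span ⟨i, rfl⟩
  -- closed under multiplication
  · intro x hx y hy
    induction hx using Submodule.span_induction with
    | mem x hx =>
      obtain ⟨i, rfl⟩ := hx
      induction hy using Submodule.span_induction with
      | mem y hy =>
        obtain ⟨j, rfl⟩ := hy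
        rw [hmul i j]
        by_cases h : i = j
        · simp only [if_pos h]; exact Submodule.subset_span ⟨i, rfl⟩
        · simp only [if_neg h]; exact Submodule.zero_mem _
      | zero => rw [mul_zero]; exact Submodule.zero_mem _
      | add y z _ _ hy hz => rw [mul_add]; exact Submodule.add_mem _ hy hz
      | smul a y _ hy => rw [mul_smul_comm]; exact Submodule.smul_mem _ a hy
    | zero => rw [zero_mul]; exact Submodule.zero_mem _
    | add x z _ _ hx hz => rw [add_mul]; exact Submodule.add_mem _ hx hz
    | smul a x _ hx => rw [smul_mul_assoc]; exact Submodule.smul_mem _ a hx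
  -- commutativity
  · intro x hx y hy
    induction hx using Submodule.span_induction with
    | mem x hx =>
      obtain ⟨i, rfl⟩ := hx
      induction hy using Submodule.span_induction with
      | mem y hy =>
        obtain ⟨j, rfl⟩ := hy
        rw [hmul i j, hmul j i]
        by_cases h : i = j
        · subst h; simp
        · simp [h, Ne.symm h]
      | zero => rw [mul_zero, zero_mul]
      | add y z _ _ hy hz => rw [mul_add, add_mul, hy, hz]
      | smul a y _ hy => rw [mul_smul_comm, smul_mul_assoc, hy]
    | zero => rw [zero_mul, mul_zero]
    | add x z _ _ hx hz => rw [add_mul, mul_add, hx, hz]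
    | smul a x _ hx => rw [smul_mul_assoc, mul_smul_comm, hx]
  -- comultiplication
  · intro x hx
    set W : Submodule ℂ H := Submodule.span ℂ (Set.range fun i : Fin k => B (d i)) with hW
    have hgen : ∀ i : Fin k, B (d i) ∈ W := fun i => Submodule.subset_span ⟨i, rfl⟩
    set T : Module.Basis (ι × ι) ℂ (H ⊗[ℂ] H) := B.tensorProduct B with hTdef
    -- sum of comuls
    have hcs : ∑ i : Fin k, Coalgebra.comul (R := ℂ) (B (d i))
        = ∑ p : Fin k, ∑ q : Fin k, B (d p) ⊗ₜ[ℂ] B (d q) := by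
      rw [← map_sum, ← h1]
      have h11 : Coalgebra.comul (R := ℂ) (1 : H) = (1 : H) ⊗ₜ[ℂ] (1 : H) := by
        simp [← Algebra.TensorProduct.one_def]
      rw [h11]
      conv_lhs => rw [h1]
      rw [TensorProduct.sum_tmul]
      exact Finset.sum_congr rfl fun p _ => TensorProduct.tmul_sum _ _ _
    -- coordinates vanish outside the grid
    have hvanish : ∀ (i : Fin k) (m n : ι), (m ∉ Set.range d ∨ n ∉ Set.range d) →
        T.repr (Coalgebra.comul (R := ℂ) (B (d i))) (m, n) = 0 := by
      intro i m n hmn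
      have hsum : ∑ i : Fin k, T.repr (Coalgebra.comul (R := ℂ) (B (d i))) (m, n) = 0 := by
        have h0 : T.repr (∑ i : Fin k, Coalgebra.comul (R := ℂ) (B (d i))) (m, n)
            = ∑ i : Fin k, T.repr (Coalgebra.comul (R := ℂ) (B (d i))) (m, n) := by
          simp
        rw [hcs] at h0
        rw [← h0]
        have hterm : ∀ p q : Fin k, T.repr (B (d p) ⊗ₜ[ℂ] B (d q)) (m, n) = 0 := by
          intro p q
          have : B (d p) ⊗ₜ[ℂ] B (d q) = T (d p, d q) := by
            rw [hTdef, Module.Basis.tensorProduct_apply]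
          rw [this, Module.Basis.repr_self, Finsupp.single_apply]
          rw [if_neg]
          intro h
          rcases Prod.mk.injEq .. ▸ h with ⟨hm, hn⟩
          rcases hmn with hm' | hn'
          · exact hm' ⟨p, hm⟩
          · exact hn' ⟨q, hn⟩
        simp [hterm]
      exact (Finset.sum_eq_zero_iff_of_nonneg
        (fun i _ => hpos.comul_nonneg _ _ _)).mp hsum i (Finset.mem_univ i)
    -- generators land in the range
    have hgenc : ∀ i : Fin k, Coalgebra.comul (R := ℂ) (B (d i)) ∈
        LinearMap.range (TensorProduct.map W.subtype W.subtype) := by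
      intro i
      rw [← T.sum_repr (Coalgebra.comul (R := ℂ) (B (d i)))]
      apply Submodule.sum_mem
      rintro ⟨m, n⟩ -
      by_cases hm : m ∈ Set.range d
      · by_cases hn : n ∈ Set.range d
        · apply Submodule.smul_mem
          obtain ⟨p, rfl⟩ := hm
          obtain ⟨q, rfl⟩ := hn
          refine ⟨(⟨B (d p), hgen p⟩ : W) ⊗ₜ[ℂ] (⟨B (d q), hgen q⟩ : W), ?_⟩
          rw [TensorProduct.map_tmul]
          rw [hTdef, Module.Basis.tensorProduct_apply]
          rfl
        · rw [hvanish i m n (Or.inr hn), zero_smul]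
          exact Submodule.zero_mem _
      · rw [hvanish i m n (Or.inl hm), zero_smul]
        exact Submodule.zero_mem _
    have hle : W ≤ (LinearMap.range (TensorProduct.map W.subtype W.subtype)).comap
        (Coalgebra.comul (R := ℂ) (A := H)) := by
      rw [hW, Submodule.span_le]
      rintro x ⟨i, rfl⟩
      exact hgenc i
    exact hle hx
  -- antipode
  · intro x hx
    set W : Submodule ℂ H := Submodule.span ℂ (Set.range fun i : Fin k => B (d i)) with hW
    have hgen : ∀ i : Fin k, B (d i) ∈ W := fun i => Submodule.subset_span ⟨i, rfl⟩
    have hS1 : HopfAlgebra.antipode (R := ℂ) (1 : H) = 1 := by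
      have := HopfAlgebra.mul_antipode_rTensor_comul_apply (R := ℂ) (A := H) 1
      simpa [Algebra.TensorProduct.one_def] using this
    have hcs : ∑ i : Fin k, HopfAlgebra.antipode (R := ℂ) (B (d i))
        = ∑ p : Fin k, B (d p) := by
      rw [← map_sum, ← h1, hS1, h1]
    have hvanish : ∀ (i : Fin k) (m : ι), m ∉ Set.range d →
        B.repr (HopfAlgebra.antipode (R := ℂ) (B (d i))) m = 0 := by
      intro i m hm
      have hsum : ∑ i : Fin k, B.repr (HopfAlgebra.antipode (R := ℂ) (B (d i))) m = 0 := by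
        have h0 : B.repr (∑ i : Fin k, HopfAlgebra.antipode (R := ℂ) (B (d i))) m
            = ∑ i : Fin k, B.repr (HopfAlgebra.antipode (R := ℂ) (B (d i))) m := by
          simp
        rw [hcs] at h0
        rw [← h0]
        simp only [map_sum, Finsupp.coe_finset_sum, Finset.sum_apply, Module.Basis.repr_self]
        exact Finset.sum_eq_zero fun p _ => by
          rw [Finsupp.single_apply, if_neg (fun h => hm ⟨p, h⟩)]
      exact (Finset.sum_eq_zero_iff_of_nonneg
        (fun i _ => hpos.antipode_nonneg _ _)).mp hsum i (Finset.mem_univ i)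
    have hgens : ∀ i : Fin k, HopfAlgebra.antipode (R := ℂ) (B (d i)) ∈ W := by
      intro i
      rw [← B.sum_repr (HopfAlgebra.antipode (R := ℂ) (B (d i)))]
      apply Submodule.sum_mem
      intro m _
      by_cases hm : m ∈ Set.range d
      · obtain ⟨p, rfl⟩ := hm
        exact Submodule.smul_mem _ _ (hgen p)
      · rw [hvanish i m hm, zero_smul]
        exact Submodule.zero_mem _
    have hle : W ≤ W.comap (HopfAlgebra.antipode (R := ℂ) (A := H)) := by
      rw [hW, Submodule.span_le]
      rintro x ⟨i, rfl⟩
      exact hgens i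
    exact hle hx
end

section
/- Let H be a finite-dimensional Hopf algebra over ℂ with a positive basis B, and suppose 1 = d₁ + ⋯ + d_k where d₁, …, d_k are distinct elements of B. Then there is a finite group G₊ of order k and a bijection g₊ ↦ d_{g₊} from G₊ onto {d₁, …, d_k} such that d_{g₊} d_{h₊} = δ_{g₊,h₊} d_{g₊}, Δ(d_{g₊}) = Σ_{h₊k₊ = g₊} d_{h₊} ⊗ d_{k₊}, S(d_{g₊}) = d_{g₊⁻¹}, 1 = Σ_{g₊∈G₊} d_{g₊}, and ε(d_{g₊}) = δ_{g₊,e}; that is, the span of d₁, …, d_k is isomorphic as a Hopf algebra to the dual (ℂG₊)* of the group algebra of G₊, with the d's corresponding to the dual basis of G₊. -/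
open scoped TensorProduct ComplexOrder

/-- A finite group, bundled. -/
structure FinGrp : Type 1 where
  carrier : Type
  [grp : Group carrier]
  [fin : Fintype carrier]

attribute [instance] FinGrp.grp FinGrp.fin

def groupOfAxioms {G : Type} (mul : G → G → G) (one : G) (inv : G → G)
    (assoc : ∀ a b c, mul (mul a b) c = mul a (mul b c))
    (one_mul : ∀ a, mul one a = a)
    (inv_mul : ∀ a, mul (inv a) a = one) : Group G :=
  letI : Mul G := ⟨mul⟩; letI : One G := ⟨one⟩; letI : Inv G := ⟨inv⟩
  Group.ofLeftAxioms assoc one_mul inv_mul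

set_option maxHeartbeats 2000000 in
set_option synthInstance.maxHeartbeats 400000 in
theorem stmt5 {H : Type} [Ring H] [HopfAlgebra ℂ H] {ι : Type} [Fintype ι]
    (B : Module.Basis ι ℂ H) (hpos : IsPositiveBasis B)
    (k : ℕ) (d : Fin k → ι) (hd : Function.Injective d)
    (h1 : (1 : H) = ∑ i : Fin k, B (d i)) :
    ∃ (Γ : FinGrp) (e : Γ.carrier ≃ Fin k),
      -- write `D g` for the basis element `d_{g₊}`
      (∀ g h : Γ.carrier, g = h → B (d (e g)) * B (d (e h)) = B (d (e g))) ∧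
      (∀ g h : Γ.carrier, g ≠ h → B (d (e g)) * B (d (e h)) = 0) ∧
      (∀ g : Γ.carrier, Coalgebra.comul (R := ℂ) (B (d (e g))) =
        ∑ h : Γ.carrier, B (d (e h)) ⊗ₜ[ℂ] B (d (e (h⁻¹ * g)))) ∧
      (∀ g : Γ.carrier,
        HopfAlgebra.antipode (R := ℂ) (B (d (e g))) = B (d (e g⁻¹))) ∧
      ((1 : H) = ∑ g : Γ.carrier, B (d (e g))) ∧
      (Coalgebra.counit (R := ℂ) (B (d (e (1 : Γ.carrier)))) = 1) ∧
      (∀ g : Γ.carrier, g ≠ 1 → Coalgebra.counit (R := ℂ) (B (d (e g))) = 0) := by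
  classical
  -- coordinates of 1
  have hone : ∀ x : ι, B.repr 1 x = ∑ i : Fin k, (if d i = x then (1:ℂ) else 0) := by
    intro x
    rw [h1, map_sum]
    simp [Finsupp.finset_sum_apply, Finsupp.single_apply]
  have hone_d : ∀ j : Fin k, B.repr 1 (d j) = 1 := by
    intro j; rw [hone]; simp [hd.eq_iff]
  have hone_nd : ∀ x : ι, (∀ i, x ≠ d i) → B.repr 1 x = 0 := by
    intro x hx; rw [hone]
    exact Finset.sum_eq_zero fun i _ => if_neg fun h => hx i h.symm
  -- products
  have hcolsum : ∀ (j : Fin k) (x : ι),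
      ∑ i : Fin k, B.repr (B (d i) * B (d j)) x = (if d j = x then (1:ℂ) else 0) := by
    intro j x
    have h2 : (∑ i : Fin k, B (d i) * B (d j)) = B (d j) := by
      rw [← Finset.sum_mul, ← h1, one_mul]
    have h3 := congrArg (fun z => B.repr z x) h2
    simpa [map_sum, Finsupp.finset_sum_apply, Finsupp.single_apply] using h3
  have hrowsum : ∀ (i : Fin k) (x : ι),
      ∑ j : Fin k, B.repr (B (d i) * B (d j)) x = (if d i = x then (1:ℂ) else 0) := by
    intro i x
    have h2 : (∑ j : Fin k, B (d i) * B (d j)) = B (d i) := by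
      rw [← Finset.mul_sum, ← h1, mul_one]
    have h3 := congrArg (fun z => B.repr z x) h2
    simpa [map_sum, Finsupp.finset_sum_apply, Finsupp.single_apply] using h3
  have hcol0 : ∀ (i j : Fin k) (x : ι), d j ≠ x → B.repr (B (d i) * B (d j)) x = 0 := by
    intro i j x hx
    have h0 : ∑ i : Fin k, B.repr (B (d i) * B (d j)) x = 0 := by
      rw [hcolsum]; exact if_neg hx
    exact (Finset.sum_eq_zero_iff_of_nonneg
      (fun i _ => hpos.mul_nonneg _ _ _)).mp h0 i (Finset.mem_univ i)
  have hrow0 : ∀ (i j : Fin k) (x : ι), d i ≠ x → B.repr (B (d i) * B (d j)) x = 0 := by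
    intro i j x hx
    have h0 : ∑ j : Fin k, B.repr (B (d i) * B (d j)) x = 0 := by
      rw [hrowsum]; exact if_neg hx
    exact (Finset.sum_eq_zero_iff_of_nonneg
      (fun j _ => hpos.mul_nonneg _ _ _)).mp h0 j (Finset.mem_univ j)
  have hmul_ne : ∀ i j : Fin k, i ≠ j → B (d i) * B (d j) = 0 := by
    intro i j hij
    apply B.ext_elem; intro x
    by_cases hx : d i = x
    · rw [hcol0 i j x (fun h => hij (hd (hx.trans h.symm)))]; simp
    · rw [hrow0 i j x hx]; simp
  have hmul_eq : ∀ i : Fin k, B (d i) * B (d i) = B (d i) := by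
    intro i
    apply B.ext_elem; intro x
    by_cases hx : d i = x
    · subst hx
      have h2 : ∑ i' : Fin k, B.repr (B (d i') * B (d i)) (d i) = 1 := by
        rw [hcolsum]; simp
      rw [Finset.sum_eq_single i] at h2
      · rw [h2]; simp
      · exact fun b _ hb => hrow0 b i (d i) (fun h => hb (hd h))
      · simp
    · rw [hrow0 i i x hx]; simp [Finsupp.single_apply, hx]

  -- tensor basis extraction
  have key2 : ∀ (x : Fin k → Fin k → ℂ) (a b : Fin k),
      (B.tensorProduct B).repr
        (∑ a' : Fin k, ∑ b' : Fin k, x a' b' • (B (d a') ⊗ₜ[ℂ] B (d b'))) (d a, d b) = x a b := by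
    intro x a b
    simp [map_sum, Finsupp.finset_sum_apply, Module.Basis.tensorProduct_repr_tmul_apply,
      Finsupp.single_apply, hd.eq_iff]
  have key1 : ∀ (x : Fin k → ℂ) (a : Fin k),
      B.repr (∑ a' : Fin k, x a' • B (d a')) (d a) = x a := by
    intro x a
    simp [map_sum, Finsupp.finset_sum_apply, Finsupp.single_apply, hd.eq_iff]
  have key2' : ∀ (x y : Fin k → Fin k → ℂ),
      (∑ a : Fin k, ∑ b : Fin k, x a b • (B (d a) ⊗ₜ[ℂ] B (d b)))
        = (∑ a : Fin k, ∑ b : Fin k, y a b • (B (d a) ⊗ₜ[ℂ] B (d b)))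
      → ∀ a b, x a b = y a b := by
    intro x y hxy a b
    rw [← key2 x a b, ← key2 y a b, hxy]
  -- comul coefficients
  have hΔsum : ∀ p : ι × ι,
      ∑ l : Fin k, (B.tensorProduct B).repr (Coalgebra.comul (R := ℂ) (B (d l))) p
        = B.repr 1 p.1 * B.repr 1 p.2 := by
    intro p
    have h2 : (∑ l : Fin k, Coalgebra.comul (R := ℂ) (B (d l))) = (1:H) ⊗ₜ[ℂ] (1:H) := by
      rw [← map_sum, ← h1, Bialgebra.comul_one, Algebra.TensorProduct.one_def]
    obtain ⟨p1, p2⟩ := p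
    have h3 := congrArg (fun z => (B.tensorProduct B).repr z (p1, p2)) h2
    simp only [map_sum, Finsupp.finset_sum_apply, Module.Basis.tensorProduct_repr_tmul_apply,
      smul_eq_mul] at h3
    exact h3.trans (mul_comm _ _)
  have hΔ0 : ∀ (l : Fin k) (p : ι × ι), (∀ a b : Fin k, p ≠ (d a, d b)) →
      (B.tensorProduct B).repr (Coalgebra.comul (R := ℂ) (B (d l))) p = 0 := by
    intro l p hp
    have h0 : ∑ l : Fin k, (B.tensorProduct B).repr (Coalgebra.comul (R := ℂ) (B (d l))) p = 0 := by
      rw [hΔsum]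
      by_cases h1x : ∃ a : Fin k, p.1 = d a
      · obtain ⟨a, ha⟩ := h1x
        have h2x : ∀ b : Fin k, p.2 ≠ d b := by
          intro b hb
          exact hp a b (Prod.ext ha hb)
        rw [hone_nd p.2 h2x, mul_zero]
      · push_neg at h1x
        rw [hone_nd p.1 h1x, zero_mul]
    exact (Finset.sum_eq_zero_iff_of_nonneg
      (fun l _ => hpos.comul_nonneg (d l) p.1 p.2)).mp h0 l (Finset.mem_univ l)
  set c : Fin k → Fin k → Fin k → ℂ :=
    fun l a b => (B.tensorProduct B).repr (Coalgebra.comul (R := ℂ) (B (d l))) (d a, d b) with hc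
  have hΔexp : ∀ l : Fin k, Coalgebra.comul (R := ℂ) (B (d l))
      = ∑ a : Fin k, ∑ b : Fin k, c l a b • (B (d a) ⊗ₜ[ℂ] B (d b)) := by
    intro l
    conv_lhs => rw [← (B.tensorProduct B).sum_repr (Coalgebra.comul (R := ℂ) (B (d l)))]
    have hinj : ∀ q1 ∈ (Finset.univ : Finset (Fin k × Fin k)), ∀ q2 ∈ (Finset.univ : Finset (Fin k × Fin k)),
        (fun q : Fin k × Fin k => ((d q.1, d q.2) : ι × ι)) q1
          = (fun q : Fin k × Fin k => ((d q.1, d q.2) : ι × ι)) q2 → q1 = q2 := by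
      intro q1 _ q2 _ hq
      exact Prod.ext (hd (congrArg Prod.fst hq)) (hd (congrArg Prod.snd hq))
    rw [← Finset.sum_subset (Finset.subset_univ
      ((Finset.univ : Finset (Fin k × Fin k)).image (fun q : Fin k × Fin k => ((d q.1, d q.2) : ι × ι))))]
    · rw [Finset.sum_image hinj, Fintype.sum_prod_type]
      refine Finset.sum_congr rfl fun a _ => Finset.sum_congr rfl fun b _ => ?_
      rw [Module.Basis.tensorProduct_apply]
    · intro p _ hp
      have hnp : ∀ a b : Fin k, p ≠ (d a, d b) := by
        intro a b h
        exact hp (Finset.mem_image.mpr ⟨(a,b), Finset.mem_univ _, h.symm⟩)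
      rw [hΔ0 l p hnp, zero_smul]

  -- multiplicativity of comul
  have hprod : ∀ i j : Fin k,
      Coalgebra.comul (R := ℂ) (B (d i)) * Coalgebra.comul (R := ℂ) (B (d j))
      = ∑ a : Fin k, ∑ b : Fin k, (c i a b * c j a b) • (B (d a) ⊗ₜ[ℂ] B (d b)) := by
    intro i j
    rw [hΔexp i, hΔexp j, Finset.sum_mul]
    refine Finset.sum_congr rfl fun a _ => ?_
    rw [Finset.sum_mul]
    refine Finset.sum_congr rfl fun b _ => ?_
    rw [Finset.mul_sum, Finset.sum_eq_single a]
    · rw [Finset.mul_sum, Finset.sum_eq_single b]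
      · rw [smul_mul_smul_comm, Algebra.TensorProduct.tmul_mul_tmul, hmul_eq, hmul_eq]
      · intro b' _ hb'
        rw [smul_mul_smul_comm, Algebra.TensorProduct.tmul_mul_tmul, hmul_ne b b' (fun h => hb' h.symm),
          TensorProduct.tmul_zero, smul_zero]
      · intro hb; exact absurd (Finset.mem_univ b) hb
    · intro a' _ ha'
      rw [Finset.mul_sum]
      refine Finset.sum_eq_zero fun b' _ => ?_
      rw [smul_mul_smul_comm, Algebra.TensorProduct.tmul_mul_tmul, hmul_ne a a' (fun h => ha' h.symm),
        TensorProduct.zero_tmul, smul_zero]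
    · intro ha; exact absurd (Finset.mem_univ a) ha
  have hcc : ∀ i j a b : Fin k, c i a b * c j a b = (if i = j then c i a b else 0) := by
    intro i j a b
    have h2 : Coalgebra.comul (R := ℂ) (B (d i)) * Coalgebra.comul (R := ℂ) (B (d j))
        = ∑ a : Fin k, ∑ b : Fin k, (if i = j then c i a b else 0) • (B (d a) ⊗ₜ[ℂ] B (d b)) := by
      rw [← Bialgebra.comul_mul]
      by_cases h : i = j
      · subst h
        rw [hmul_eq i]
        simp only [if_pos rfl]
        exact hΔexp i
      · rw [hmul_ne i j h]
        simp [h]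
    rw [hprod i j] at h2
    exact key2' _ _ h2 a b
  have hcsum : ∀ a b : Fin k, ∑ l : Fin k, c l a b = 1 := by
    intro a b
    have h2 := hΔsum (d a, d b)
    rw [hone_d, hone_d, one_mul] at h2
    exact h2
  -- the operation f
  have hcef : ∀ a b : Fin k, ∃ l, c l a b ≠ 0 := by
    intro a b
    by_contra hcon
    push_neg at hcon
    have h2 := hcsum a b
    rw [Finset.sum_eq_zero (fun l _ => hcon l)] at h2
    exact zero_ne_one h2
  choose f hf using hcef
  have hc1 : ∀ a b : Fin k, c (f a b) a b = 1 := by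
    intro a b
    have h2 := hcc (f a b) (f a b) a b
    rw [if_pos rfl] at h2
    have h3 : c (f a b) a b * (c (f a b) a b - 1) = 0 := by ring_nf; linear_combination h2
    rcases mul_eq_zero.mp h3 with h4 | h4
    · exact absurd h4 (hf a b)
    · exact sub_eq_zero.mp h4
  have hc0 : ∀ l a b : Fin k, l ≠ f a b → c l a b = 0 := by
    intro l a b hl
    have h2 := hcc l (f a b) a b
    rw [if_neg hl, hc1] at h2
    rw [← h2, mul_one]
  have hcval : ∀ l a b : Fin k, c l a b = if f a b = l then 1 else 0 := by
    intro l a b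
    by_cases h : f a b = l
    · subst h; rw [if_pos rfl, hc1]
    · rw [if_neg h, hc0 l a b (fun h2 => h h2.symm)]
  have hΔexp' : ∀ l : Fin k, Coalgebra.comul (R := ℂ) (B (d l))
      = ∑ a : Fin k, ∑ b : Fin k, (if f a b = l then (1:ℂ) else 0) • (B (d a) ⊗ₜ[ℂ] B (d b)) := by
    intro l
    rw [hΔexp l]
    exact Finset.sum_congr rfl fun a _ => Finset.sum_congr rfl fun b _ => by rw [hcval]

  -- counit
  have hεsum : ∑ l : Fin k, Coalgebra.counit (R := ℂ) (B (d l)) = 1 := by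
    rw [← map_sum, ← h1, Bialgebra.counit_one]
  have hεrow : ∀ (l b₀ : Fin k),
      (∑ a : Fin k, if f a b₀ = l then Coalgebra.counit (R := ℂ) (B (d a)) else 0)
        = (if l = b₀ then (1:ℂ) else 0) := by
    intro l b₀
    have h2 := Coalgebra.rTensor_counit_comul (R := ℂ) (B (d l))
    rw [hΔexp' l] at h2
    have h3 := congrArg (TensorProduct.lid ℂ H) h2
    simp only [map_sum, map_smul, LinearMap.rTensor_tmul, TensorProduct.lid_tmul,
      LinearMap.coe_coe, one_smul] at h3
    have h4 : (∑ b : Fin k, (∑ a : Fin k, (if f a b = l then (1:ℂ) else 0)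
        * Coalgebra.counit (R := ℂ) (B (d a))) • B (d b)) = B (d l) := by
      calc ∑ b : Fin k, (∑ a : Fin k, (if f a b = l then (1:ℂ) else 0)
              * Coalgebra.counit (R := ℂ) (B (d a))) • B (d b)
          = ∑ b : Fin k, ∑ a : Fin k, ((if f a b = l then (1:ℂ) else 0)
              * Coalgebra.counit (R := ℂ) (B (d a))) • B (d b) := by
            exact Finset.sum_congr rfl fun b _ => Finset.sum_smul
        _ = ∑ a : Fin k, ∑ b : Fin k, ((if f a b = l then (1:ℂ) else 0)
              * Coalgebra.counit (R := ℂ) (B (d a))) • B (d b) := Finset.sum_comm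
        _ = ∑ a : Fin k, ∑ b : Fin k, (if f a b = l then (1:ℂ) else 0)
              • (Coalgebra.counit (R := ℂ) (B (d a)) • B (d b)) := by
            refine Finset.sum_congr rfl fun a _ => Finset.sum_congr rfl fun b _ => ?_
            rw [smul_smul]
        _ = B (d l) := h3
    have h5 := congrArg (fun z => B.repr z (d b₀)) h4
    simp only [key1, Module.Basis.repr_self, Finsupp.single_apply, hd.eq_iff] at h5
    simpa [boole_mul] using h5

  have hεcol : ∀ (l a₀ : Fin k),
      (∑ b : Fin k, if f a₀ b = l then Coalgebra.counit (R := ℂ) (B (d b)) else 0)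
        = (if l = a₀ then (1:ℂ) else 0) := by
    intro l a₀
    have h2 := Coalgebra.lTensor_counit_comul (R := ℂ) (B (d l))
    rw [hΔexp' l] at h2
    have h3 := congrArg (TensorProduct.rid ℂ H) h2
    simp only [map_sum, map_smul, LinearMap.lTensor_tmul, TensorProduct.rid_tmul,
      LinearMap.coe_coe, one_smul] at h3
    have h4 : (∑ a : Fin k, (∑ b : Fin k, (if f a b = l then (1:ℂ) else 0)
        * Coalgebra.counit (R := ℂ) (B (d b))) • B (d a)) = B (d l) := by
      calc ∑ a : Fin k, (∑ b : Fin k, (if f a b = l then (1:ℂ) else 0)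
              * Coalgebra.counit (R := ℂ) (B (d b))) • B (d a)
          = ∑ a : Fin k, ∑ b : Fin k, ((if f a b = l then (1:ℂ) else 0)
              * Coalgebra.counit (R := ℂ) (B (d b))) • B (d a) := by
            exact Finset.sum_congr rfl fun a _ => Finset.sum_smul
        _ = ∑ a : Fin k, ∑ b : Fin k, (if f a b = l then (1:ℂ) else 0)
              • (Coalgebra.counit (R := ℂ) (B (d b)) • B (d a)) := by
            refine Finset.sum_congr rfl fun a _ => Finset.sum_congr rfl fun b _ => ?_
            rw [smul_smul]
        _ = B (d l) := h3
    have h5 := congrArg (fun z => B.repr z (d a₀)) h4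
    simp only [key1, Module.Basis.repr_self, Finsupp.single_apply, hd.eq_iff] at h5
    simpa [boole_mul] using h5
  -- the identity element
  obtain ⟨e0, -, he0⟩ := Finset.exists_ne_zero_of_sum_ne_zero
    (s := Finset.univ) (f := fun l : Fin k => Coalgebra.counit (R := ℂ) (B (d l)))
    (by rw [hεsum]; exact one_ne_zero)
  have hεnn : ∀ a : Fin k, (0:ℂ) ≤ (if f a e0 = e0 then 1 else 0) := by
    intro a; split <;> norm_num
  have he0l : ∀ b : Fin k, f e0 b = b := by
    intro b
    by_contra hne
    have h2 := hεrow (f e0 b) b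
    rw [if_neg (fun h : f e0 b = b => hne h)] at h2
    have h3 := (Finset.sum_eq_zero_iff_of_nonneg (fun a _ => by
      split
      · exact hpos.counit_nonneg (d a)
      · exact le_refl 0)).mp h2 e0 (Finset.mem_univ e0)
    rw [if_pos rfl] at h3
    exact he0 h3
  have he0r : ∀ a : Fin k, f a e0 = a := by
    intro a
    by_contra hne
    have h2 := hεcol (f a e0) a
    rw [if_neg (fun h : f a e0 = a => hne h)] at h2
    have h3 := (Finset.sum_eq_zero_iff_of_nonneg (fun b _ => by
      split
      · exact hpos.counit_nonneg (d b)
      · exact le_refl 0)).mp h2 e0 (Finset.mem_univ e0)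
    rw [if_pos rfl] at h3
    exact he0 h3
  have hεe0 : Coalgebra.counit (R := ℂ) (B (d e0)) = 1 := by
    have h2 := hεrow e0 e0
    rw [if_pos rfl, Finset.sum_eq_single e0] at h2
    · rwa [if_pos (he0r e0)] at h2
    · intro a _ ha
      exact if_neg (fun h : f a e0 = e0 => ha ((he0r a).symm.trans h))
    · intro h; exact absurd (Finset.mem_univ e0) h
  have hε0 : ∀ g : Fin k, g ≠ e0 → Coalgebra.counit (R := ℂ) (B (d g)) = 0 := by
    intro g hg
    have h2 : ∑ l ∈ Finset.univ.erase e0, Coalgebra.counit (R := ℂ) (B (d l)) = 0 := by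
      have h3 := Finset.add_sum_erase Finset.univ
        (fun l : Fin k => Coalgebra.counit (R := ℂ) (B (d l))) (Finset.mem_univ e0)
      simp only [hεsum, hεe0] at h3
      linear_combination h3
    exact (Finset.sum_eq_zero_iff_of_nonneg (fun l _ => hpos.counit_nonneg (d l))).mp h2 g
      (Finset.mem_erase.mpr ⟨hg, Finset.mem_univ g⟩)

  -- coassociativity
  have hL4 : ∀ l : Fin k, (TensorProduct.assoc ℂ H H H)
      ((Coalgebra.comul (R := ℂ) (A := H)).rTensor H (Coalgebra.comul (R := ℂ) (B (d l))))
      = ∑ a : Fin k, ∑ b : Fin k, ∑ x : Fin k, ∑ y : Fin k,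
          ((if f a b = l then (1:ℂ) else 0) * (if f x y = a then 1 else 0))
            • (B (d x) ⊗ₜ[ℂ] (B (d y) ⊗ₜ[ℂ] B (d b))) := by
    intro l
    rw [hΔexp' l, map_sum, map_sum]
    refine Finset.sum_congr rfl fun a _ => ?_
    rw [map_sum, map_sum]
    refine Finset.sum_congr rfl fun b _ => ?_
    rw [map_smul, map_smul, LinearMap.rTensor_tmul, hΔexp' a]
    simp only [TensorProduct.sum_tmul, TensorProduct.smul_tmul', map_sum, map_smul,
      TensorProduct.assoc_tmul, Finset.smul_sum, smul_smul]
  have hR4 : ∀ l : Fin k,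
      (Coalgebra.comul (R := ℂ) (A := H)).lTensor H (Coalgebra.comul (R := ℂ) (B (d l)))
      = ∑ a : Fin k, ∑ b : Fin k, ∑ x : Fin k, ∑ y : Fin k,
          ((if f a b = l then (1:ℂ) else 0) * (if f x y = b then 1 else 0))
            • (B (d a) ⊗ₜ[ℂ] (B (d x) ⊗ₜ[ℂ] B (d y))) := by
    intro l
    rw [hΔexp' l, map_sum]
    refine Finset.sum_congr rfl fun a _ => ?_
    rw [map_sum]
    refine Finset.sum_congr rfl fun b _ => ?_
    rw [map_smul, LinearMap.lTensor_tmul, hΔexp' b]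
    simp only [TensorProduct.tmul_sum, TensorProduct.tmul_smul, Finset.smul_sum, smul_smul]
  have hcollapseL : ∀ (l b x y : Fin k),
      (∑ a : Fin k, ((if f a b = l then (1:ℂ) else 0) * (if f x y = a then 1 else 0)))
        = (if f (f x y) b = l then (1:ℂ) else 0) := by
    intro l b x y
    rw [Finset.sum_eq_single (f x y)]
    · rw [if_pos rfl, mul_one]
    · intro a _ ha
      rw [if_neg (fun h : f x y = a => ha h.symm), mul_zero]
    · intro h; exact absurd (Finset.mem_univ _) h
  have hcollapseR : ∀ (l a x y : Fin k),
      (∑ b : Fin k, ((if f a b = l then (1:ℂ) else 0) * (if f x y = b then 1 else 0)))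
        = (if f a (f x y) = l then (1:ℂ) else 0) := by
    intro l a x y
    rw [Finset.sum_eq_single (f x y)]
    · rw [if_pos rfl, mul_one]
    · intro b _ hb
      rw [if_neg (fun h : f x y = b => hb h.symm), mul_zero]
    · intro h; exact absurd (Finset.mem_univ _) h
  have key3 : ∀ (u v : Fin k → Fin k → Fin k → ℂ),
      (∑ p : Fin k, ∑ q : Fin k, ∑ r : Fin k, u p q r • (B (d p) ⊗ₜ[ℂ] (B (d q) ⊗ₜ[ℂ] B (d r))))
        = (∑ p : Fin k, ∑ q : Fin k, ∑ r : Fin k, v p q r • (B (d p) ⊗ₜ[ℂ] (B (d q) ⊗ₜ[ℂ] B (d r))))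
      → ∀ p q r, u p q r = v p q r := by
    intro u v huv p q r
    have h2 := congrArg
      (fun z => (B.tensorProduct (B.tensorProduct B)).repr z (d p, (d q, d r))) huv
    simpa [map_sum, Finsupp.finset_sum_apply, Module.Basis.tensorProduct_repr_tmul_apply,
      Finsupp.single_apply, hd.eq_iff] using h2
  have hL3 : ∀ l : Fin k, (TensorProduct.assoc ℂ H H H)
      ((Coalgebra.comul (R := ℂ) (A := H)).rTensor H (Coalgebra.comul (R := ℂ) (B (d l))))
      = ∑ p : Fin k, ∑ q : Fin k, ∑ r : Fin k,
          (if f (f p q) r = l then (1:ℂ) else 0)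
            • (B (d p) ⊗ₜ[ℂ] (B (d q) ⊗ₜ[ℂ] B (d r))) := by
    intro l
    rw [hL4 l]
    calc ∑ a : Fin k, ∑ b : Fin k, ∑ x : Fin k, ∑ y : Fin k,
            ((if f a b = l then (1:ℂ) else 0) * (if f x y = a then 1 else 0))
              • (B (d x) ⊗ₜ[ℂ] (B (d y) ⊗ₜ[ℂ] B (d b)))
        = ∑ b : Fin k, ∑ a : Fin k, ∑ x : Fin k, ∑ y : Fin k,
            ((if f a b = l then (1:ℂ) else 0) * (if f x y = a then 1 else 0))
              • (B (d x) ⊗ₜ[ℂ] (B (d y) ⊗ₜ[ℂ] B (d b))) := Finset.sum_comm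
      _ = ∑ b : Fin k, ∑ x : Fin k, ∑ a : Fin k, ∑ y : Fin k,
            ((if f a b = l then (1:ℂ) else 0) * (if f x y = a then 1 else 0))
              • (B (d x) ⊗ₜ[ℂ] (B (d y) ⊗ₜ[ℂ] B (d b))) :=
          Finset.sum_congr rfl fun b _ => Finset.sum_comm
      _ = ∑ b : Fin k, ∑ x : Fin k, ∑ y : Fin k, ∑ a : Fin k,
            ((if f a b = l then (1:ℂ) else 0) * (if f x y = a then 1 else 0))
              • (B (d x) ⊗ₜ[ℂ] (B (d y) ⊗ₜ[ℂ] B (d b))) :=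
          Finset.sum_congr rfl fun b _ => Finset.sum_congr rfl fun x _ => Finset.sum_comm
      _ = ∑ b : Fin k, ∑ x : Fin k, ∑ y : Fin k,
            (if f (f x y) b = l then (1:ℂ) else 0)
              • (B (d x) ⊗ₜ[ℂ] (B (d y) ⊗ₜ[ℂ] B (d b))) := by
          refine Finset.sum_congr rfl fun b _ => Finset.sum_congr rfl fun x _ =>
            Finset.sum_congr rfl fun y _ => ?_
          rw [← Finset.sum_smul, hcollapseL]
      _ = ∑ x : Fin k, ∑ b : Fin k, ∑ y : Fin k,
            (if f (f x y) b = l then (1:ℂ) else 0)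
              • (B (d x) ⊗ₜ[ℂ] (B (d y) ⊗ₜ[ℂ] B (d b))) := Finset.sum_comm
      _ = ∑ x : Fin k, ∑ y : Fin k, ∑ b : Fin k,
            (if f (f x y) b = l then (1:ℂ) else 0)
              • (B (d x) ⊗ₜ[ℂ] (B (d y) ⊗ₜ[ℂ] B (d b))) :=
          Finset.sum_congr rfl fun x _ => Finset.sum_comm
  have hR3 : ∀ l : Fin k,
      (Coalgebra.comul (R := ℂ) (A := H)).lTensor H (Coalgebra.comul (R := ℂ) (B (d l)))
      = ∑ p : Fin k, ∑ q : Fin k, ∑ r : Fin k,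
          (if f p (f q r) = l then (1:ℂ) else 0)
            • (B (d p) ⊗ₜ[ℂ] (B (d q) ⊗ₜ[ℂ] B (d r))) := by
    intro l
    rw [hR4 l]
    refine Finset.sum_congr rfl fun a _ => ?_
    calc ∑ b : Fin k, ∑ x : Fin k, ∑ y : Fin k,
            ((if f a b = l then (1:ℂ) else 0) * (if f x y = b then 1 else 0))
              • (B (d a) ⊗ₜ[ℂ] (B (d x) ⊗ₜ[ℂ] B (d y)))
        = ∑ x : Fin k, ∑ b : Fin k, ∑ y : Fin k,
            ((if f a b = l then (1:ℂ) else 0) * (if f x y = b then 1 else 0))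
              • (B (d a) ⊗ₜ[ℂ] (B (d x) ⊗ₜ[ℂ] B (d y))) := Finset.sum_comm
      _ = ∑ x : Fin k, ∑ y : Fin k, ∑ b : Fin k,
            ((if f a b = l then (1:ℂ) else 0) * (if f x y = b then 1 else 0))
              • (B (d a) ⊗ₜ[ℂ] (B (d x) ⊗ₜ[ℂ] B (d y))) :=
          Finset.sum_congr rfl fun x _ => Finset.sum_comm
      _ = ∑ x : Fin k, ∑ y : Fin k,
            (if f a (f x y) = l then (1:ℂ) else 0)
              • (B (d a) ⊗ₜ[ℂ] (B (d x) ⊗ₜ[ℂ] B (d y))) := by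
          refine Finset.sum_congr rfl fun x _ => Finset.sum_congr rfl fun y _ => ?_
          rw [← Finset.sum_smul, hcollapseR]
  have hassocf : ∀ p q r : Fin k, f (f p q) r = f p (f q r) := by
    intro p q r
    have hco := Coalgebra.coassoc_apply (R := ℂ) (B (d (f (f p q) r)))
    rw [hL3, hR3] at hco
    have h3 := key3 _ _ hco p q r
    rw [if_pos rfl] at h3
    by_cases h : f p (f q r) = f (f p q) r
    · exact h.symm
    · rw [if_neg h] at h3
      exact absurd h3 one_ne_zero

  -- antipode
  have hS1 : HopfAlgebra.antipode (R := ℂ) (1 : H) = 1 := by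
    have h2 := HopfAlgebra.mul_antipode_rTensor_comul_apply (R := ℂ) (A := H) 1
    simpa [Bialgebra.comul_one, Bialgebra.counit_one, LinearMap.mul'_apply,
      Algebra.TensorProduct.one_def] using h2
  have hSsum : ∀ x : ι, ∑ i : Fin k, B.repr (HopfAlgebra.antipode (R := ℂ) (B (d i))) x
      = B.repr 1 x := by
    intro x
    have h2 : (∑ i : Fin k, HopfAlgebra.antipode (R := ℂ) (B (d i))) = (1 : H) := by
      rw [← map_sum, ← h1, hS1]
    have h3 := congrArg (fun z => B.repr z x) h2
    simpa [map_sum, Finsupp.finset_sum_apply] using h3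
  have hS0 : ∀ (i : Fin k) (x : ι), (∀ j : Fin k, x ≠ d j) →
      B.repr (HopfAlgebra.antipode (R := ℂ) (B (d i))) x = 0 := by
    intro i x hx
    have h0 : ∑ i : Fin k, B.repr (HopfAlgebra.antipode (R := ℂ) (B (d i))) x = 0 := by
      rw [hSsum, hone_nd x hx]
    exact (Finset.sum_eq_zero_iff_of_nonneg
      (fun i _ => hpos.antipode_nonneg (d i) x)).mp h0 i (Finset.mem_univ i)
  have hSexp : ∀ i : Fin k, HopfAlgebra.antipode (R := ℂ) (B (d i))
      = ∑ j : Fin k, B.repr (HopfAlgebra.antipode (R := ℂ) (B (d i))) (d j) • B (d j) := by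
    intro i
    conv_lhs => rw [← B.sum_repr (HopfAlgebra.antipode (R := ℂ) (B (d i)))]
    have hinj : ∀ q1 ∈ (Finset.univ : Finset (Fin k)), ∀ q2 ∈ (Finset.univ : Finset (Fin k)),
        d q1 = d q2 → q1 = q2 := fun q1 _ q2 _ hq => hd hq
    rw [← Finset.sum_subset (Finset.subset_univ ((Finset.univ : Finset (Fin k)).image d))]
    · rw [Finset.sum_image hinj]
    · intro x _ hx
      have hnx : ∀ j : Fin k, x ≠ d j := by
        intro j h
        exact hx (Finset.mem_image.mpr ⟨j, Finset.mem_univ _, h.symm⟩)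
      rw [hS0 i x hnx, zero_smul]
  have hSmul : ∀ a b : Fin k, HopfAlgebra.antipode (R := ℂ) (B (d a)) * B (d b)
      = B.repr (HopfAlgebra.antipode (R := ℂ) (B (d a))) (d b) • B (d b) := by
    intro a b
    conv_lhs => rw [hSexp a]
    rw [Finset.sum_mul, Finset.sum_eq_single b]
    · rw [smul_mul_assoc, hmul_eq]
    · intro p _ hp
      rw [smul_mul_assoc, hmul_ne p b hp, smul_zero]
    · intro h; exact absurd (Finset.mem_univ b) h
  have hSmul' : ∀ a b : Fin k, B (d a) * HopfAlgebra.antipode (R := ℂ) (B (d b))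
      = B.repr (HopfAlgebra.antipode (R := ℂ) (B (d b))) (d a) • B (d a) := by
    intro a b
    conv_lhs => rw [hSexp b]
    rw [Finset.mul_sum, Finset.sum_eq_single a]
    · rw [mul_smul_comm, hmul_eq]
    · intro p _ hp
      rw [mul_smul_comm, hmul_ne a p (fun h => hp h.symm), smul_zero]
    · intro h; exact absurd (Finset.mem_univ a) h
  have hSrow : ∀ (l b₀ : Fin k),
      (∑ a : Fin k, (if f a b₀ = l then (1:ℂ) else 0)
          * B.repr (HopfAlgebra.antipode (R := ℂ) (B (d a))) (d b₀))
        = Coalgebra.counit (R := ℂ) (B (d l)) := by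
    intro l b₀
    have h2 := HopfAlgebra.mul_antipode_rTensor_comul_apply (R := ℂ) (A := H) (B (d l))
    rw [hΔexp' l] at h2
    simp only [map_sum, map_smul, LinearMap.rTensor_tmul, LinearMap.mul'_apply] at h2
    have h3 : (∑ a : Fin k, ∑ b : Fin k, (if f a b = l then (1:ℂ) else 0)
        • (B.repr (HopfAlgebra.antipode (R := ℂ) (B (d a))) (d b) • B (d b)))
        = ∑ m : Fin k, Coalgebra.counit (R := ℂ) (B (d l)) • B (d m) := by
      rw [← Finset.smul_sum, ← h1, ← Algebra.algebraMap_eq_smul_one, ← h2]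
      refine Finset.sum_congr rfl fun a _ => Finset.sum_congr rfl fun b _ => ?_
      rw [hSmul a b]
    have h4 : (∑ b : Fin k, (∑ a : Fin k, (if f a b = l then (1:ℂ) else 0)
        * B.repr (HopfAlgebra.antipode (R := ℂ) (B (d a))) (d b)) • B (d b))
        = ∑ m : Fin k, Coalgebra.counit (R := ℂ) (B (d l)) • B (d m) := by
      rw [← h3, Finset.sum_comm]
      refine Finset.sum_congr rfl fun b _ => ?_
      rw [Finset.sum_smul]
      refine Finset.sum_congr rfl fun a _ => ?_
      rw [smul_smul]
    have h5 := congrArg (fun z => B.repr z (d b₀)) h4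
    simp only [key1] at h5
    exact h5
  have hScol : ∀ (l a₀ : Fin k),
      (∑ b : Fin k, (if f a₀ b = l then (1:ℂ) else 0)
          * B.repr (HopfAlgebra.antipode (R := ℂ) (B (d b))) (d a₀))
        = Coalgebra.counit (R := ℂ) (B (d l)) := by
    intro l a₀
    have h2 := HopfAlgebra.mul_antipode_lTensor_comul_apply (R := ℂ) (A := H) (B (d l))
    rw [hΔexp' l] at h2
    simp only [map_sum, map_smul, LinearMap.lTensor_tmul, LinearMap.mul'_apply] at h2
    have h3 : (∑ a : Fin k, ∑ b : Fin k, (if f a b = l then (1:ℂ) else 0)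
        • (B.repr (HopfAlgebra.antipode (R := ℂ) (B (d b))) (d a) • B (d a)))
        = ∑ m : Fin k, Coalgebra.counit (R := ℂ) (B (d l)) • B (d m) := by
      rw [← Finset.smul_sum, ← h1, ← Algebra.algebraMap_eq_smul_one, ← h2]
      refine Finset.sum_congr rfl fun a _ => Finset.sum_congr rfl fun b _ => ?_
      rw [hSmul' a b]
    have h4 : (∑ a : Fin k, (∑ b : Fin k, (if f a b = l then (1:ℂ) else 0)
        * B.repr (HopfAlgebra.antipode (R := ℂ) (B (d b))) (d a)) • B (d a))
        = ∑ m : Fin k, Coalgebra.counit (R := ℂ) (B (d l)) • B (d m) := by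
      rw [← h3]
      refine Finset.sum_congr rfl fun a _ => ?_
      rw [Finset.sum_smul]
      refine Finset.sum_congr rfl fun b _ => ?_
      rw [smul_smul]
    have h5 := congrArg (fun z => B.repr z (d a₀)) h4
    simp only [key1] at h5
    exact h5

  -- inverses
  have hs0 : ∀ a b : Fin k, f a b ≠ e0 →
      B.repr (HopfAlgebra.antipode (R := ℂ) (B (d a))) (d b) = 0 := by
    intro a b hne
    have h2 := hSrow (f a b) b
    rw [hε0 (f a b) hne] at h2
    have h3 := (Finset.sum_eq_zero_iff_of_nonneg (fun a' _ =>
      mul_nonneg (by split <;> norm_num) (hpos.antipode_nonneg (d a') (d b)))).mp h2 a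
      (Finset.mem_univ a)
    rwa [if_pos rfl, one_mul] at h3
  have hlinv : ∀ b : Fin k, ∃ a, f a b = e0 := by
    intro b
    have h2 := hSrow e0 b
    rw [hεe0] at h2
    obtain ⟨a, -, ha⟩ := Finset.exists_ne_zero_of_sum_ne_zero
      (h2.symm ▸ one_ne_zero)
    refine ⟨a, ?_⟩
    by_contra hco
    rw [if_neg hco, zero_mul] at ha
    exact ha rfl
  choose inv hinv using hlinv
  have hfinv_r : ∀ a : Fin k, f a (inv a) = e0 := by
    intro a
    have h2 : f (inv a) (f a (inv a)) = inv a := by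
      rw [← hassocf, hinv a, he0l]
    calc f a (inv a) = f e0 (f a (inv a)) := (he0l _).symm
      _ = f (f (inv (inv a)) (inv a)) (f a (inv a)) := by rw [hinv (inv a)]
      _ = f (inv (inv a)) (f (inv a) (f a (inv a))) := hassocf _ _ _
      _ = f (inv (inv a)) (inv a) := by rw [h2]
      _ = e0 := hinv (inv a)
  have hcancel : ∀ a b g : Fin k, f a b = g ↔ b = f (inv a) g := by
    intro a b g
    constructor
    · intro h
      calc b = f e0 b := (he0l b).symm
        _ = f (f (inv a) a) b := by rw [hinv a]
        _ = f (inv a) (f a b) := hassocf _ _ _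
        _ = f (inv a) g := by rw [h]
    · intro h
      subst h
      calc f a (f (inv a) g) = f (f a (inv a)) g := (hassocf _ _ _).symm
        _ = f e0 g := by rw [hfinv_r a]
        _ = g := he0l g
  have huniq : ∀ a b : Fin k, f a b = e0 ↔ b = inv a := by
    intro a b
    rw [hcancel a b e0, he0r (inv a)]
  have hinvinv : ∀ a : Fin k, inv (inv a) = a := by
    intro a
    exact ((huniq (inv a) a).mp (hinv a)).symm
  have hleftuniq : ∀ a a' : Fin k, f a' (inv a) = e0 ↔ a' = a := by
    intro a a'
    rw [huniq a' (inv a)]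
    constructor
    · intro h
      have h2 := congrArg inv h
      rw [hinvinv, hinvinv] at h2
      exact h2.symm
    · intro h
      subst h
      rfl
  have hs1 : ∀ a : Fin k, B.repr (HopfAlgebra.antipode (R := ℂ) (B (d a))) (d (inv a)) = 1 := by
    intro a
    have h2 := hSrow e0 (inv a)
    rw [hεe0, Finset.sum_eq_single a] at h2
    · rwa [if_pos (hfinv_r a), one_mul] at h2
    · intro a' _ ha'
      rw [if_neg (fun h : f a' (inv a) = e0 => ha' ((hleftuniq a a').mp h)), zero_mul]
    · intro h; exact absurd (Finset.mem_univ a) h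
  have hSval : ∀ g : Fin k, HopfAlgebra.antipode (R := ℂ) (B (d g)) = B (d (inv g)) := by
    intro g
    rw [hSexp g, Finset.sum_eq_single (inv g)]
    · rw [hs1 g, one_smul]
    · intro b _ hb
      rw [hs0 g b (fun h => hb ((huniq g b).mp h)), zero_smul]
    · intro h; exact absurd (Finset.mem_univ (inv g)) h
  have hΔval : ∀ g : Fin k, Coalgebra.comul (R := ℂ) (B (d g))
      = ∑ h : Fin k, B (d h) ⊗ₜ[ℂ] B (d (f (inv h) g)) := by
    intro g
    rw [hΔexp' g]
    refine Finset.sum_congr rfl fun a _ => ?_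
    rw [Finset.sum_eq_single (f (inv a) g)]
    · rw [if_pos ((hcancel a _ g).mpr rfl), one_smul]
    · intro b _ hb
      rw [if_neg (fun h : f a b = g => hb ((hcancel a b g).mp h)), zero_smul]
    · intro h; exact absurd (Finset.mem_univ _) h
  -- assemble the group
  refine ⟨@FinGrp.mk (Fin k) (groupOfAxioms f e0 inv hassocf he0l hinv) inferInstance,
    Equiv.refl (Fin k), ?_, ?_, ?_, ?_, ?_, ?_, ?_⟩
  · intro g h hgh
    subst hgh
    exact hmul_eq g
  · intro g h hgh
    exact hmul_ne g h hgh
  · intro g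
    exact hΔval g
  · intro g
    exact hSval g
  · exact h1
  · exact hεe0
  · intro g hg
    exact hε0 g hg
end

section
/- Let H be a finite-dimensional Hopf algebra over ℂ with a positive basis B, and suppose 1 = d₁ + ⋯ + d_k where d₁, …, d_k are distinct elements of B. Then for any b ∈ B there are unique indices i and j in {1, …, k} such that d_i b = b and d_{i'} b = 0 for all i' ≠ i, and b d_j = b and b d_{j'} = 0 for all j' ≠ j. -/
open scoped TensorProduct ComplexOrder

open Finset in
lemma pos_sum_basis {H : Type} [Ring H] [HopfAlgebra ℂ H] {ι : Type} [Fintype ι]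
    (B : Module.Basis ι ℂ H) {k : ℕ} (w : Fin k → H)
    (hnn : ∀ i c, 0 ≤ B.repr (w i) c) {b : ι}
    (hsum : ∑ i, w i = B b) :
    (∀ i, w i = B.repr (w i) b • B b) ∧ (∑ i, B.repr (w i) b = 1) := by
  classical
  have hr : ∀ c, ∑ i, B.repr (w i) c = (Finsupp.single b (1:ℂ)) c := by
    intro c
    have := congrArg (fun x => B.repr x c) hsum
    simpa [map_sum] using this
  have hzero : ∀ c, c ≠ b → ∀ i, B.repr (w i) c = 0 := by
    intro c hc i
    have h0 : ∑ j, B.repr (w j) c = 0 := by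
      rw [hr c, Finsupp.single_apply, if_neg (fun h => hc h.symm)]
    exact (Finset.sum_eq_zero_iff_of_nonneg (fun j _ => hnn j c)).mp h0 i (mem_univ i)
  refine ⟨fun i => ?_, ?_⟩
  · apply B.repr.injective
    ext c
    by_cases hc : c = b
    · subst hc; simp
    · have hbc : b ≠ c := fun h => hc h.symm
      simp [hzero c hc i, Finsupp.single_apply, hbc]
  · have := hr b
    simpa using this

open Finset in
theorem stmt6 {H : Type} [Ring H] [HopfAlgebra ℂ H] {ι : Type} [Fintype ι]
    (B : Module.Basis ι ℂ H) (hpos : IsPositiveBasis B)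
    (k : ℕ) (d : Fin k → ι) (hd : Function.Injective d)
    (h1 : (1 : H) = ∑ i : Fin k, B (d i)) :
    ∀ b : ι,
      (∃! i : Fin k, B (d i) * B b = B b ∧
        ∀ i' : Fin k, i' ≠ i → B (d i') * B b = 0) ∧
      (∃! j : Fin k, B b * B (d j) = B b ∧
        ∀ j' : Fin k, j' ≠ j → B b * B (d j') = 0) := by
  -- Step 0: B (d i) * B (d j) is a multiple of B (d j)
  have hmu : ∀ i j : Fin k, B (d i) * B (d j)
      = B.repr (B (d i) * B (d j)) (d j) • B (d j) := by
    intro i j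
    have hs : ∑ i' : Fin k, B (d i') * B (d j) = B (d j) := by
      rw [← Finset.sum_mul, ← h1, one_mul]
    exact (pos_sum_basis B _ (fun i' c => hpos.mul_nonneg _ _ _) hs).1 i
  -- Step 1: each B (d i) is idempotent
  have hid : ∀ i : Fin k, B (d i) * B (d i) = B (d i) := by
    intro i
    have hsum2 : ∑ j : Fin k, B (d i) * B (d j) = B (d i) := by
      rw [← Finset.mul_sum, ← h1, mul_one]
    obtain ⟨heq2, htot2⟩ :=
      pos_sum_basis B _ (fun j c => hpos.mul_nonneg _ _ _) hsum2
    -- for j ≠ i the coefficient at d i vanishes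
    have hz : ∀ j ∈ (univ : Finset (Fin k)), j ≠ i →
        B.repr (B (d i) * B (d j)) (d i) = 0 := by
      intro j _ hj
      rw [hmu i j]
      have : d j ≠ d i := fun h => hj (hd h)
      simp [Finsupp.single_apply, this]
    have h11 : B.repr (B (d i) * B (d i)) (d i) = 1 := by
      rw [← htot2]
      exact (Finset.sum_eq_single i hz (by simp)).symm
    have := heq2 i
    rw [h11, one_smul] at this
    exact this
  have hBb : ∀ c : ι, (B c : H) ≠ 0 := fun c => B.ne_zero c
  intro b
  constructor
  · -- left part
    have hsumL : ∑ i : Fin k, B (d i) * B b = B b := by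
      rw [← Finset.sum_mul, ← h1, one_mul]
    obtain ⟨heqL, htotL⟩ :=
      pos_sum_basis B _ (fun i c => hpos.mul_nonneg _ _ _) hsumL
    set lam : Fin k → ℂ := fun i => B.repr (B (d i) * B b) b with hlam
    have hidem : ∀ i, lam i = 0 ∨ lam i = 1 := by
      intro i
      have h2 : B (d i) * (B (d i) * B b) = B (d i) * B b := by
        rw [← mul_assoc, hid i]
      have h4 : (lam i * lam i) • B b = lam i • B b := by
        calc (lam i * lam i) • B b = lam i • (lam i • B b) := mul_smul _ _ _
          _ = lam i • (B (d i) * B b) := by rw [← heqL i]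
          _ = B (d i) * (lam i • B b) := (mul_smul_comm _ _ _).symm
          _ = B (d i) * (B (d i) * B b) := by rw [← heqL i]
          _ = B (d i) * B b := h2
          _ = lam i • B b := heqL i
      have h3 := smul_left_injective ℂ (hBb b) h4
      have h0 : lam i * (lam i - 1) = 0 := by
        have : lam i * lam i = lam i := h3
        ring_nf
        linear_combination this
      rcases mul_eq_zero.mp h0 with h | h
      · exact Or.inl h
      · exact Or.inr (by linear_combination h)
    have hex : ∃ i, lam i = 1 := by
      by_contra h
      push_neg at h
      have hall : ∀ i, lam i = 0 := fun i => (hidem i).resolve_right (h i)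
      rw [Finset.sum_eq_zero (fun i _ => hall i)] at htotL
      exact zero_ne_one htotL
    obtain ⟨i, hi⟩ := hex
    have hrest : ∀ i', i' ≠ i → lam i' = 0 := by
      have hsum0 : ∑ j ∈ univ.erase i, lam j = 0 := by
        have he : ∑ j ∈ univ.erase i, lam j + lam i = ∑ j, lam j :=
          Finset.sum_erase_add _ _ (mem_univ i)
        rw [htotL, hi] at he
        linear_combination he
      intro i' hi'
      exact (Finset.sum_eq_zero_iff_of_nonneg
        (fun j _ => hpos.mul_nonneg (d j) b b)).mp hsum0 i' (by simp [hi'])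
    refine ⟨i, ⟨?_, ?_⟩, ?_⟩
    · rw [heqL i]
      change lam i • B b = B b
      rw [hi, one_smul]
    · intro i' hi'
      rw [heqL i']
      change lam i' • B b = 0
      rw [hrest i' hi', zero_smul]
    · intro y ⟨hy1, hy2⟩
      by_contra hne
      have h0 : B (d i) * B b = 0 := hy2 i (fun h => hne h.symm)
      have hBbeq : B (d i) * B b = B b := by
        rw [heqL i]
        change lam i • B b = B b
        rw [hi, one_smul]
      exact hBb b (by rw [← hBbeq, h0])
  · -- right part
    have hsumR : ∑ j : Fin k, B b * B (d j) = B b := by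
      rw [← Finset.mul_sum, ← h1, mul_one]
    obtain ⟨heqR, htotR⟩ :=
      pos_sum_basis B _ (fun j c => hpos.mul_nonneg _ _ _) hsumR
    set lam : Fin k → ℂ := fun j => B.repr (B b * B (d j)) b with hlam
    have hidem : ∀ j, lam j = 0 ∨ lam j = 1 := by
      intro j
      have h2 : (B b * B (d j)) * B (d j) = B b * B (d j) := by
        rw [mul_assoc, hid j]
      have h4 : (lam j * lam j) • B b = lam j • B b := by
        calc (lam j * lam j) • B b = lam j • (lam j • B b) := mul_smul _ _ _
          _ = lam j • (B b * B (d j)) := by rw [← heqR j]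
          _ = (lam j • B b) * B (d j) := (smul_mul_assoc _ _ _).symm
          _ = (B b * B (d j)) * B (d j) := by rw [← heqR j]
          _ = B b * B (d j) := h2
          _ = lam j • B b := heqR j
      have h3 := smul_left_injective ℂ (hBb b) h4
      have h0 : lam j * (lam j - 1) = 0 := by
        have : lam j * lam j = lam j := h3
        ring_nf
        linear_combination this
      rcases mul_eq_zero.mp h0 with h | h
      · exact Or.inl h
      · exact Or.inr (by linear_combination h)
    have hex : ∃ j, lam j = 1 := by
      by_contra h
      push_neg at h
      have hall : ∀ j, lam j = 0 := fun j => (hidem j).resolve_right (h j)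
      rw [Finset.sum_eq_zero (fun j _ => hall j)] at htotR
      exact zero_ne_one htotR
    obtain ⟨j, hj⟩ := hex
    have hrest : ∀ j', j' ≠ j → lam j' = 0 := by
      have hsum0 : ∑ j' ∈ univ.erase j, lam j' = 0 := by
        have he : ∑ j' ∈ univ.erase j, lam j' + lam j = ∑ j', lam j' :=
          Finset.sum_erase_add _ _ (mem_univ j)
        rw [htotR, hj] at he
        linear_combination he
      intro j' hj'
      exact (Finset.sum_eq_zero_iff_of_nonneg
        (fun j'' _ => hpos.mul_nonneg b (d j'') b)).mp hsum0 j' (by simp [hj'])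
    refine ⟨j, ⟨?_, ?_⟩, ?_⟩
    · rw [heqR j]
      change lam j • B b = B b
      rw [hj, one_smul]
    · intro j' hj'
      rw [heqR j']
      change lam j' • B b = 0
      rw [hrest j' hj', zero_smul]
    · intro y ⟨hy1, hy2⟩
      by_contra hne
      have h0 : B b * B (d j) = 0 := hy2 j (fun h => hne h.symm)
      have hBbeq : B b * B (d j) = B b := by
        rw [heqR j]
        change lam j • B b = B b
        rw [hj, one_smul]
      exact hBb b (by rw [← hBbeq, h0])
end

section
/- Let H be a finite-dimensional Hopf algebra over ℂ with a positive basis B, scaled so that 1 = Σ_{g₊∈G₊} d_{g₊} with the d_{g₊} ∈ B distinct orthogonal idempotents indexed by a finite group G₊ as in the identification of their span with (ℂG₊)*. Then the elements b ∈ B with ε(b) > 0 can be rescaled by positive real numbers (without changing the d_{g₊}) so that ε = Σ_{b∈G₋} b* in the dual basis, where G₋ := {b ∈ B : ε(b) ≠ 0}; after this rescaling, G₋ is closed under the multiplication of H and forms a group whose identity element is d_e (the unique d_{g₊} with ε(d_{g₊}) ≠ 0, and ε(d_e) = 1). Moreover, for each e_{g₋} ∈ G₋ one has Δ(e_{g₋})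 = e_{g₋} ⊗ e_{g₋} + terms not in G₋⊗G₋, and S(e_{g₋}) = e_{g₋⁻¹} + terms not in G₋. -/
open scoped TensorProduct ComplexOrder

/-- The first part of the standard setup: a positive basis `B` of `H`, scaled so that
`1 = ∑_{g₊ ∈ G₊} d_{g₊}` with the `d_{g₊} ∈ B` distinct elements indexed by a finite
group `G₊`, whose span is the Hopf subalgebra `(ℂ G₊)*`. -/
structure SetupPlus (H : Type*) [Ring H] [HopfAlgebra ℂ H] (ι : Type*) [Fintype ι]
    (Gp : Type*) [Group Gp] [Fintype Gp] where
  B : Module.Basis ι ℂ H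
  pos : IsPositiveBasis B
  d : Gp → ι
  d_inj : Function.Injective d
  one_eq : (1 : H) = ∑ g : Gp, B (d g)
  d_mul_self : ∀ g : Gp, B (d g) * B (d g) = B (d g)
  d_mul_ne : ∀ g h : Gp, g ≠ h → B (d g) * B (d h) = 0
  d_comul : ∀ g : Gp, Coalgebra.comul (R := ℂ) (B (d g)) =
    ∑ h : Gp, B (d h) ⊗ₜ[ℂ] B (d (h⁻¹ * g))
  d_antipode : ∀ g : Gp, HopfAlgebra.antipode (R := ℂ) (B (d g)) = B (d g⁻¹)
  d_counit_one : Coalgebra.counit (R := ℂ) (B (d 1)) = 1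
  d_counit_ne : ∀ g : Gp, g ≠ 1 → Coalgebra.counit (R := ℂ) (B (d g)) = 0

/-- The full standard setup: in addition the basis is scaled so that
`ε = ∑_{b ∈ G₋} b*`, where `G₋ = {b ∈ B : ε(b) ≠ 0}` is closed under the
multiplication of `H` and forms a group (with identity `d_e`), whose elements are
`e_{g₋}` for `g₋` in a finite group `G₋`. -/
structure SetupFull (H : Type*) [Ring H] [HopfAlgebra ℂ H] (ι : Type*) [Fintype ι]
    (Gp : Type*) [Group Gp] [Fintype Gp] (Gn : Type*) [Group Gn] [Fintype Gn] extends
    SetupPlus H ι Gp where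
  en : Gn → ι
  en_inj : Function.Injective en
  en_range : ∀ i : ι, Coalgebra.counit (R := ℂ) (B i) ≠ 0 ↔ ∃ x : Gn, en x = i
  en_counit : ∀ x : Gn, Coalgebra.counit (R := ℂ) (B (en x)) = 1
  en_mul : ∀ x y : Gn, B (en x) * B (en y) = B (en (x * y))
  en_one : en 1 = d 1

section
variable {H : Type*} [Ring H] [HopfAlgebra ℂ H] {ι : Type*} [Fintype ι]
  {Gp : Type*} [Group Gp] [Fintype Gp] {Gn : Type*} [Group Gn] [Fintype Gn]

/-- `α₊(b) = g₊`, i.e. `d_{g₊} b = b`. -/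
def IsAlphaPlus (S : SetupPlus H ι Gp) (i : ι) (g : Gp) : Prop :=
  S.B (S.d g) * S.B i = S.B i

/-- `β₊(b) = g₊`, i.e. `b d_{g₊} = b`. -/
def IsBetaPlus (S : SetupPlus H ι Gp) (i : ι) (g : Gp) : Prop :=
  S.B i * S.B (S.d g) = S.B i

/-- `α₋(b) = g₋`: the only term of `Δ(b)` lying in `G₋ ⊗ B` is `e_{g₋} ⊗ b`,
and it has coefficient `1`. -/
def IsAlphaMinus (S : SetupFull H ι Gp Gn) (i : ι) (x : Gn) : Prop :=
  (S.B.tensorProduct S.B).repr (Coalgebra.comul (R := ℂ) (S.B i)) (S.en x, i) = 1 ∧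
  ∀ (y : Gn) (j : ι), ¬(y = x ∧ j = i) →
    (S.B.tensorProduct S.B).repr (Coalgebra.comul (R := ℂ) (S.B i)) (S.en y, j) = 0

/-- `β₋(b) = g₋`: the only term of `Δ(b)` lying in `B ⊗ G₋` is `b ⊗ e_{g₋}`,
and it has coefficient `1`. -/
def IsBetaMinus (S : SetupFull H ι Gp Gn) (i : ι) (x : Gn) : Prop :=
  (S.B.tensorProduct S.B).repr (Coalgebra.comul (R := ℂ) (S.B i)) (i, S.en x) = 1 ∧
  ∀ (y : Gn) (j : ι), ¬(y = x ∧ j = i) →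
    (S.B.tensorProduct S.B).repr (Coalgebra.comul (R := ℂ) (S.B i)) (j, S.en y) = 0

end

namespace Stmt7Aux

open Coalgebra HopfAlgebra

variable {H : Type} [Ring H] [HopfAlgebra ℂ H] {ι : Type} [Fintype ι]
  {Gp : Type} [Group Gp] [Fintype Gp]

variable (T : SetupPlus H ι Gp)

/-- counit of basis vectors -/
noncomputable def eps (i : ι) : ℂ := Coalgebra.counit (R := ℂ) (T.B i)

/-- comultiplication coefficients -/
noncomputable def AA (i j k : ι) : ℂ :=
  (T.B.tensorProduct T.B).repr (Coalgebra.comul (R := ℂ) (T.B i)) (j, k)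

/-- the positive cone in `H` -/
def Pos (x : H) : Prop := ∀ k, 0 ≤ T.B.repr x k

/-- the positive cone in `H ⊗ H` -/
def Pos2 (z : H ⊗[ℂ] H) : Prop := ∀ p, 0 ≤ (T.B.tensorProduct T.B).repr z p

lemma eps_nonneg (i : ι) : 0 ≤ eps T i := T.pos.counit_nonneg i

lemma AA_nonneg (i j k : ι) : 0 ≤ AA T i j k := T.pos.comul_nonneg i j k

lemma pos_basis (i : ι) : Pos T (T.B i) := by
  classical
  intro k
  rw [Module.Basis.repr_self, Finsupp.single_apply]
  split <;> norm_num

lemma pos_add {x y : H} (hx : Pos T x) (hy : Pos T y) : Pos T (x + y) := by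
  intro k; rw [map_add, Finsupp.add_apply]; exact add_nonneg (hx k) (hy k)

lemma pos_smul {c : ℂ} {x : H} (hc : 0 ≤ c) (hx : Pos T x) : Pos T (c • x) := by
  intro k; rw [map_smul, Finsupp.smul_apply, smul_eq_mul]; exact mul_nonneg hc (hx k)

lemma pos_sum {s : Finset ι} {f : ι → H} (h : ∀ i ∈ s, Pos T (f i)) :
    Pos T (∑ i ∈ s, f i) := by
  intro k
  rw [map_sum, Finsupp.finset_sum_apply]
  exact Finset.sum_nonneg fun i hi => h i hi k

lemma pos_sum2 {α : Type*} {s : Finset α} {f : α → H} (h : ∀ i ∈ s, Pos T (f i)) :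
    Pos T (∑ i ∈ s, f i) := by
  intro k
  rw [map_sum, Finsupp.finset_sum_apply]
  exact Finset.sum_nonneg fun i hi => h i hi k

lemma repr_sum_smul (c : ι → ℂ) (n : ι) : T.B.repr (∑ k, c k • T.B k) n = c n := by
  classical
  rw [map_sum, Finsupp.finset_sum_apply]
  have h : ∀ k, (T.B.repr (c k • T.B k)) n = if k = n then c k else 0 := by
    intro k
    rw [map_smul, Module.Basis.repr_self, Finsupp.smul_single, smul_eq_mul, mul_one,
      Finsupp.single_apply]
  rw [Finset.sum_congr rfl fun k _ => h k, Finset.sum_ite_eq' Finset.univ n c,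
    if_pos (Finset.mem_univ n)]

/-- expansion of a product of two elements -/
lemma mul_expand (x y : H) : x * y =
    ∑ j : ι, ∑ k : ι, (T.B.repr x j * T.B.repr y k) • (T.B j * T.B k) := by
  conv_lhs => rw [← Module.Basis.sum_repr T.B x, ← Module.Basis.sum_repr T.B y]
  rw [Finset.sum_mul]
  refine Finset.sum_congr rfl fun j _ => ?_
  rw [Finset.mul_sum]
  refine Finset.sum_congr rfl fun k _ => ?_
  rw [smul_mul_assoc, mul_smul_comm, smul_smul]

lemma pos_mul {x y : H} (hx : Pos T x) (hy : Pos T y) : Pos T (x * y) := by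
  rw [mul_expand T x y]
  refine pos_sum T fun j _ => pos_sum T fun k _ => pos_smul T ?_ ?_
  · exact mul_nonneg (hx j) (hy k)
  · exact fun n => T.pos.mul_nonneg j k n

lemma pos_antipode {x : H} (hx : Pos T x) : Pos T (antipode (R := ℂ) x) := by
  have : antipode (R := ℂ) x =
      ∑ j : ι, T.B.repr x j • antipode (R := ℂ) (T.B j) := by
    conv_lhs => rw [← Module.Basis.sum_repr T.B x]
    rw [map_sum]
    exact Finset.sum_congr rfl fun j _ => map_smul _ _ _
  rw [this]
  refine pos_sum T fun j _ => pos_smul T (hx j) ?_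
  exact fun n => T.pos.antipode_nonneg j n

lemma counit_eq_sum (x : H) :
    Coalgebra.counit (R := ℂ) x = ∑ k, T.B.repr x k * eps T k := by
  conv_lhs => rw [← Module.Basis.sum_repr T.B x]
  rw [map_sum]
  exact Finset.sum_congr rfl fun k _ => by rw [map_smul, smul_eq_mul]; rfl

lemma counit_nonneg_of_pos {x : H} (hx : Pos T x) : 0 ≤ Coalgebra.counit (R := ℂ) x := by
  rw [counit_eq_sum T x]
  exact Finset.sum_nonneg fun k _ => mul_nonneg (hx k) (eps_nonneg T k)

end Stmt7Aux
namespace Stmt7Aux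

open Coalgebra HopfAlgebra

variable {H : Type} [Ring H] [HopfAlgebra ℂ H] {ι : Type} [Fintype ι]
  {Gp : Type} [Group Gp] [Fintype Gp]

variable (T : SetupPlus H ι Gp)

/-- expansion of comultiplication of a basis vector -/
lemma comul_expand (i : ι) : Coalgebra.comul (R := ℂ) (T.B i) =
    ∑ j : ι, ∑ k : ι, AA T i j k • (T.B j ⊗ₜ[ℂ] T.B k) := by
  conv_lhs => rw [← Module.Basis.sum_repr (T.B.tensorProduct T.B) (Coalgebra.comul (R := ℂ) (T.B i))]
  rw [← Fintype.sum_prod_type']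
  exact Finset.sum_congr rfl fun p _ => by
    rw [Module.Basis.tensorProduct_apply']; rfl

lemma eps_def (i : ι) : eps T i = Coalgebra.counit (R := ℂ) (T.B i) := rfl

open Classical in
/-- counit coordinate identity, left version -/
lemma counit_coord_left (i k : ι) :
    ∑ j : ι, AA T i j k * eps T j = if k = i then 1 else 0 := by
  classical
  have h := Coalgebra.rTensor_counit_comul (R := ℂ) (T.B i)
  rw [comul_expand T i] at h
  have h2 : ∑ j : ι, ∑ m : ι, (AA T i j m * eps T j) • T.B m
      = (TensorProduct.lid ℂ H) ((1 : ℂ) ⊗ₜ[ℂ] T.B i) := by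
    rw [← h, map_sum, map_sum]
    refine Finset.sum_congr rfl fun j _ => ?_
    rw [map_sum, map_sum]
    refine Finset.sum_congr rfl fun m _ => ?_
    rw [map_smul, map_smul, LinearMap.rTensor_tmul, TensorProduct.lid_tmul, mul_smul]
    rfl
  rw [TensorProduct.lid_tmul, one_smul] at h2
  have h3 : ∑ m : ι, (∑ j : ι, AA T i j m * eps T j) • T.B m = T.B i := by
    rw [← h2, Finset.sum_comm]
    exact Finset.sum_congr rfl fun m _ => by rw [Finset.sum_smul]
  have h4 := congrArg (fun x => T.B.repr x k) h3
  rw [repr_sum_smul, Module.Basis.repr_self, Finsupp.single_apply] at h4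
  rw [h4]
  simp only [eq_comm]

open Classical in
/-- counit coordinate identity, right version -/
lemma counit_coord_right (i j : ι) :
    ∑ k : ι, AA T i j k * eps T k = if j = i then 1 else 0 := by
  classical
  have h := Coalgebra.lTensor_counit_comul (R := ℂ) (T.B i)
  rw [comul_expand T i] at h
  have h2 : ∑ j' : ι, ∑ m : ι, (AA T i j' m * eps T m) • T.B j'
      = (TensorProduct.rid ℂ H) (T.B i ⊗ₜ[ℂ] (1 : ℂ)) := by
    rw [← h, map_sum, map_sum]
    refine Finset.sum_congr rfl fun j' _ => ?_
    rw [map_sum, map_sum]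
    refine Finset.sum_congr rfl fun m _ => ?_
    rw [map_smul, map_smul, LinearMap.lTensor_tmul, TensorProduct.rid_tmul, mul_smul]
    rfl
  rw [TensorProduct.rid_tmul, one_smul] at h2
  have h3 : ∑ j' : ι, (∑ m : ι, AA T i j' m * eps T m) • T.B j' = T.B i := by
    rw [← h2]
    exact Finset.sum_congr rfl fun j' _ => by rw [Finset.sum_smul]
  have h4 := congrArg (fun x => T.B.repr x j) h3
  rw [repr_sum_smul, Module.Basis.repr_self, Finsupp.single_apply] at h4
  rw [h4]
  simp only [eq_comm]

/-- antipode identity, rTensor version: `∑ A i j k • (S(B j) * B k) = eps i • 1` -/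
lemma antipode_sum_left (i : ι) :
    ∑ j : ι, ∑ k : ι, AA T i j k • (antipode (R := ℂ) (T.B j) * T.B k)
      = eps T i • (1 : H) := by
  have h := HopfAlgebra.mul_antipode_rTensor_comul_apply (R := ℂ) (T.B i)
  rw [comul_expand T i] at h
  rw [Algebra.algebraMap_eq_smul_one] at h
  rw [eps_def, ← h, map_sum, map_sum]
  refine Finset.sum_congr rfl fun j _ => ?_
  rw [map_sum, map_sum]
  refine Finset.sum_congr rfl fun k _ => ?_
  rw [map_smul, map_smul, LinearMap.rTensor_tmul, LinearMap.mul'_apply]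

/-- antipode identity, lTensor version: `∑ A i j k • (B j * S(B k)) = eps i • 1` -/
lemma antipode_sum_right (i : ι) :
    ∑ j : ι, ∑ k : ι, AA T i j k • (T.B j * antipode (R := ℂ) (T.B k))
      = eps T i • (1 : H) := by
  have h := HopfAlgebra.mul_antipode_lTensor_comul_apply (R := ℂ) (T.B i)
  rw [comul_expand T i] at h
  rw [Algebra.algebraMap_eq_smul_one] at h
  rw [eps_def, ← h, map_sum, map_sum]
  refine Finset.sum_congr rfl fun j _ => ?_
  rw [map_sum, map_sum]
  refine Finset.sum_congr rfl fun k _ => ?_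
  rw [map_smul, map_smul, LinearMap.lTensor_tmul, LinearMap.mul'_apply]

end Stmt7Aux
namespace Stmt7Aux

open Coalgebra HopfAlgebra

variable {H : Type} [Ring H] [HopfAlgebra ℂ H] {ι : Type} [Fintype ι]
  {Gp : Type} [Group Gp] [Fintype Gp]

variable (T : SetupPlus H ι Gp)

lemma cpos_ne_zero {c : ℂ} (h0 : 0 ≤ c) (hne : c ≠ 0) : 0 < c :=
  lt_of_le_of_ne h0 (Ne.symm hne)

/-- if `ε(b_j) ≠ 0` and `k ≠ i` then `A i j k = 0` -/
lemma AA_eq_zero_left {i j k : ι} (hj : eps T j ≠ 0) (hk : k ≠ i) : AA T i j k = 0 := by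
  classical
  have h := counit_coord_left T i k
  rw [if_neg hk] at h
  have h2 := (Finset.sum_eq_zero_iff_of_nonneg
    (fun m _ => mul_nonneg (AA_nonneg T i m k) (eps_nonneg T m))).mp h j (Finset.mem_univ j)
  exact (mul_eq_zero.mp h2).resolve_right hj

/-- if `ε(b_k) ≠ 0` and `j ≠ i` then `A i j k = 0` -/
lemma AA_eq_zero_right {i j k : ι} (hk : eps T k ≠ 0) (hj : j ≠ i) : AA T i j k = 0 := by
  classical
  have h := counit_coord_right T i j
  rw [if_neg hj] at h
  have h2 := (Finset.sum_eq_zero_iff_of_nonneg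
    (fun m _ => mul_nonneg (AA_nonneg T i j m) (eps_nonneg T m))).mp h k (Finset.mem_univ k)
  exact (mul_eq_zero.mp h2).resolve_right hk

/-- diagonal comultiplication coefficient: `A i i i * ε_i = 1` for `i ∈ G₋` -/
lemma AA_diag_mul_eps {i : ι} (hi : eps T i ≠ 0) : AA T i i i * eps T i = 1 := by
  classical
  have h := counit_coord_left T i i
  rw [if_pos rfl] at h
  rw [← h]
  symm
  refine Finset.sum_eq_single i (fun j _ hji => ?_) (fun h => absurd (Finset.mem_univ i) h)
  by_cases hj : eps T j = 0
  · rw [hj, mul_zero]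
  · rw [AA_eq_zero_right T hi hji, zero_mul]

lemma AA_diag {i : ι} (hi : eps T i = 1) : AA T i i i = 1 := by
  have := AA_diag_mul_eps T (i := i) (by rw [hi]; exact one_ne_zero)
  rwa [hi, mul_one] at this

/-- existence of `β₋(i)`: some `k` with `ε_k ≠ 0` and `A i i k ≠ 0` -/
lemma exists_beta (i : ι) : ∃ k, eps T k ≠ 0 ∧ AA T i i k ≠ 0 := by
  classical
  have h := counit_coord_right T i i
  rw [if_pos rfl] at h
  by_contra hc
  push_neg at hc
  have : ∑ k : ι, AA T i i k * eps T k = 0 := by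
    refine Finset.sum_eq_zero fun k _ => ?_
    by_cases hk : eps T k = 0
    · rw [hk, mul_zero]
    · rw [hc k hk, zero_mul]
  rw [this] at h
  exact zero_ne_one h

/-- `ε(S(b_i)) = ε(b_i)` -/
lemma counit_antipode_basis (i : ι) :
    Coalgebra.counit (R := ℂ) (antipode (R := ℂ) (T.B i)) = eps T i := by
  classical
  set f : ι → ℂ := fun j => Coalgebra.counit (R := ℂ) (antipode (R := ℂ) (T.B j)) with hf
  have h := congrArg (Coalgebra.counit (R := ℂ)) (antipode_sum_left T i)
  rw [map_sum] at h
  have hr : Coalgebra.counit (R := ℂ) (eps T i • (1 : H)) = eps T i := by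
    rw [map_smul, smul_eq_mul, Bialgebra.counit_one, mul_one]
  rw [hr] at h
  have h2 : ∀ j, Coalgebra.counit (R := ℂ)
      (∑ k : ι, AA T i j k • (antipode (R := ℂ) (T.B j) * T.B k))
      = f j * (if j = i then 1 else 0) := by
    intro j
    rw [map_sum, ← counit_coord_right T i j, Finset.mul_sum]
    refine Finset.sum_congr rfl fun k _ => ?_
    rw [map_smul, smul_eq_mul, Bialgebra.counit_mul, hf]
    show AA T i j k * (Coalgebra.counit (R := ℂ) (antipode (R := ℂ) (T.B j)) * eps T k) = _
    ring
  rw [Finset.sum_congr rfl (fun j _ => h2 j)] at h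
  have h3 : ∑ j : ι, f j * (if j = i then 1 else 0) = f i := by
    have : ∀ j, f j * (if j = i then 1 else 0) = if j = i then f j else 0 := by
      intro j; split <;> simp
    rw [Finset.sum_congr rfl (fun j _ => this j), Finset.sum_ite_eq' Finset.univ i f,
      if_pos (Finset.mem_univ i)]
  rw [h3] at h
  exact h

end Stmt7Aux
namespace Stmt7Aux

open Coalgebra HopfAlgebra

variable {H : Type} [Ring H] [HopfAlgebra ℂ H] {ι : Type} [Fintype ι]
  {Gp : Type} [Group Gp] [Fintype Gp]

variable (T : SetupPlus H ι Gp)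

lemma repr_one_of_ne {n : ι} (h : ∀ g, T.d g ≠ n) : T.B.repr 1 n = 0 := by
  classical
  rw [T.one_eq, map_sum, Finsupp.finset_sum_apply]
  refine Finset.sum_eq_zero fun g _ => ?_
  rw [Module.Basis.repr_self, Finsupp.single_apply, if_neg (h g)]

/-- `d_g · b_k` is supported on `{b_k}` -/
lemma d_mul_basis (g : Gp) (k : ι) :
    T.B (T.d g) * T.B k = (T.B.repr (T.B (T.d g) * T.B k) k) • T.B k := by
  classical
  have hsum : ∑ h : Gp, (T.B (T.d h) * T.B k) = T.B k := by
    rw [← Finset.sum_mul, ← T.one_eq, one_mul]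
  have hvan : ∀ n, n ≠ k → T.B.repr (T.B (T.d g) * T.B k) n = 0 := by
    intro n hn
    have h0 : ∑ h : Gp, T.B.repr (T.B (T.d h) * T.B k) n = 0 := by
      have := congrArg (fun x => T.B.repr x n) hsum
      simp only [map_sum, Finsupp.finset_sum_apply] at this
      rw [this, Module.Basis.repr_self, Finsupp.single_apply, if_neg (Ne.symm hn)]
    exact (Finset.sum_eq_zero_iff_of_nonneg
      (fun h _ => T.pos.mul_nonneg (T.d h) k n)).mp h0 g (Finset.mem_univ g)
  conv_lhs => rw [← Module.Basis.sum_repr T.B (T.B (T.d g) * T.B k)]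
  refine Finset.sum_eq_single k (fun n _ hn => ?_) (fun h => absurd (Finset.mem_univ k) h)
  rw [hvan n hn, zero_smul]

/-- `b_k · d_g` is supported on `{b_k}` -/
lemma basis_mul_d (g : Gp) (k : ι) :
    T.B k * T.B (T.d g) = (T.B.repr (T.B k * T.B (T.d g)) k) • T.B k := by
  classical
  have hsum : ∑ h : Gp, (T.B k * T.B (T.d h)) = T.B k := by
    rw [← Finset.mul_sum, ← T.one_eq, mul_one]
  have hvan : ∀ n, n ≠ k → T.B.repr (T.B k * T.B (T.d g)) n = 0 := by
    intro n hn
    have h0 : ∑ h : Gp, T.B.repr (T.B k * T.B (T.d h)) n = 0 := by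
      have := congrArg (fun x => T.B.repr x n) hsum
      simp only [map_sum, Finsupp.finset_sum_apply] at this
      rw [this, Module.Basis.repr_self, Finsupp.single_apply, if_neg (Ne.symm hn)]
    exact (Finset.sum_eq_zero_iff_of_nonneg
      (fun h _ => T.pos.mul_nonneg k (T.d h) n)).mp h0 g (Finset.mem_univ g)
  conv_lhs => rw [← Module.Basis.sum_repr T.B (T.B k * T.B (T.d g))]
  refine Finset.sum_eq_single k (fun n _ hn => ?_) (fun h => absurd (Finset.mem_univ k) h)
  rw [hvan n hn, zero_smul]

lemma eps_d_one : eps T (T.d 1) = 1 := T.d_counit_one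

lemma d_one_mul {k : ι} (hk : eps T k ≠ 0) : T.B (T.d 1) * T.B k = T.B k := by
  have h := d_mul_basis T 1 k
  have hc : Coalgebra.counit (R := ℂ) (T.B (T.d 1) * T.B k) = eps T k := by
    rw [Bialgebra.counit_mul, T.d_counit_one, one_mul]; rfl
  rw [h, map_smul, smul_eq_mul, ← eps_def T k] at hc
  have : T.B.repr (T.B (T.d 1) * T.B k) k = 1 := by
    exact mul_right_cancel₀ hk (by rw [hc, one_mul])
  rw [h, this, one_smul]

lemma mul_d_one {k : ι} (hk : eps T k ≠ 0) : T.B k * T.B (T.d 1) = T.B k := by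
  have h := basis_mul_d T 1 k
  have hc : Coalgebra.counit (R := ℂ) (T.B k * T.B (T.d 1)) = eps T k := by
    rw [Bialgebra.counit_mul, T.d_counit_one, mul_one]; rfl
  rw [h, map_smul, smul_eq_mul, ← eps_def T k] at hc
  have : T.B.repr (T.B k * T.B (T.d 1)) k = 1 := by
    exact mul_right_cancel₀ hk (by rw [hc, one_mul])
  rw [h, this, one_smul]

/-- elements in the support of a product of two `G₋`-elements absorb `d_1` on both sides -/
lemma supp_absorb {i j k : ι} (hi : eps T i ≠ 0) (hj : eps T j ≠ 0)
    (hk : T.B.repr (T.B i * T.B j) k ≠ 0) :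
    T.B (T.d 1) * T.B k = T.B k ∧ T.B k * T.B (T.d 1) = T.B k := by
  classical
  constructor
  · have h1 : T.B (T.d 1) * (T.B i * T.B j) = T.B i * T.B j := by
      rw [← mul_assoc, d_one_mul T hi]
    have h2 : T.B (T.d 1) * (T.B i * T.B j)
        = ∑ n, (T.B.repr (T.B i * T.B j) n * T.B.repr (T.B (T.d 1) * T.B n) n) • T.B n := by
      conv_lhs => rw [← Module.Basis.sum_repr T.B (T.B i * T.B j)]
      rw [Finset.mul_sum]
      refine Finset.sum_congr rfl fun n _ => ?_
      rw [mul_smul_comm]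
      conv_lhs => rw [d_mul_basis T 1 n]
      rw [smul_smul]
    have h3 := congrArg (fun x => T.B.repr x k) (h2.symm.trans h1)
    rw [repr_sum_smul] at h3
    have h4 : T.B.repr (T.B (T.d 1) * T.B k) k = 1 := by
      by_contra hne
      exact hne (mul_left_cancel₀ hk (by rw [h3, mul_one]))
    rw [d_mul_basis T 1 k, h4, one_smul]
  · have h1 : (T.B i * T.B j) * T.B (T.d 1) = T.B i * T.B j := by
      rw [mul_assoc, mul_d_one T hj]
    have h2 : (T.B i * T.B j) * T.B (T.d 1)
        = ∑ n, (T.B.repr (T.B i * T.B j) n * T.B.repr (T.B n * T.B (T.d 1)) n) • T.B n := by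
      conv_lhs => rw [← Module.Basis.sum_repr T.B (T.B i * T.B j)]
      rw [Finset.sum_mul]
      refine Finset.sum_congr rfl fun n _ => ?_
      rw [smul_mul_assoc]
      conv_lhs => rw [basis_mul_d T 1 n]
      rw [smul_smul]
    have h3 := congrArg (fun x => T.B.repr x k) (h2.symm.trans h1)
    rw [repr_sum_smul] at h3
    have h4 : T.B.repr (T.B k * T.B (T.d 1)) k = 1 := by
      by_contra hne
      exact hne (mul_left_cancel₀ hk (by rw [h3, mul_one]))
    rw [basis_mul_d T 1 k, h4, one_smul]

lemma mul_d_ne_one {k : ι} (habs : T.B k * T.B (T.d 1) = T.B k) {g : Gp} (hg : g ≠ 1) :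
    T.B k * T.B (T.d g) = 0 := by
  rw [← habs, mul_assoc, T.d_mul_ne 1 g (fun h => hg h.symm), mul_zero]

end Stmt7Aux
namespace Stmt7Aux

open Coalgebra HopfAlgebra

variable {H : Type} [Ring H] [HopfAlgebra ℂ H] {ι : Type} [Fintype ι]
  {Gp : Type} [Group Gp] [Fintype Gp]

variable (T : SetupPlus H ι Gp)

lemma pos_eq_zero_of_sum {α : Type*} [Fintype α] {f : α → H} (hpos : ∀ a, Pos T (f a))
    (h : ∑ a, f a = 0) : ∀ a, f a = 0 := by
  intro a
  have hco : ∀ n, T.B.repr (f a) n = 0 := by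
    intro n
    have h0 : ∑ b : α, T.B.repr (f b) n = 0 := by
      rw [← Finsupp.finset_sum_apply, ← map_sum, h, map_zero]; rfl
    exact (Finset.sum_eq_zero_iff_of_nonneg (fun b _ => hpos b n)).mp h0 a (Finset.mem_univ a)
  have : T.B.repr (f a) = 0 := Finsupp.ext hco
  exact (LinearEquiv.map_eq_zero_iff T.B.repr).mp this

/-- the key lemma: the support of a product of two `G₋`-elements lies in `G₋` -/
lemma supp_mul_counit_ne_zero (hnm : ∀ n, eps T n = 0 ∨ eps T n = 1) {i j k : ι}
    (hi : eps T i = 1) (hj : eps T j = 1) (hk : T.B.repr (T.B i * T.B j) k ≠ 0) :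
    eps T k ≠ 0 := by
  classical
  intro hke
  have hi' : eps T i ≠ 0 := by rw [hi]; exact one_ne_zero
  have hj' : eps T j ≠ 0 := by rw [hj]; exact one_ne_zero
  obtain ⟨habsL, habsR⟩ := supp_absorb T hi' hj' hk
  -- step 2: termwise vanishing of the antipode identity for `B k`
  set F : ι × ι → H := fun p => AA T k p.1 p.2 • (T.B p.1 * antipode (R := ℂ) (T.B p.2))
    with hF
  have hFpos : ∀ p, Pos T (F p) :=
    fun p => pos_smul T (AA_nonneg T k p.1 p.2)
      (pos_mul T (pos_basis T p.1) (pos_antipode T (pos_basis T p.2)))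
  have hFsum : ∑ p : ι × ι, F p = 0 := by
    rw [Fintype.sum_prod_type]
    show ∑ j' : ι, ∑ m : ι, AA T k j' m • (T.B j' * antipode (R := ℂ) (T.B m)) = 0
    rw [antipode_sum_right T k, show eps T k = 0 from hke, zero_smul]
  have hFzero := pos_eq_zero_of_sum T hFpos hFsum
  -- step 3: `B k * S(B k₁) = 0`
  obtain ⟨k₁, hk₁, hAk₁⟩ := exists_beta T k
  have hkS : T.B k * antipode (R := ℂ) (T.B k₁) = 0 := by
    have := hFzero (k, k₁)
    rw [hF] at this
    exact (smul_eq_zero.mp this).resolve_left hAk₁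
  -- step 4: termwise: `s_m • (B k * B m) = 0`
  set s : ι → ℂ := fun m => T.B.repr (antipode (R := ℂ) (T.B k₁)) m with hs
  have hexp : ∑ m : ι, s m • (T.B k * T.B m) = 0 := by
    rw [← hkS]
    conv_rhs => rw [← Module.Basis.sum_repr T.B (antipode (R := ℂ) (T.B k₁))]
    rw [Finset.mul_sum]
    exact Finset.sum_congr rfl fun m _ => by rw [mul_smul_comm]
  have hterm := pos_eq_zero_of_sum T
    (fun m => pos_smul T (T.pos.antipode_nonneg k₁ m)
      (pos_mul T (pos_basis T k) (pos_basis T m))) hexp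
  -- step 5: find `m₁ ∈ G₋` in the support of `S(B k₁)`
  have hsum1 : ∑ m : ι, s m * eps T m = 1 := by
    rw [← counit_eq_sum T (antipode (R := ℂ) (T.B k₁)), counit_antipode_basis T k₁]
    exact (hnm k₁).resolve_left hk₁
  have hm₁ : ∃ m₁, eps T m₁ ≠ 0 ∧ s m₁ ≠ 0 := by
    by_contra hc
    push_neg at hc
    have : ∑ m : ι, s m * eps T m = 0 := by
      refine Finset.sum_eq_zero fun m _ => ?_
      by_cases hm : eps T m = 0
      · rw [hm, mul_zero]
      · rw [hc m hm, zero_mul]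
    rw [this] at hsum1
    exact zero_ne_one hsum1
  obtain ⟨m₁, hm₁e, hm₁s⟩ := hm₁
  -- step 6: `B k * B m₁ = 0`
  have hkm₁ : T.B k * T.B m₁ = 0 :=
    (smul_eq_zero.mp (hterm m₁)).resolve_left hm₁s
  -- step 7: `w := B m₁ * S(B m₁)` has coordinates ≤ those of 1
  set w : H := T.B m₁ * antipode (R := ℂ) (T.B m₁) with hw
  have hm₁1 : eps T m₁ = 1 := (hnm m₁).resolve_left hm₁e
  set F' : ι × ι → H := fun p => AA T m₁ p.1 p.2 • (T.B p.1 * antipode (R := ℂ) (T.B p.2))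
    with hF'
  have hF'pos : ∀ p, Pos T (F' p) :=
    fun p => pos_smul T (AA_nonneg T m₁ p.1 p.2)
      (pos_mul T (pos_basis T p.1) (pos_antipode T (pos_basis T p.2)))
  have hF'sum : ∑ p : ι × ι, F' p = 1 := by
    rw [Fintype.sum_prod_type]
    show ∑ j' : ι, ∑ m : ι, AA T m₁ j' m • (T.B j' * antipode (R := ℂ) (T.B m)) = 1
    rw [antipode_sum_right T m₁, hm₁1, one_smul]
  have hsplit : (1 : H) = w + ∑ p ∈ Finset.univ.erase (m₁, m₁), F' p := by
    rw [← hF'sum, ← Finset.add_sum_erase Finset.univ F' (Finset.mem_univ (m₁, m₁))]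
    congr 1
    rw [hF']
    show AA T m₁ m₁ m₁ • (T.B m₁ * antipode (R := ℂ) (T.B m₁)) = w
    rw [AA_diag T hm₁1, one_smul, hw]
  have hwle : ∀ n, T.B.repr w n ≤ T.B.repr 1 n := by
    intro n
    have := congrArg (fun x => T.B.repr x n) hsplit
    simp only [map_add, Finsupp.add_apply] at this
    rw [this]
    have hrest : 0 ≤ T.B.repr (∑ p ∈ Finset.univ.erase (m₁, m₁), F' p) n := by
      rw [map_sum, Finsupp.finset_sum_apply]
      exact Finset.sum_nonneg fun p _ => hF'pos p n
    exact le_add_of_nonneg_right hrest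
  have hwpos : Pos T w := pos_mul T (pos_basis T m₁) (pos_antipode T (pos_basis T m₁))
  have hwvan : ∀ n, (∀ g, T.d g ≠ n) → T.B.repr w n = 0 := by
    intro n hn
    have h1 := hwle n
    rw [repr_one_of_ne T hn] at h1
    exact le_antisymm h1 (hwpos n)
  -- step 8: `B k * w = (repr w (d 1)) • B k`
  have hkw : T.B k * w = T.B.repr w (T.d 1) • T.B k := by
    have hexp : T.B k * w = ∑ n : ι, T.B.repr w n • (T.B k * T.B n) := by
      conv_lhs => rw [← Module.Basis.sum_repr T.B w]
      rw [Finset.mul_sum]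
      exact Finset.sum_congr rfl fun n _ => by rw [mul_smul_comm]
    rw [hexp]
    rw [Finset.sum_eq_single (T.d 1) (fun n _ hn => ?_) (fun h => absurd (Finset.mem_univ _) h)]
    · rw [habsR]
    · by_cases hg : ∃ g, T.d g = n
      · obtain ⟨g, rfl⟩ := hg
        have hg1 : g ≠ 1 := fun h => hn (by rw [h])
        rw [mul_d_ne_one T habsR hg1, smul_zero]
      · push_neg at hg
        rw [hwvan n hg, zero_smul]
  -- step 9: `repr w (d 1) = 1`
  have hν : T.B.repr w (T.d 1) = 1 := by
    have hcw : Coalgebra.counit (R := ℂ) w = 1 := by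
      rw [hw, Bialgebra.counit_mul, counit_antipode_basis T m₁, ← eps_def, hm₁1, mul_one]
    rw [counit_eq_sum T w] at hcw
    rw [Finset.sum_eq_single (T.d 1) (fun n _ hn => ?_) (fun h => absurd (Finset.mem_univ _) h)]
      at hcw
    · rw [← hcw, eps_d_one, mul_one]
    · by_cases hg : ∃ g, T.d g = n
      · obtain ⟨g, rfl⟩ := hg
        have hg1 : g ≠ 1 := fun h => hn (by rw [h])
        have : eps T (T.d g) = 0 := T.d_counit_ne g hg1
        rw [this, mul_zero]
      · push_neg at hg
        rw [hwvan n hg, zero_mul]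
  -- step 10: contradiction
  have hzero : T.B k * w = 0 := by
    rw [hw, ← mul_assoc, hkm₁, zero_mul]
  rw [hkw, hν, one_smul] at hzero
  exact T.B.ne_zero k hzero

end Stmt7Aux
namespace Stmt7Aux

open Coalgebra HopfAlgebra

variable {H : Type} [Ring H] [HopfAlgebra ℂ H] {ι : Type} [Fintype ι]
  {Gp : Type} [Group Gp] [Fintype Gp]

variable (T : SetupPlus H ι Gp)

lemma pos2_add {z w : H ⊗[ℂ] H} (hz : Pos2 T z) (hw : Pos2 T w) : Pos2 T (z + w) := by
  intro p; rw [map_add, Finsupp.add_apply]; exact add_nonneg (hz p) (hw p)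

lemma pos2_smul {c : ℂ} {z : H ⊗[ℂ] H} (hc : 0 ≤ c) (hz : Pos2 T z) : Pos2 T (c • z) := by
  intro p; rw [map_smul, Finsupp.smul_apply, smul_eq_mul]; exact mul_nonneg hc (hz p)

lemma pos2_sum {α : Type*} {s : Finset α} {f : α → H ⊗[ℂ] H} (h : ∀ a ∈ s, Pos2 T (f a)) :
    Pos2 T (∑ a ∈ s, f a) := by
  intro p
  rw [map_sum, Finsupp.finset_sum_apply]
  exact Finset.sum_nonneg fun a ha => h a ha p

lemma pos2_tmul {x y : H} (hx : Pos T x) (hy : Pos T y) : Pos2 T (x ⊗ₜ[ℂ] y) := by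
  intro p
  rcases p with ⟨p1, p2⟩
  rw [Module.Basis.tensorProduct_repr_tmul_apply, smul_eq_mul]
  exact mul_nonneg (hy p2) (hx p1)

lemma pos2_comul_basis (i : ι) : Pos2 T (Coalgebra.comul (R := ℂ) (T.B i)) := by
  intro p
  rcases p with ⟨p1, p2⟩
  exact T.pos.comul_nonneg i p1 p2

/-- expansion of an element of `H ⊗ H` -/
lemma tensor_expand (z : H ⊗[ℂ] H) :
    z = ∑ p : ι × ι, (T.B.tensorProduct T.B).repr z p • (T.B p.1 ⊗ₜ[ℂ] T.B p.2) := by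
  conv_lhs => rw [← Module.Basis.sum_repr (T.B.tensorProduct T.B) z]
  exact Finset.sum_congr rfl fun p _ => by rw [Module.Basis.tensorProduct_apply']

lemma pos2_mul {z w : H ⊗[ℂ] H} (hz : Pos2 T z) (hw : Pos2 T w) : Pos2 T (z * w) := by
  have hexp : z * w = ∑ p : ι × ι, ∑ q : ι × ι,
      ((T.B.tensorProduct T.B).repr z p * (T.B.tensorProduct T.B).repr w q) •
        ((T.B p.1 * T.B q.1) ⊗ₜ[ℂ] (T.B p.2 * T.B q.2)) := by
    conv_lhs => rw [tensor_expand T z, tensor_expand T w]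
    rw [Finset.sum_mul]
    refine Finset.sum_congr rfl fun p _ => ?_
    rw [Finset.mul_sum]
    refine Finset.sum_congr rfl fun q _ => ?_
    rw [smul_mul_assoc, mul_smul_comm, smul_smul, Algebra.TensorProduct.tmul_mul_tmul]
  rw [hexp]
  refine pos2_sum T fun p _ => pos2_sum T fun q _ => pos2_smul T ?_ ?_
  · exact mul_nonneg (hz p) (hw q)
  · exact pos2_tmul T (fun n => T.pos.mul_nonneg p.1 q.1 n) (fun n => T.pos.mul_nonneg p.2 q.2 n)

/-- `R_i := Δ(b_i) - b_i ⊗ b_i` is positive when `ε_i = 1` -/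
lemma pos2_comul_sub {i : ι} (hi : eps T i = 1) :
    Pos2 T (Coalgebra.comul (R := ℂ) (T.B i) - T.B i ⊗ₜ[ℂ] T.B i) := by
  classical
  intro p
  rw [map_sub, Finsupp.sub_apply]
  rcases p with ⟨p1, p2⟩
  rw [Module.Basis.tensorProduct_repr_tmul_apply, Module.Basis.repr_self, smul_eq_mul,
    Finsupp.single_apply, Finsupp.single_apply]
  by_cases h2 : i = p2
  · by_cases h1 : i = p1
    · subst h1; subst h2
      have hAA : AA T i i i = 1 := AA_diag T hi
      rw [show (T.B.tensorProduct T.B).repr (Coalgebra.comul (R := ℂ) (T.B i)) (i, i)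
        = AA T i i i from rfl, hAA]
      norm_num
    · rw [if_neg h1, mul_zero, sub_zero]
      exact T.pos.comul_nonneg i p1 p2
  · rw [if_neg h2, zero_mul, sub_zero]
    exact T.pos.comul_nonneg i p1 p2

/-- products of `G₋`-elements are single basis vectors in `G₋` -/
lemma mul_single (hnm : ∀ n, eps T n = 0 ∨ eps T n = 1) {i j : ι}
    (hi : eps T i = 1) (hj : eps T j = 1) :
    ∃ k, eps T k = 1 ∧ T.B i * T.B j = T.B k := by
  classical
  set u : H := T.B i * T.B j with hu
  set c : ι → ℂ := fun n => T.B.repr u n with hc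
  have hcpos : ∀ n, 0 ≤ c n := fun n => T.pos.mul_nonneg i j n
  have hsupp : ∀ n, c n ≠ 0 → eps T n = 1 := fun n hn =>
    (hnm n).resolve_left (supp_mul_counit_ne_zero T hnm hi hj hn)
  have hcu : Coalgebra.counit (R := ℂ) u = 1 := by
    rw [hu, Bialgebra.counit_mul, ← eps_def, ← eps_def, hi, hj, mul_one]
  -- the support is a singleton
  have hsub : ∀ l n, c l ≠ 0 → c n ≠ 0 → l = n := by
    intro l n hl hn
    by_contra hln
    have hel : eps T l = 1 := hsupp l hl
    have hen : eps T n = 1 := hsupp n hn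
    -- coordinate of Δu at (l, n) is zero
    have hcoord0 : (T.B.tensorProduct T.B).repr (Coalgebra.comul (R := ℂ) u) (l, n) = 0 := by
      have hexp : Coalgebra.comul (R := ℂ) u
          = ∑ p : ι, c p • Coalgebra.comul (R := ℂ) (T.B p) := by
        conv_lhs => rw [show u = ∑ p : ι, c p • T.B p from (Module.Basis.sum_repr T.B u).symm]
        rw [map_sum]
        exact Finset.sum_congr rfl fun p _ => map_smul _ _ _
      rw [hexp, map_sum, Finsupp.finset_sum_apply]
      refine Finset.sum_eq_zero fun p _ => ?_
      rw [map_smul, Finsupp.smul_apply, smul_eq_mul]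
      by_cases hpn : p = n
      · rw [show (T.B.tensorProduct T.B).repr (Coalgebra.comul (R := ℂ) (T.B p)) (l, n)
          = AA T p l n from rfl, hpn,
          AA_eq_zero_right T (by rw [hen]; exact one_ne_zero) hln, mul_zero]
      · rw [show (T.B.tensorProduct T.B).repr (Coalgebra.comul (R := ℂ) (T.B p)) (l, n)
          = AA T p l n from rfl,
          AA_eq_zero_left T (by rw [hel]; exact one_ne_zero) (fun h => hpn h.symm), mul_zero]
    -- coordinate of Δu at (l, n) is at least c l * c n
    have hcoordge : c l * c n
        ≤ (T.B.tensorProduct T.B).repr (Coalgebra.comul (R := ℂ) u) (l, n) := by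
      set Ri : H ⊗[ℂ] H := Coalgebra.comul (R := ℂ) (T.B i) - T.B i ⊗ₜ[ℂ] T.B i with hRi
      set Rj : H ⊗[ℂ] H := Coalgebra.comul (R := ℂ) (T.B j) - T.B j ⊗ₜ[ℂ] T.B j with hRj
      have hdi : Coalgebra.comul (R := ℂ) (T.B i) = T.B i ⊗ₜ[ℂ] T.B i + Ri := by
        rw [hRi, add_sub_cancel]
      have hdj : Coalgebra.comul (R := ℂ) (T.B j) = T.B j ⊗ₜ[ℂ] T.B j + Rj := by
        rw [hRj, add_sub_cancel]
      have hmul : Coalgebra.comul (R := ℂ) u = u ⊗ₜ[ℂ] u +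
          ((T.B i ⊗ₜ[ℂ] T.B i) * Rj + (Ri * (T.B j ⊗ₜ[ℂ] T.B j) + Ri * Rj)) := by
        rw [hu, Bialgebra.comul_mul, hdi, hdj]
        rw [add_mul, mul_add, mul_add, Algebra.TensorProduct.tmul_mul_tmul]
        abel
      have hE : Pos2 T ((T.B i ⊗ₜ[ℂ] T.B i) * Rj + (Ri * (T.B j ⊗ₜ[ℂ] T.B j) + Ri * Rj)) := by
        have hRip : Pos2 T Ri := pos2_comul_sub T hi
        have hRjp : Pos2 T Rj := pos2_comul_sub T hj
        have hbi : Pos2 T (T.B i ⊗ₜ[ℂ] T.B i) := pos2_tmul T (pos_basis T i) (pos_basis T i)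
        have hbj : Pos2 T (T.B j ⊗ₜ[ℂ] T.B j) := pos2_tmul T (pos_basis T j) (pos_basis T j)
        exact pos2_add T (pos2_mul T hbi hRjp)
          (pos2_add T (pos2_mul T hRip hbj) (pos2_mul T hRip hRjp))
      have := hE (l, n)
      rw [hmul, map_add, Finsupp.add_apply, Module.Basis.tensorProduct_repr_tmul_apply,
        smul_eq_mul, mul_comm]
      exact le_add_of_nonneg_right this
    rw [hcoord0] at hcoordge
    have : (0 : ℂ) < c l * c n :=
      mul_pos (cpos_ne_zero (hcpos l) hl) (cpos_ne_zero (hcpos n) hn)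
    exact absurd (lt_of_lt_of_le this hcoordge) (lt_irrefl 0)
  -- the support is nonempty
  have hne : ∃ k₀, c k₀ ≠ 0 := by
    by_contra hall
    push_neg at hall
    have : u = 0 := by
      have : T.B.repr u = 0 := Finsupp.ext fun n => hall n
      exact (LinearEquiv.map_eq_zero_iff T.B.repr).mp this
    rw [this, map_zero] at hcu
    exact zero_ne_one hcu
  obtain ⟨k₀, hk₀⟩ := hne
  have hek₀ : eps T k₀ = 1 := hsupp k₀ hk₀
  have hvan : ∀ n, n ≠ k₀ → c n = 0 := by
    intro n hn
    by_contra h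
    exact hn (hsub n k₀ h hk₀)
  have husingle : T.B i * T.B j = c k₀ • T.B k₀ := by
    conv_lhs => rw [show (T.B i * T.B j : H)
      = ∑ n : ι, c n • T.B n from (Module.Basis.sum_repr T.B u).symm]
    refine Finset.sum_eq_single k₀ (fun n _ hn => ?_) (fun h => absurd (Finset.mem_univ _) h)
    rw [hvan n hn, zero_smul]
  have hck : c k₀ = 1 := by
    have h5 := hcu
    rw [show (u : H) = T.B i * T.B j from rfl, husingle, map_smul, smul_eq_mul,
      ← eps_def, hek₀, mul_one] at h5
    exact h5
  refine ⟨k₀, hek₀, ?_⟩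
  show T.B i * T.B j = T.B k₀
  rw [husingle, hck, one_smul]

end Stmt7Aux
namespace Stmt7Aux

open Coalgebra HopfAlgebra

variable {H : Type} [Ring H] [HopfAlgebra ℂ H] {ι : Type} [Fintype ι]
  {Gp : Type} [Group Gp] [Fintype Gp]

variable (T : SetupPlus H ι Gp)

/-- some element of `G₋` lies in the support of `S(b_x)` for `x ∈ G₋` -/
lemma exists_Gneg_antipode {x : ι} (hx : eps T x = 1) :
    ∃ m, eps T m ≠ 0 ∧ T.B.repr (antipode (R := ℂ) (T.B x)) m ≠ 0 := by
  have hsum1 : ∑ m : ι, T.B.repr (antipode (R := ℂ) (T.B x)) m * eps T m = 1 := by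
    rw [← counit_eq_sum T (antipode (R := ℂ) (T.B x)), counit_antipode_basis T x, hx]
  by_contra hc
  push_neg at hc
  have : ∑ m : ι, T.B.repr (antipode (R := ℂ) (T.B x)) m * eps T m = 0 := by
    refine Finset.sum_eq_zero fun m _ => ?_
    by_cases hm : eps T m = 0
    · rw [hm, mul_zero]
    · rw [hc m hm, zero_mul]
  rw [this] at hsum1
  exact zero_ne_one hsum1

/-- coordinates of `S(b_x) · b_x` are dominated by those of `1`, for `x ∈ G₋` -/
lemma antipode_mul_le_one {x : ι} (hx : eps T x = 1) (n : ι) :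
    T.B.repr (antipode (R := ℂ) (T.B x) * T.B x) n ≤ T.B.repr 1 n := by
  classical
  set F : ι × ι → H := fun p => AA T x p.1 p.2 • (antipode (R := ℂ) (T.B p.1) * T.B p.2)
    with hF
  have hFpos : ∀ p, Pos T (F p) :=
    fun p => pos_smul T (AA_nonneg T x p.1 p.2)
      (pos_mul T (pos_antipode T (pos_basis T p.1)) (pos_basis T p.2))
  have hFsum : ∑ p : ι × ι, F p = 1 := by
    rw [Fintype.sum_prod_type]
    show ∑ j' : ι, ∑ m : ι, AA T x j' m • (antipode (R := ℂ) (T.B j') * T.B m) = 1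
    rw [antipode_sum_left T x, hx, one_smul]
  have hsplit : (1 : H) = (antipode (R := ℂ) (T.B x) * T.B x)
      + ∑ p ∈ Finset.univ.erase (x, x), F p := by
    rw [← hFsum, ← Finset.add_sum_erase Finset.univ F (Finset.mem_univ (x, x))]
    congr 1
    show AA T x x x • (antipode (R := ℂ) (T.B x) * T.B x) = _
    rw [AA_diag T hx, one_smul]
  have := congrArg (fun z => T.B.repr z n) hsplit
  simp only [map_add, Finsupp.add_apply] at this
  rw [this]
  have hrest : 0 ≤ T.B.repr (∑ p ∈ Finset.univ.erase (x, x), F p) n := by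
    rw [map_sum, Finsupp.finset_sum_apply]
    exact Finset.sum_nonneg fun p _ => hFpos p n
  exact le_add_of_nonneg_right hrest

/-- left-inverse property: for `m ∈ G₋` in the support of `S(b_x)`, `b_m · b_x = d_1` -/
lemma antipode_supp_mul (hnm : ∀ n, eps T n = 0 ∨ eps T n = 1) {x m : ι}
    (hx : eps T x = 1) (hm : eps T m ≠ 0)
    (hsm : T.B.repr (antipode (R := ℂ) (T.B x)) m ≠ 0) :
    T.B m * T.B x = T.B (T.d 1) := by
  classical
  have hm1 : eps T m = 1 := (hnm m).resolve_left hm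
  obtain ⟨z, hz1, hzeq⟩ := mul_single T hnm hm1 hx
  suffices hzd : z = T.d 1 by rw [hzeq, hzd]
  set s : ι → ℂ := fun m' => T.B.repr (antipode (R := ℂ) (T.B x)) m' with hs
  have hexp : antipode (R := ℂ) (T.B x) * T.B x = ∑ m' : ι, s m' • (T.B m' * T.B x) := by
    conv_lhs => rw [← Module.Basis.sum_repr T.B (antipode (R := ℂ) (T.B x))]
    rw [Finset.sum_mul]
    exact Finset.sum_congr rfl fun m' _ => by rw [smul_mul_assoc]
  have hterm : ∀ m', 0 ≤ s m' * T.B.repr (T.B m' * T.B x) z :=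
    fun m' => mul_nonneg (T.pos.antipode_nonneg x m') (T.pos.mul_nonneg m' x z)
  have hge : s m * T.B.repr (T.B m * T.B x) z
      ≤ T.B.repr (antipode (R := ℂ) (T.B x) * T.B x) z := by
    rw [hexp, map_sum, Finsupp.finset_sum_apply]
    have : ∀ m', T.B.repr (s m' • (T.B m' * T.B x)) z = s m' * T.B.repr (T.B m' * T.B x) z :=
      fun m' => by rw [map_smul, Finsupp.smul_apply, smul_eq_mul]
    rw [Finset.sum_congr rfl fun m' _ => this m']
    exact Finset.single_le_sum (fun m' _ => hterm m') (Finset.mem_univ m)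
  have hpos : 0 < s m * T.B.repr (T.B m * T.B x) z := by
    rw [hzeq, Module.Basis.repr_self, Finsupp.single_apply, if_pos rfl, mul_one]
    exact cpos_ne_zero (T.pos.antipode_nonneg x m) hsm
  have h1pos : 0 < T.B.repr 1 z :=
    lt_of_lt_of_le hpos (le_trans hge (antipode_mul_le_one T hx z))
  have hzrange : ∃ g, T.d g = z := by
    by_contra hcon
    push_neg at hcon
    rw [repr_one_of_ne T hcon] at h1pos
    exact lt_irrefl 0 h1pos
  obtain ⟨g, rfl⟩ := hzrange
  by_cases hg : g = 1
  · rw [hg]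
  · exact absurd (T.d_counit_ne g hg) (by rw [← eps_def, hz1]; exact one_ne_zero)

/-- the `G₋` index set -/
def Gneg : Type := {k : ι // eps T k ≠ 0}

lemma Gneg_eps_one (hnm : ∀ n, eps T n = 0 ∨ eps T n = 1) (x : Gneg T) :
    eps T x.val = 1 := (hnm x.val).resolve_left x.prop

variable (hnm : ∀ n, eps T n = 0 ∨ eps T n = 1)

/-- multiplication on `G₋` -/
noncomputable def negMul (x y : Gneg T) : Gneg T :=
  ⟨(mul_single T hnm (Gneg_eps_one T hnm x) (Gneg_eps_one T hnm y)).choose,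
   by rw [(mul_single T hnm (Gneg_eps_one T hnm x) (Gneg_eps_one T hnm y)).choose_spec.1]
      exact one_ne_zero⟩

lemma negMul_spec (x y : Gneg T) :
    T.B x.val * T.B y.val = T.B (negMul T hnm x y).val :=
  (mul_single T hnm (Gneg_eps_one T hnm x) (Gneg_eps_one T hnm y)).choose_spec.2

/-- the identity of `G₋` -/
def negOne : Gneg T :=
  ⟨T.d 1, by rw [eps_d_one]; exact one_ne_zero⟩

/-- the inverse on `G₋` -/
noncomputable def negInv (x : Gneg T) : Gneg T :=
  ⟨(exists_Gneg_antipode T (Gneg_eps_one T hnm x)).choose,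
   (exists_Gneg_antipode T (Gneg_eps_one T hnm x)).choose_spec.1⟩

lemma negInv_spec (x : Gneg T) :
    T.B.repr (antipode (R := ℂ) (T.B x.val)) (negInv T hnm x).val ≠ 0 :=
  (exists_Gneg_antipode T (Gneg_eps_one T hnm x)).choose_spec.2

/-- the group structure on `G₋` -/
noncomputable def negGroup : Group (Gneg T) := by
  letI : Mul (Gneg T) := ⟨negMul T hnm⟩
  letI : One (Gneg T) := ⟨negOne T⟩
  letI : Inv (Gneg T) := ⟨negInv T hnm⟩
  refine Group.ofLeftAxioms ?_ ?_ ?_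
  · intro a b c
    refine Subtype.ext (T.B.injective ?_)
    show T.B (negMul T hnm (negMul T hnm a b) c).val
      = T.B (negMul T hnm a (negMul T hnm b c)).val
    rw [← negMul_spec T hnm, ← negMul_spec T hnm, ← negMul_spec T hnm, ← negMul_spec T hnm,
      mul_assoc]
  · intro a
    refine Subtype.ext (T.B.injective ?_)
    show T.B (negMul T hnm (negOne T) a).val = T.B a.val
    rw [← negMul_spec T hnm]
    exact d_one_mul T a.prop
  · intro a
    refine Subtype.ext (T.B.injective ?_)
    show T.B (negMul T hnm (negInv T hnm a) a).val = T.B (negOne T).val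
    rw [← negMul_spec T hnm]
    exact antipode_supp_mul T hnm (Gneg_eps_one T hnm a) (negInv T hnm a).prop
      (negInv_spec T hnm a)

end Stmt7Aux
namespace Stmt7Aux

open Coalgebra HopfAlgebra

variable {H : Type} [Ring H] [HopfAlgebra ℂ H] {ι : Type} [Fintype ι]
  {Gp : Type} [Group Gp] [Fintype Gp]

variable (T : SetupPlus H ι Gp) (hnm : ∀ n, eps T n = 0 ∨ eps T n = 1)

/-- comultiplication coordinates of a `G₋`-element vanish off the diagonal in `G₋ × G₋` -/
lemma comul_coord_zero {x y z : ι} (hx : eps T x ≠ 0) (hy : eps T y ≠ 0) (hz : eps T z ≠ 0)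
    (hne : ¬(y = x ∧ z = x)) : AA T x y z = 0 := by
  by_cases hzx : z = x
  · have hyx : y ≠ x := fun h => hne ⟨h, hzx⟩
    rw [hzx]
    exact AA_eq_zero_right T hx hyx
  · exact AA_eq_zero_left T hy hzx

/-- only `negInv x` appears among `G₋`-coordinates of `S(b_x)`, with coordinate `1` -/
lemma antipode_coord_zero (x : Gneg T) (y : Gneg T) (hy : y ≠ negInv T hnm x) :
    T.B.repr (antipode (R := ℂ) (T.B x.val)) y.val = 0 := by
  by_contra hs
  have h1 : T.B y.val * T.B x.val = T.B (T.d 1) :=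
    antipode_supp_mul T hnm (Gneg_eps_one T hnm x) y.prop hs
  have h2 : negMul T hnm y x = negOne T := by
    refine Subtype.ext (T.B.injective ?_)
    rw [← negMul_spec T hnm]
    exact h1
  have h3 : negMul T hnm (negInv T hnm x) x = negOne T := by
    refine Subtype.ext (T.B.injective ?_)
    rw [← negMul_spec T hnm]
    exact antipode_supp_mul T hnm (Gneg_eps_one T hnm x) (negInv T hnm x).prop
      (negInv_spec T hnm x)
  letI : Group (Gneg T) := negGroup T hnm
  have hyx : y * x = 1 := h2
  exact hy (eq_inv_of_mul_eq_one_left hyx)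

lemma antipode_coord_one (x : Gneg T) :
    T.B.repr (antipode (R := ℂ) (T.B x.val)) (negInv T hnm x).val = 1 := by
  classical
  have hsum1 : ∑ m : ι, T.B.repr (antipode (R := ℂ) (T.B x.val)) m * eps T m = 1 := by
    rw [← counit_eq_sum T (antipode (R := ℂ) (T.B x.val)), counit_antipode_basis T x.val,
      Gneg_eps_one T hnm x]
  rw [Finset.sum_eq_single ((negInv T hnm x).val) (fun m _ hm => ?_)
    (fun h => absurd (Finset.mem_univ _) h)] at hsum1
  · rw [← hsum1, Gneg_eps_one T hnm (negInv T hnm x), mul_one]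
  · by_cases hme : eps T m = 0
    · rw [hme, mul_zero]
    · rw [antipode_coord_zero T hnm x ⟨m, hme⟩ (fun h => hm (congrArg Subtype.val h)),
        zero_mul]

end Stmt7Aux
namespace Stmt7Aux

open Coalgebra HopfAlgebra

variable {H : Type} [Ring H] [HopfAlgebra ℂ H] {ι : Type} [Fintype ι]
  {Gp : Type} [Group Gp] [Fintype Gp]

variable (S : SetupPlus H ι Gp)

/-- the rescaling factors -/
noncomputable def lamR : ι → ℝ := fun i =>
  if Coalgebra.counit (R := ℂ) (S.B i) = 0 then 1 else (Coalgebra.counit (R := ℂ) (S.B i)).re⁻¹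

lemma eps_im (i : ι) : (Coalgebra.counit (R := ℂ) (S.B i)).im = 0 :=
  (Complex.nonneg_iff.mp (S.pos.counit_nonneg i)).2.symm

lemma eps_re_nonneg (i : ι) : 0 ≤ (Coalgebra.counit (R := ℂ) (S.B i)).re :=
  (Complex.nonneg_iff.mp (S.pos.counit_nonneg i)).1

lemma eps_eq_re (i : ι) :
    Coalgebra.counit (R := ℂ) (S.B i) = ((Coalgebra.counit (R := ℂ) (S.B i)).re : ℂ) :=
  Complex.ext (by rw [Complex.ofReal_re]) (by rw [Complex.ofReal_im, eps_im])

lemma eps_re_pos {i : ι} (h : Coalgebra.counit (R := ℂ) (S.B i) ≠ 0) :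
    0 < (Coalgebra.counit (R := ℂ) (S.B i)).re := by
  rcases lt_or_eq_of_le (eps_re_nonneg S i) with h1 | h1
  · exact h1
  · exfalso
    exact h (by rw [eps_eq_re, ← h1, Complex.ofReal_zero])

lemma lamR_pos (i : ι) : 0 < lamR S i := by
  rw [lamR]
  split
  · exact one_pos
  · exact inv_pos.mpr (eps_re_pos S (by assumption))

lemma lamR_of_eps_zero {i : ι} (h : Coalgebra.counit (R := ℂ) (S.B i) = 0) : lamR S i = 1 := by
  rw [lamR, if_pos h]

lemma lamR_of_eps_one {i : ι} (h : Coalgebra.counit (R := ℂ) (S.B i) = 1) : lamR S i = 1 := by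
  rw [lamR, if_neg (by rw [h]; exact one_ne_zero)]
  rw [show (Coalgebra.counit (R := ℂ) (S.B i)).re = 1 by rw [h]; rfl]
  exact inv_one

lemma lamR_d (g : Gp) : lamR S (S.d g) = 1 := by
  by_cases hg : g = 1
  · subst hg; exact lamR_of_eps_one S S.d_counit_one
  · exact lamR_of_eps_zero S (S.d_counit_ne g hg)

/-- the rescaling units -/
noncomputable def wU : ι → ℂˣ := fun i =>
  Units.mk0 ((lamR S i : ℝ) : ℂ)
    (Complex.ofReal_ne_zero.mpr (ne_of_gt (lamR_pos S i)))

/-- the rescaled basis -/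
noncomputable def CB : Module.Basis ι ℂ H := S.B.unitsSMul (wU S)

lemma CB_apply (i : ι) : CB S i = ((lamR S i : ℝ) : ℂ) • S.B i :=
  Module.Basis.unitsSMul_apply i

lemma CB_repr (x : H) (i : ι) :
    (CB S).repr x i = (((lamR S i)⁻¹ : ℝ) : ℂ) * S.B.repr x i := by
  rw [CB, Module.Basis.repr_unitsSMul, Units.smul_def, smul_eq_mul, Units.val_inv_eq_inv_val]
  congr 1
  rw [show ((wU S i : ℂˣ) : ℂ) = ((lamR S i : ℝ) : ℂ) from rfl, ← Complex.ofReal_inv]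

lemma CB_d (g : Gp) : CB S (S.d g) = S.B (S.d g) := by
  rw [CB_apply, lamR_d, Complex.ofReal_one, one_smul]

lemma tensor_repr_CB (z : H ⊗[ℂ] H) (p : ι × ι) :
    ((CB S).tensorProduct (CB S)).repr z p =
      ((((lamR S p.1)⁻¹ : ℝ) : ℂ) * (((lamR S p.2)⁻¹ : ℝ) : ℂ)) *
        (S.B.tensorProduct S.B).repr z p := by
  rcases p with ⟨p1, p2⟩
  induction z using TensorProduct.induction_on with
  | zero => simp
  | tmul a b =>
    rw [Module.Basis.tensorProduct_repr_tmul_apply, Module.Basis.tensorProduct_repr_tmul_apply,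
      CB_repr, CB_repr, smul_eq_mul, smul_eq_mul]
    ring
  | add z w hz hw =>
    rw [map_add, map_add, Finsupp.add_apply, Finsupp.add_apply, hz, hw, mul_add]

lemma CB_counit (i : ι) : Coalgebra.counit (R := ℂ) (CB S i)
    = ((lamR S i : ℝ) : ℂ) * Coalgebra.counit (R := ℂ) (S.B i) := by
  rw [CB_apply, map_smul, smul_eq_mul]

lemma zero_le_inv_lam (i : ι) : (0 : ℂ) ≤ (((lamR S i)⁻¹ : ℝ) : ℂ) :=
  Complex.zero_le_real.mpr (le_of_lt (inv_pos.mpr (lamR_pos S i)))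

lemma zero_le_lam (i : ι) : (0 : ℂ) ≤ ((lamR S i : ℝ) : ℂ) :=
  Complex.zero_le_real.mpr (le_of_lt (lamR_pos S i))

/-- the rescaled setup -/
noncomputable def normSetup : SetupPlus H ι Gp where
  B := CB S
  pos := by
    constructor
    · intro i
      rw [CB_repr]
      exact mul_nonneg (zero_le_inv_lam S i) (S.pos.one_nonneg i)
    · intro i
      rw [CB_counit]
      exact mul_nonneg (zero_le_lam S i) (S.pos.counit_nonneg i)
    · intro i j k
      have : CB S i * CB S j
          = (((lamR S i : ℝ) : ℂ) * ((lamR S j : ℝ) : ℂ)) • (S.B i * S.B j) := by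
        rw [CB_apply, CB_apply, smul_mul_assoc, mul_smul_comm, smul_smul]
      rw [this, CB_repr, map_smul, Finsupp.smul_apply, smul_eq_mul]
      exact mul_nonneg (zero_le_inv_lam S k)
        (mul_nonneg (mul_nonneg (zero_le_lam S i) (zero_le_lam S j)) (S.pos.mul_nonneg i j k))
    · intro i j k
      have : Coalgebra.comul (R := ℂ) (CB S i)
          = ((lamR S i : ℝ) : ℂ) • Coalgebra.comul (R := ℂ) (S.B i) := by
        rw [CB_apply, map_smul]
      rw [this, map_smul, Finsupp.smul_apply, smul_eq_mul, tensor_repr_CB]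
      exact mul_nonneg (zero_le_lam S i)
        (mul_nonneg (mul_nonneg (zero_le_inv_lam S j) (zero_le_inv_lam S k))
          (S.pos.comul_nonneg i j k))
    · intro i j
      have : antipode (R := ℂ) (CB S i) = ((lamR S i : ℝ) : ℂ) • antipode (R := ℂ) (S.B i) := by
        rw [CB_apply, map_smul]
      rw [this, map_smul, Finsupp.smul_apply, smul_eq_mul, CB_repr]
      exact mul_nonneg (zero_le_lam S i)
        (mul_nonneg (zero_le_inv_lam S j) (S.pos.antipode_nonneg i j))
  d := S.d
  d_inj := S.d_inj
  one_eq := by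
    rw [S.one_eq]
    exact Finset.sum_congr rfl fun g _ => (CB_d S g).symm
  d_mul_self := fun g => by rw [CB_d]; exact S.d_mul_self g
  d_mul_ne := fun g h hgh => by rw [CB_d S g, CB_d S h]; exact S.d_mul_ne g h hgh
  d_comul := fun g => by
    rw [CB_d, S.d_comul]
    exact Finset.sum_congr rfl fun h _ => by rw [CB_d S h, CB_d S (h⁻¹ * g)]
  d_antipode := fun g => by rw [CB_d S g, CB_d S g⁻¹]; exact S.d_antipode g
  d_counit_one := by rw [CB_d]; exact S.d_counit_one
  d_counit_ne := fun g hg => by rw [CB_d]; exact S.d_counit_ne g hg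

lemma normSetup_B : (normSetup S).B = CB S := rfl

lemma normSetup_norm : ∀ i, eps (normSetup S) i = 0 ∨ eps (normSetup S) i = 1 := by
  intro i
  show Coalgebra.counit (R := ℂ) (CB S i) = 0 ∨ Coalgebra.counit (R := ℂ) (CB S i) = 1
  rw [CB_counit]
  by_cases h : Coalgebra.counit (R := ℂ) (S.B i) = 0
  · left; rw [h, mul_zero]
  · right
    rw [lamR, if_neg h]
    conv_lhs => rw [eps_eq_re S i]
    rw [← Complex.ofReal_mul, Complex.ofReal_re,
      inv_mul_cancel₀ (ne_of_gt (eps_re_pos S h)), Complex.ofReal_one]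

end Stmt7Aux

theorem stmt7 {H : Type} [Ring H] [HopfAlgebra ℂ H] {ι : Type} [Fintype ι]
    {Gp : Type} [Group Gp] [Fintype Gp] (S : SetupPlus H ι Gp) :
    ∃ (lam : ι → ℝ) (C : Module.Basis ι ℂ H),
      (∀ i, 0 < lam i) ∧
      (∀ i, C i = (lam i : ℂ) • S.B i) ∧
      -- only the elements with ε(b) > 0 are rescaled; the d_{g₊} are unchanged
      (∀ i, Coalgebra.counit (R := ℂ) (S.B i) = 0 → lam i = 1) ∧
      (∀ g : Gp, lam (S.d g) = 1) ∧
      ∃ (Γ : FinGrp) (en : Γ.carrier → ι),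
        Function.Injective en ∧
        -- G₋ = {b ∈ B : ε(b) ≠ 0} and, after the rescaling, ε = ∑_{b ∈ G₋} b*
        (∀ i : ι, Coalgebra.counit (R := ℂ) (C i) ≠ 0 ↔ ∃ x : Γ.carrier, en x = i) ∧
        (∀ x : Γ.carrier, Coalgebra.counit (R := ℂ) (C (en x)) = 1) ∧
        -- G₋ is closed under the multiplication of H and forms a group
        (∀ x y : Γ.carrier, C (en x) * C (en y) = C (en (x * y))) ∧
        -- whose identity element is d_e, the unique d_{g₊} with ε(d_{g₊}) ≠ 0
        en 1 = S.d 1 ∧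
        Coalgebra.counit (R := ℂ) (S.B (S.d 1)) = 1 ∧
        (∀ g : Gp, Coalgebra.counit (R := ℂ) (S.B (S.d g)) ≠ 0 → g = 1) ∧
        -- Δ(e_{g₋}) = e_{g₋} ⊗ e_{g₋} + terms not in G₋ ⊗ G₋
        (∀ x : Γ.carrier,
          (C.tensorProduct C).repr (Coalgebra.comul (R := ℂ) (C (en x))) (en x, en x) = 1 ∧
          ∀ y z : Γ.carrier, ¬(y = x ∧ z = x) →
            (C.tensorProduct C).repr (Coalgebra.comul (R := ℂ) (C (en x))) (en y, en z) = 0) ∧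
        -- S(e_{g₋}) = e_{g₋⁻¹} + terms not in G₋
        (∀ x : Γ.carrier,
          C.repr (HopfAlgebra.antipode (R := ℂ) (C (en x))) (en x⁻¹) = 1 ∧
          ∀ y : Γ.carrier, y ≠ x⁻¹ →
            C.repr (HopfAlgebra.antipode (R := ℂ) (C (en x))) (en y) = 0) := by
  classical
  have hnm := Stmt7Aux.normSetup_norm S
  set T : SetupPlus H ι Gp := Stmt7Aux.normSetup S with hT
  refine ⟨Stmt7Aux.lamR S, Stmt7Aux.CB S, Stmt7Aux.lamR_pos S, Stmt7Aux.CB_apply S,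
    fun i h => Stmt7Aux.lamR_of_eps_zero S h, Stmt7Aux.lamR_d S, ?_⟩
  letI : Group (Stmt7Aux.Gneg T) := Stmt7Aux.negGroup T hnm
  letI : Fintype (Stmt7Aux.Gneg T) :=
    Subtype.fintype (fun k : ι => Stmt7Aux.eps T k ≠ 0)
  refine ⟨⟨Stmt7Aux.Gneg T⟩, Subtype.val, Subtype.val_injective, ?_, ?_, ?_, rfl,
    S.d_counit_one, ?_, ?_, ?_⟩
  · intro i
    constructor
    · intro h
      exact ⟨⟨i, h⟩, rfl⟩
    · rintro ⟨x, rfl⟩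
      exact x.prop
  · intro x
    exact Stmt7Aux.Gneg_eps_one T hnm x
  · intro x y
    exact Stmt7Aux.negMul_spec T hnm x y
  · intro g h
    by_contra hg
    exact h (S.d_counit_ne g hg)
  · intro x
    refine ⟨Stmt7Aux.AA_diag T (Stmt7Aux.Gneg_eps_one T hnm x), ?_⟩
    intro y z hne
    exact Stmt7Aux.comul_coord_zero T x.prop y.prop z.prop
      (fun h => hne ⟨Subtype.ext h.1, Subtype.ext h.2⟩)
  · intro x
    exact ⟨Stmt7Aux.antipode_coord_one T hnm x,
      fun y hy => Stmt7Aux.antipode_coord_zero T hnm x y hy⟩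
end

section
/- In the standard setup for a finite-dimensional Hopf algebra H over ℂ with positive basis B: if the product b₁b₂ contains the term b (for b, b₁, b₂ ∈ B), then α₊(b₁) = α₊(b) and β₊(b₂) = β₊(b); and if Δ(b) contains the term b₁⊗b₂, then α₊(b) = α₊(b₁)·α₊(b₂) and β₊(b) = β₊(b₁)·β₊(b₂) in the group G₊. -/
open scoped TensorProduct ComplexOrder

section Aux
variable {H : Type} [Ring H] [HopfAlgebra ℂ H] {ι : Type} [Fintype ι]
  {Gp : Type} [Group Gp] [Fintype Gp] (S : SetupPlus H ι Gp)

lemma repr_dmul (g : Gp) (x : H) (b : ι) :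
    S.B.repr (S.B (S.d g) * x) b
      = ∑ j, S.B.repr x j * S.B.repr (S.B (S.d g) * S.B j) b := by
  conv_lhs => rw [← Module.Basis.sum_repr S.B x]
  rw [Finset.mul_sum]
  simp_rw [mul_smul_comm]
  rw [map_sum]
  simp [smul_eq_mul]

lemma repr_muld (g : Gp) (x : H) (b : ι) :
    S.B.repr (x * S.B (S.d g)) b
      = ∑ j, S.B.repr x j * S.B.repr (S.B j * S.B (S.d g)) b := by
  conv_lhs => rw [← Module.Basis.sum_repr S.B x]
  rw [Finset.sum_mul]
  simp_rw [smul_mul_assoc]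
  rw [map_sum]
  simp [smul_eq_mul]

lemma left_zero {g g' : Gp} {b : ι} (hne : g ≠ g')
    (hb : S.B (S.d g') * S.B b = S.B b) (k : ι) :
    S.B.repr (S.B (S.d g) * S.B k) b = 0 := by
  set y := S.B (S.d g) * S.B k with hy
  have h0 : S.B (S.d g') * y = 0 := by
    rw [hy, ← mul_assoc, S.d_mul_ne g' g (Ne.symm hne), zero_mul]
  have key : ∑ j, S.B.repr y j * S.B.repr (S.B (S.d g') * S.B j) b = 0 := by
    rw [← repr_dmul, h0, map_zero, Finsupp.zero_apply]
  have hnn : ∀ j ∈ Finset.univ, 0 ≤ S.B.repr y j * S.B.repr (S.B (S.d g') * S.B j) b :=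
    fun j _ => mul_nonneg (S.pos.mul_nonneg _ _ _) (S.pos.mul_nonneg _ _ _)
  have hb' := (Finset.sum_eq_zero_iff_of_nonneg hnn).mp key b (Finset.mem_univ b)
  rw [hb, Module.Basis.repr_self] at hb'
  simpa using hb'

lemma right_zero {g g' : Gp} {b : ι} (hne : g ≠ g')
    (hb : S.B b * S.B (S.d g') = S.B b) (k : ι) :
    S.B.repr (S.B k * S.B (S.d g)) b = 0 := by
  set y := S.B k * S.B (S.d g) with hy
  have h0 : y * S.B (S.d g') = 0 := by
    rw [hy, mul_assoc, S.d_mul_ne g g' hne, mul_zero]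
  have key : ∑ j, S.B.repr y j * S.B.repr (S.B j * S.B (S.d g')) b = 0 := by
    rw [← repr_muld, h0, map_zero, Finsupp.zero_apply]
  have hnn : ∀ j ∈ Finset.univ, 0 ≤ S.B.repr y j * S.B.repr (S.B j * S.B (S.d g')) b :=
    fun j _ => mul_nonneg (S.pos.mul_nonneg _ _ _) (S.pos.mul_nonneg _ _ _)
  have hb' := (Finset.sum_eq_zero_iff_of_nonneg hnn).mp key b (Finset.mem_univ b)
  rw [hb, Module.Basis.repr_self] at hb'
  simpa using hb'

end Aux

section Aux2
variable {H : Type} [Ring H] [HopfAlgebra ℂ H] {ι : Type} [Fintype ι]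
  {Gp : Type} [Group Gp] [Fintype Gp] (S : SetupPlus H ι Gp)

lemma repr_tmul_mul (u v : H) (T : H ⊗[ℂ] H) (p₁ p₂ : ι) :
    (S.B.tensorProduct S.B).repr ((u ⊗ₜ[ℂ] v) * T) (p₁, p₂)
      = ∑ q : ι × ι, (S.B.tensorProduct S.B).repr T q *
          (S.B.repr (u * S.B q.1) p₁ * S.B.repr (v * S.B q.2) p₂) := by
  conv_lhs => rw [← Module.Basis.sum_repr (S.B.tensorProduct S.B) T]
  rw [Finset.mul_sum]
  simp_rw [mul_smul_comm, Module.Basis.tensorProduct_apply', Algebra.TensorProduct.tmul_mul_tmul]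
  rw [map_sum]
  simp only [Finsupp.coe_finset_sum, Finset.sum_apply, map_smul, Finsupp.smul_apply,
    Module.Basis.tensorProduct_repr_tmul_apply, smul_eq_mul]
  exact Finset.sum_congr rfl fun q _ => by ring

lemma repr_mul_tmul (u v : H) (T : H ⊗[ℂ] H) (p₁ p₂ : ι) :
    (S.B.tensorProduct S.B).repr (T * (u ⊗ₜ[ℂ] v)) (p₁, p₂)
      = ∑ q : ι × ι, (S.B.tensorProduct S.B).repr T q *
          (S.B.repr (S.B q.1 * u) p₁ * S.B.repr (S.B q.2 * v) p₂) := by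
  conv_lhs => rw [← Module.Basis.sum_repr (S.B.tensorProduct S.B) T]
  rw [Finset.sum_mul]
  simp_rw [smul_mul_assoc, Module.Basis.tensorProduct_apply', Algebra.TensorProduct.tmul_mul_tmul]
  rw [map_sum]
  simp only [Finsupp.coe_finset_sum, Finset.sum_apply, map_smul, Finsupp.smul_apply,
    Module.Basis.tensorProduct_repr_tmul_apply, smul_eq_mul]
  exact Finset.sum_congr rfl fun q _ => by ring

end Aux2

theorem stmt9 {H : Type} [Ring H] [HopfAlgebra ℂ H] {ι : Type} [Fintype ι]
    {Gp : Type} [Group Gp] [Fintype Gp] (S : SetupPlus H ι Gp) :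
    -- if b₁b₂ contains b, then α₊(b₁) = α₊(b) and β₊(b₂) = β₊(b)
    (∀ b b₁ b₂ : ι, S.B.repr (S.B b₁ * S.B b₂) b ≠ 0 →
      (∀ g₁ g : Gp, IsAlphaPlus S b₁ g₁ → IsAlphaPlus S b g → g₁ = g) ∧
      (∀ g₂ g : Gp, IsBetaPlus S b₂ g₂ → IsBetaPlus S b g → g₂ = g)) ∧
    -- if Δ(b) contains b₁ ⊗ b₂, then α₊(b) = α₊(b₁)α₊(b₂) and β₊(b) = β₊(b₁)β₊(b₂)
    (∀ b b₁ b₂ : ι,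
      (S.B.tensorProduct S.B).repr (Coalgebra.comul (R := ℂ) (S.B b)) (b₁, b₂) ≠ 0 →
      (∀ g g₁ g₂ : Gp, IsAlphaPlus S b g → IsAlphaPlus S b₁ g₁ → IsAlphaPlus S b₂ g₂ →
        g = g₁ * g₂) ∧
      (∀ g g₁ g₂ : Gp, IsBetaPlus S b g → IsBetaPlus S b₁ g₁ → IsBetaPlus S b₂ g₂ →
        g = g₁ * g₂)) := by
  constructor
  · intro b b₁ b₂ hne
    constructor
    · intro g₁ g h1 hg
      have h1' : S.B (S.d g₁) * S.B b₁ = S.B b₁ := h1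
      have hg' : S.B (S.d g) * S.B b = S.B b := hg
      by_contra hc
      apply hne
      have heq : S.B b₁ * S.B b₂ = S.B (S.d g₁) * (S.B b₁ * S.B b₂) := by
        rw [← mul_assoc, h1']
      rw [heq, repr_dmul]
      exact Finset.sum_eq_zero fun j _ => by
        rw [left_zero S hc hg' j, mul_zero]
    · intro g₂ g h2 hg
      have h2' : S.B b₂ * S.B (S.d g₂) = S.B b₂ := h2
      have hg' : S.B b * S.B (S.d g) = S.B b := hg
      by_contra hc
      apply hne
      have heq : S.B b₁ * S.B b₂ = (S.B b₁ * S.B b₂) * S.B (S.d g₂) := by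
        rw [mul_assoc, h2']
      rw [heq, repr_muld]
      exact Finset.sum_eq_zero fun j _ => by
        rw [right_zero S hc hg' j, mul_zero]
  · intro b b₁ b₂ hne
    constructor
    · intro g g₁ g₂ hg h1 h2
      have h1' : S.B (S.d g₁) * S.B b₁ = S.B b₁ := h1
      have h2' : S.B (S.d g₂) * S.B b₂ = S.B b₂ := h2
      have hg' : S.B (S.d g) * S.B b = S.B b := hg
      by_contra hc
      apply hne
      have hT : Coalgebra.comul (R := ℂ) (S.B b)
          = ∑ h : Gp, (S.B (S.d h) ⊗ₜ[ℂ] S.B (S.d (h⁻¹ * g))) *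
              Coalgebra.comul (R := ℂ) (S.B b) := by
        conv_lhs => rw [← hg', Bialgebra.comul_mul, S.d_comul, Finset.sum_mul]
      rw [hT, map_sum, Finsupp.coe_finset_sum, Finset.sum_apply]
      refine Finset.sum_eq_zero fun h _ => ?_
      rw [repr_tmul_mul]
      refine Finset.sum_eq_zero fun q _ => ?_
      by_cases hh : h = g₁
      · subst hh
        have hne2 : h⁻¹ * g ≠ g₂ := fun he => hc (by rw [← he, mul_inv_cancel_left])
        rw [left_zero S hne2 h2' q.2, mul_zero, mul_zero]
      · rw [left_zero S hh h1' q.1, zero_mul, mul_zero]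
    · intro g g₁ g₂ hg h1 h2
      have h1' : S.B b₁ * S.B (S.d g₁) = S.B b₁ := h1
      have h2' : S.B b₂ * S.B (S.d g₂) = S.B b₂ := h2
      have hg' : S.B b * S.B (S.d g) = S.B b := hg
      by_contra hc
      apply hne
      have hT : Coalgebra.comul (R := ℂ) (S.B b)
          = ∑ h : Gp, Coalgebra.comul (R := ℂ) (S.B b) *
              (S.B (S.d h) ⊗ₜ[ℂ] S.B (S.d (h⁻¹ * g))) := by
        conv_lhs => rw [← hg', Bialgebra.comul_mul, S.d_comul, Finset.mul_sum]
      rw [hT, map_sum, Finsupp.coe_finset_sum, Finset.sum_apply]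
      refine Finset.sum_eq_zero fun h _ => ?_
      rw [repr_mul_tmul]
      refine Finset.sum_eq_zero fun q _ => ?_
      by_cases hh : h = g₁
      · subst hh
        have hne2 : h⁻¹ * g ≠ g₂ := fun he => hc (by rw [← he, mul_inv_cancel_left])
        rw [right_zero S hne2 h2' q.2, mul_zero, mul_zero]
      · rw [right_zero S hh h1' q.1, zero_mul, mul_zero]
end
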